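/- arXiv:2404.10168 — 8 statements merged into one kernel-verified Lean document; each statement's English description precedes it below -/
import Mathlib

section
/- Let n ≥ 4 and k ≥ 0 be integers, and let x_1 ≥ x_2 ≥ ⋯ ≥ x_n be integers such that x_1 + x_2 + ⋯ + x_n = k·(n − 2) and 2·x_n < k. Then x_1 + x_2 > k. -/
/-!
If `x 0 + x 1 ≤ k`, then `2 * x 1 ≤ k` as well, so bounding every middle entry by `x 1` and the
last one by `x (n-1) < k / 2` gives `2 * ∑ x < 2k + (n - 3) k + k = n k ≤ 2 (n - 2) k`,
contradicting `∑ x = (n - 2) k`.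
-/

open Finset

theorem Antitone.sum_fin_le {M : Type*} [AddCommMonoid M] [PartialOrder M] [IsOrderedAddMonoid M]
    {m : ℕ} {x : Fin (m + 3) → M} (hx : Antitone x) :
    ∑ i, x i ≤ x 0 + (m + 1) • x 1 + x (Fin.last _) := by
  rw [Fin.sum_univ_succ, Fin.sum_univ_castSucc, ← add_assoc]
  refine add_le_add (add_le_add_right ?_ _) le_rfl
  simpa using sum_le_card_nsmul univ (fun i : Fin (m + 1) ↦ x i.castSucc.succ) (x 1)
    fun i _ ↦ hx (Fin.succ_pos _)

/-- Let `n ≥ 4` and `k ≥ 0` be integers, and let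
`x 0 ≥ x 1 ≥ ⋯ ≥ x (n-1)` be integers such that `∑ x i = k * (n - 2)` and
`2 * x (n-1) < k`. Then `x 0 + x 1 > k`. -/
theorem caterpillar_claim (n : ℕ) (hn : 4 ≤ n) (k : ℤ) (hk : 0 ≤ k)
    (x : Fin n → ℤ)
    (hsort : ∀ i j : Fin n, i ≤ j → x j ≤ x i)
    (hsum : ∑ i, x i = k * ((n : ℤ) - 2))
    (hlast : 2 * x ⟨n - 1, by omega⟩ < k) :
    k < x ⟨0, by omega⟩ + x ⟨1, by omega⟩ := by
  obtain ⟨m, rfl⟩ : ∃ m, n = m + 3 := ⟨n - 3, by omega⟩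
  have hanti : Antitone x := fun i j hij ↦ hsort i j hij
  have hbound := hanti.sum_fin_le
  have hx01 : x 1 ≤ x 0 := hanti (Fin.zero_le _)
  have hm : (1 : ℤ) ≤ m := by omega
  change 2 * x (Fin.last _) < k at hlast
  change k < x 0 + x 1
  rw [nsmul_eq_mul] at hbound
  push_cast at hsum hbound
  by_contra! hsmall
  nlinarith [mul_nonneg (by positivity : (0 : ℤ) ≤ m) (by linarith : 0 ≤ k - 2 * x 1),
    mul_nonneg hk (by linarith : (0 : ℤ) ≤ m - 1)]
end

section
/- Let n, r, s be natural numbers with r ≥ 1, s ≥ 3 and r + s ≤ n. Let m_1, …, m_n be integers with m_i ≥ 1 for all i, with m_1 + ⋯ + m_n = 2n − 4, with m_{r+1} ≤ m_{r+2} ≤ ⋯ ≤ m_n, and with m_1 + ⋯ + m_r ≤ 2r + s − 4. Then m_1 + ⋯ + m_{r+s−1} < 2(r+s) − 4. -/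
/-- Let `r ≥ 1`, `s ≥ 3` with `r + s ≤ n`. Let `m : Fin n → ℤ`
with all entries `≥ 1`, total sum `2n - 4`, entries with (0-based) index `≥ r`
sorted increasingly, and the sum of the first `r` entries at most `2r + s - 4`.
Then the sum of the first `r + s - 1` entries is strictly less than `2(r+s) - 4`. -/
theorem mL_positive_claim (n r s : ℕ) (hr : 1 ≤ r) (hs : 3 ≤ s) (hrs : r + s ≤ n)
    (m : Fin n → ℤ) (hm : ∀ i, 1 ≤ m i)
    (hsum : ∑ i, m i = 2 * (n : ℤ) - 4)
    (hsort : ∀ i j : Fin n, r ≤ (i : ℕ) → i ≤ j → m i ≤ m j)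
    (hfirst : ∑ i ∈ Finset.univ.filter (fun i : Fin n => (i : ℕ) < r), m i
        ≤ 2 * (r : ℤ) + (s : ℤ) - 4) :
    ∑ i ∈ Finset.univ.filter (fun i : Fin n => (i : ℕ) < r + s - 1), m i
      < 2 * ((r : ℤ) + (s : ℤ)) - 4 := by
  by_contra hcon
  push_neg at hcon
  have hrs2 : r + s - 2 < n := by omega
  set k : Fin n := ⟨r + s - 2, hrs2⟩ with hk
  set M := m k with hMdef
  set T := Finset.univ.filter (fun i : Fin n => (i : ℕ) < r + s - 1) with hT
  set A := Finset.univ.filter (fun i : Fin n => (i : ℕ) < r) with hA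
  set Mid := Finset.univ.filter (fun i : Fin n => r ≤ (i : ℕ) ∧ (i : ℕ) < r + s - 1)
    with hMid
  set Tail := Finset.univ.filter (fun i : Fin n => ¬ (i : ℕ) < r + s - 1) with hTail
  -- split T = A ∪ Mid
  have hsplit1 : ∑ i ∈ A, m i + ∑ i ∈ Mid, m i = ∑ i ∈ T, m i := by
    have := Finset.sum_filter_add_sum_filter_not T (fun i : Fin n => (i : ℕ) < r) m
    rw [hT] at this
    rw [Finset.filter_filter, Finset.filter_filter] at this
    convert this using 3
    · ext i; simp only [hA, Finset.mem_filter]; constructor <;> intro h <;>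
        refine ⟨h.1, ?_⟩ <;> omega
    · ext i; simp only [hMid, Finset.mem_filter]; constructor <;> intro h <;>
        refine ⟨h.1, ?_⟩ <;> omega
  -- split univ = T ∪ Tail
  have hsplit2 : ∑ i ∈ T, m i + ∑ i ∈ Tail, m i = ∑ i, m i :=
    Finset.sum_filter_add_sum_filter_not _ _ m
  -- cardinalities
  have hcardMid : Mid.card ≤ s - 1 := by
    have : Mid.card ≤ (Finset.Ico r (r + s - 1)).card := by
      apply Finset.card_le_card_of_injOn (fun i : Fin n => (i : ℕ))
      · intro i hi
        simp only [hMid, Finset.mem_coe, Finset.mem_filter] at hi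
        simp [Finset.mem_Ico, hi.2.1, hi.2.2]
      · intro a _ b _ hab
        exact Fin.ext hab
    simpa [Nat.card_Ico] using this.trans_eq (by rw [Nat.card_Ico]; omega)
  have hcardT : T.card ≤ r + s - 1 := by
    have : T.card ≤ (Finset.range (r + s - 1)).card := by
      apply Finset.card_le_card_of_injOn (fun i : Fin n => (i : ℕ))
      · intro i hi
        simp only [hT, Finset.mem_coe, Finset.mem_filter] at hi
        simp [Finset.mem_range, hi.2]
      · intro a _ b _ hab
        exact Fin.ext hab
    simpa using this
  have hcardTail : n - (r + s - 1) ≤ Tail.card := by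
    have h0 : T.card + Tail.card = n := by
      have := Finset.card_filter_add_card_filter_not
        (s := (Finset.univ : Finset (Fin n)))
        (p := fun i : Fin n => (i : ℕ) < r + s - 1)
      simpa [hT, hTail, Finset.card_univ] using this
    omega
  -- each mid element is ≤ M
  have hMidle : ∑ i ∈ Mid, m i ≤ Mid.card • M := by
    apply Finset.sum_le_card_nsmul
    intro i hi
    simp only [hMid, Finset.mem_filter] at hi
    exact hsort i k hi.2.1 (by rw [Fin.le_def]; simp [hk]; omega)
  -- each tail element is ≥ M
  have hTailge : Tail.card • M ≤ ∑ i ∈ Tail, m i := by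
    apply Finset.card_nsmul_le_sum
    intro i hi
    simp only [hTail, Finset.mem_filter] at hi
    exact hsort k i (by simp [hk]; omega) (by rw [Fin.le_def]; simp [hk]; omega)
  have hM1 : (1 : ℤ) ≤ M := hm k
  -- middle sum is at least s
  have hBge : (s : ℤ) ≤ ∑ i ∈ Mid, m i := by
    have := hcon
    rw [← hsplit1] at this
    linarith
  -- M ≥ 2
  have hcM : ((Mid.card : ℤ)) ≤ (s : ℤ) - 1 := by
    have : (Mid.card : ℤ) ≤ ((s - 1 : ℕ) : ℤ) := by exact_mod_cast hcardMid
    have h2 : ((s - 1 : ℕ) : ℤ) = (s : ℤ) - 1 := by omega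
    omega
  have hM2 : (2 : ℤ) ≤ M := by
    rw [nsmul_eq_mul] at hMidle
    nlinarith [hBge.trans hMidle]
  -- tail cardinality as integer
  have hcTail : (n : ℤ) - (r : ℤ) - (s : ℤ) + 1 ≤ (Tail.card : ℤ) := by
    have : ((n - (r + s - 1) : ℕ) : ℤ) ≤ (Tail.card : ℤ) := by exact_mod_cast hcardTail
    omega
  -- combine
  rw [nsmul_eq_mul] at hTailge
  have hTailbig : 2 * ((n : ℤ) - (r : ℤ) - (s : ℤ) + 1) ≤ ∑ i ∈ Tail, m i := by
    nlinarith
  rw [← hsplit2] at hsum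
  linarith
end

section
/- Let k ∈ ℤ and n ∈ ℕ. Consider leaky-cover graph data: finite sets V (vertices) and E (internal edges) with maps s, t : E → V (left and right endpoints) and ω : E → ℤ (edge weights); a leg assignment a : Fin n → V with leg weights x : Fin n → ℤ; and a genus function g : V → ℕ. For v ∈ V set val(v) = #{i | a(i) = v} + #{e | s(e) = v} + #{e | t(e) = v}. Assume that for every v ∈ V the k-leaky balancing condition holds: (Σ_{i : a(i) = v} x_i) + (Σ_{e : t(e) = v} ω(e)) − (Σ_{e : s(e) = v} ω(e)) = k·(2·g(v) − 2 + val(v)). Then Σ_{i=1}^{n} x_i = k·(2G − 2 + n), where G = (Σ_{v ∈ V} g(v)) + #E − #V + 1. -/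
/-!
Sum the balancing condition over all vertices. Every leg lies at exactly one vertex, and every
edge has exactly one left and one right endpoint, so the edge weights cancel, the leg weights
add up to `∑ i, x i`, and the valences add up to `n + 2 #E` (the handshake lemma). What is left
is `k (2 ∑ g - 2 #V + n + 2 #E) = k (2G - 2 + n)`.
-/

open Finset

theorem Fintype.sum_card_fiberwise {ι κ : Type*} [Fintype ι] [Fintype κ] [DecidableEq κ]
    (f : ι → κ) : ∑ j, #{i | f i = j} = Fintype.card ι := by
  simpa using sum_card_fiberwise_eq_card_filter univ univ f

namespace LeakyGraph

variable {V E : Type*} [Fintype V] [DecidableEq V] [Fintype E] {n : ℕ}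

def valence (s t : E → V) (a : Fin n → V) (v : V) : ℕ :=
  #{i | a i = v} + #{e | s e = v} + #{e | t e = v}

theorem sum_valence (s t : E → V) (a : Fin n → V) :
    ∑ v, valence s t a v = n + 2 * Fintype.card E := by
  simp only [valence, sum_add_distrib, Fintype.sum_card_fiberwise, Fintype.card_fin]
  ring

end LeakyGraph

/-- For leaky-cover graph data (finite vertex set `V`, finite
edge set `E` with endpoint maps `s t : E → V`, edge weights `ω : E → ℤ`, leg
assignment `a : Fin n → V` with leg weights `x : Fin n → ℤ`, genus `g : V → ℕ`),
if the `k`-leaky balancing condition holds at every vertex, then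
`∑ x i = k * (2G - 2 + n)` where `G = (∑ g v) + #E - #V + 1`. -/
theorem leaky_degree_relation (k : ℤ) (n : ℕ)
    (V E : Type) [Fintype V] [DecidableEq V] [Fintype E]
    (s t : E → V) (ω : E → ℤ) (a : Fin n → V) (x : Fin n → ℤ) (g : V → ℕ)
    (hbal : ∀ v : V,
      (∑ i ∈ Finset.univ.filter (fun i => a i = v), x i)
        + (∑ e ∈ Finset.univ.filter (fun e => t e = v), ω e)
        - (∑ e ∈ Finset.univ.filter (fun e => s e = v), ω e)
      = k * (2 * (g v : ℤ) - 2
          + (((Finset.univ.filter (fun i => a i = v)).card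
            + (Finset.univ.filter (fun e => s e = v)).card
            + (Finset.univ.filter (fun e => t e = v)).card : ℕ) : ℤ))) :
    ∑ i, x i
      = k * (2 * ((∑ v, (g v : ℤ)) + (Fintype.card E : ℤ) - (Fintype.card V : ℤ) + 1)
          - 2 + (n : ℤ)) := by
  have hsum : ∑ i, x i = ∑ v, k * (2 * (g v : ℤ) - 2 + (LeakyGraph.valence s t a v : ℤ)) := by
    refine .trans ?_ (sum_congr rfl fun v _ => hbal v)
    simp only [sum_sub_distrib, sum_add_distrib, sum_fiberwise]
    ring
  rw [hsum, ← mul_sum, sum_add_distrib, ← Nat.cast_sum, LeakyGraph.sum_valence, sum_sub_distrib, ← mul_sum,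
    sum_const, card_univ]
  push_cast
  ring
end

section
/- Let k be a positive even integer and n ≥ 4. Let x_1, …, x_n be integers with Σ_{i=1}^{n} x_i = k·(n − 2) and 2·x_i ≥ k for all i. Suppose that neither x_1 nor x_2 is an integer multiple of k/2 (i.e. for i = 1, 2 there is no integer m with 2·x_i = m·k), while for each i ≥ 3 there exists an integer m_i with 2·x_i = m_i·k. Then there exists an index i ≥ 3 with 2·x_i = k. -/
/-!
If no entry of index at least 2 equals `k/2`, then each of them, being a multiple of `k/2`
that is at least `k/2`, is at least `k`. Those `n - 2` entries alone then account for the whole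
sum `k (n - 2)`, leaving nothing for the two positive entries `x 0` and `x 1`.
-/

theorem le_of_two_mul_eq_mul_of_ne {k a m : ℤ} (hk : 0 < k) (hm : 2 * a = m * k)
    (hle : k ≤ 2 * a) (hne : 2 * a ≠ k) : k ≤ a := by
  have hm_pos : 1 ≤ m := by nlinarith
  have hm_ne : m ≠ 1 := by rintro rfl; exact hne (by linarith)
  have hm_two : 2 ≤ m := by omega
  nlinarith

theorem mul_lt_sum_of_le_tail {m : ℕ} {k : ℤ} (x : Fin (m + 2) → ℤ) (h0 : 0 < x 0)
    (h1 : 0 < x 1) (htail : ∀ i : Fin m, k ≤ x i.succ.succ) : m * k < ∑ i, x i := by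
  have htail_sum : m * k ≤ ∑ i : Fin m, x i.succ.succ := by
    simpa using Finset.card_nsmul_le_sum Finset.univ _ k fun i _ => htail i
  rw [Fin.sum_univ_succ, Fin.sum_univ_succ]
  simp only [Fin.succ_zero_eq_one]
  linarith

/-- Let `k` be a positive even integer and `n ≥ 4`. Let
`x : Fin n → ℤ` with `∑ x i = k * (n - 2)` and `2 * x i ≥ k` for all `i`.
Suppose that neither `x 0` nor `x 1` is an integer multiple of `k/2`
(integrally: there is no integer `m` with `2 * x i = m * k`), while
for each `i ≥ 2` (0-based; i.e. `i ≥ 3` in 1-based indexing) there exists an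
integer `m` with `2 * x i = m * k`. Then some `x i` with `i ≥ 2` satisfies
`2 * x i = k`. -/
theorem exists_half_k_entry (k : ℤ) (hkpos : 0 < k)
    (n : ℕ) (hn : 4 ≤ n) (x : Fin n → ℤ)
    (hsum : ∑ i, x i = k * ((n : ℤ) - 2))
    (hge : ∀ i, k ≤ 2 * x i)
    (hrest : ∀ i : Fin n, 2 ≤ (i : ℕ) → ∃ m : ℤ, 2 * x i = m * k) :
    ∃ i : Fin n, 2 ≤ (i : ℕ) ∧ 2 * x i = k := by
  by_contra! hne
  obtain ⟨m, rfl⟩ : ∃ m, n = m + 2 := ⟨n - 2, by omega⟩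
  have htail : ∀ i : Fin m, k ≤ x i.succ.succ := fun i => by
    have hi : 2 ≤ ((i.succ.succ : Fin (m + 2)) : ℕ) := by simp
    obtain ⟨c, hc⟩ := hrest _ hi
    exact le_of_two_mul_eq_mul_of_ne hkpos hc (hge _) (hne _ hi)
  have hlt := mul_lt_sum_of_le_tail x (by linarith [hge 0]) (by linarith [hge 1]) htail
  push_cast at hsum
  linarith
end

section
/- Let k be a positive even integer, n ≥ 3, and let x : Fin n → ℤ be such that for every i there is an integer m_i ≥ 1 with 2·x_i = m_i·k, and Σ_i x_i = k·(n − 2) (equivalently Σ_i m_i = 2n − 4). Let e : Fin n → ℕ with Σ_i e_i ≤ n − 3, and assume that for every subset I ⊆ {1, …, n} one has Σ_{i ∈ I} e_i < (Σ_{i ∈ I} m_i) − #I + 1. Then there is no genus-zero leaky cover datum for leaking k, degree x, and Psi-conditions e. -/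
open Finset SimpleGraph

lemma aux_card_le {V : Type*} [Fintype V] [DecidableEq V] {G : SimpleGraph V}
    [DecidableRel G.Adj] (hG : G.Connected) :
    Fintype.card V ≤ G.edgeFinset.card + 1 := by
  obtain ⟨r⟩ := hG.nonempty
  have H : ∀ v : V, ∃ y : V, v ≠ r → G.Adj v y ∧ G.dist y r + 1 = G.dist v r := by
    intro v
    by_cases hv : v = r
    · exact ⟨r, fun h => absurd hv h⟩
    · obtain ⟨p, hp⟩ := hG.exists_walk_length_eq_dist v r
      cases p with
      | nil => exact absurd rfl hv
      | @cons _ y _ h q =>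
        refine ⟨y, fun _ => ⟨h, ?_⟩⟩
        have h1 : G.dist y r ≤ q.length := SimpleGraph.dist_le q
        have h2 : G.dist v r ≤ G.dist v y + G.dist y r := hG.dist_triangle
        have h3 : G.dist v y ≤ 1 := by
          have := SimpleGraph.dist_le (SimpleGraph.Walk.cons h SimpleGraph.Walk.nil)
          simpa using this
        simp only [SimpleGraph.Walk.length_cons] at hp
        omega
    
  choose nb hnb using H
  have hinj : Set.InjOn (fun v => s(v, nb v)) (univ.erase r) := by
    intro v₁ h₁ v₂ h₂ heq
    simp only [mem_coe, mem_erase, mem_univ, and_true] at h₁ h₂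
    obtain ⟨ha₁, hd₁⟩ := hnb v₁ h₁
    obtain ⟨ha₂, hd₂⟩ := hnb v₂ h₂
    rw [Sym2.eq_iff] at heq
    rcases heq with ⟨h, -⟩ | ⟨he1, he2⟩
    · exact h
    · exfalso
      rw [he2] at hd₁
      rw [← he1] at hd₂
      omega
  have hmaps : ∀ v ∈ univ.erase r, s(v, nb v) ∈ G.edgeFinset := by
    intro v hv
    rw [mem_erase] at hv
    exact mem_edgeFinset.2 (hnb v hv.1).1
  have := Finset.card_le_card_of_injOn _ hmaps hinj
  rw [Finset.card_erase_of_mem (mem_univ r), Finset.card_univ] at this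
  omega

lemma aux_bridge {V : Type*} [Fintype V] [DecidableEq V] {G : SimpleGraph V}
    [DecidableRel G.Adj] (hG : G.Connected)
    (hcard : G.edgeFinset.card + 1 = Fintype.card V) {u v : V} (h : G.Adj u v) :
    ¬ (G.deleteEdges {s(u,v)}).Reachable u v := by
  classical
  intro hreach
  set G' := G.deleteEdges {s(u,v)} with hG'def
  have key : ∀ a b : V, G.Walk a b → G'.Reachable a b := by
    intro a b p
    induction p with
    | nil => exact SimpleGraph.Reachable.refl _
    | @cons a c b h' q ih =>
      refine SimpleGraph.Reachable.trans ?_ ih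
      by_cases hec : s(a, c) = s(u, v)
      · rw [Sym2.eq_iff] at hec
        rcases hec with ⟨rfl, rfl⟩ | ⟨rfl, rfl⟩
        · exact hreach
        · exact hreach.symm
      · exact SimpleGraph.Adj.reachable (by rw [hG'def, SimpleGraph.deleteEdges_adj]
                                            exact ⟨h', by simpa using hec⟩)
  have hG'conn : G'.Connected := by
    have : Nonempty V := ⟨u⟩
    exact ⟨fun a b => (hG.preconnected a b).elim (key a b)⟩
  have hsub : G'.edgeFinset ⊂ G.edgeFinset := by
    constructor
    · exact SimpleGraph.edgeFinset_mono (SimpleGraph.deleteEdges_le _)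
    · intro hcon
      have h1 : s(u,v) ∈ G.edgeFinset := SimpleGraph.mem_edgeFinset.2 h
      have h2 := hcon h1
      rw [SimpleGraph.mem_edgeFinset, hG'def, SimpleGraph.edgeSet_deleteEdges] at h2
      simp at h2
  have hlt := Finset.card_lt_card hsub
  have hle := aux_card_le hG'conn
  omega
structure LeakyCoverDatum (k : ℤ) {n : ℕ} (x : Fin n → ℤ) (e : Fin n → ℕ) : Type where
  /-- the number of vertices -/
  N : ℕ
  Npos : 0 < N
  /-- the leg assignment -/
  a : Fin n → Fin N
  /-- the flow on oriented pairs of vertices; nonzero exactly on edges of the tree -/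
  w : Fin N → Fin N → ℤ
  skew : ∀ u v, w u v = - w v u
  /-- the graph with an edge where the flow is nonzero is connected -/
  conn : (SimpleGraph.fromRel fun u v => w u v ≠ 0).Connected
  /-- the graph is a tree: the number of (unordered) edges is `N - 1`,
  counted here as ordered pairs -/
  tree : (Finset.univ.filter fun p : Fin N × Fin N => w p.1 p.2 ≠ 0).card = 2 * (N - 1)
  /-- the Psi-condition at each vertex -/
  psi : ∀ v : Fin N,
    (Finset.univ.filter fun u => w u v ≠ 0).card
      + (Finset.univ.filter fun i => a i = v).card
    = (∑ i ∈ Finset.univ.filter fun i => a i = v, e i) + 3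
  /-- the `k`-leaky balancing condition at each vertex -/
  balance : ∀ v : Fin N,
    (∑ i ∈ Finset.univ.filter fun i => a i = v, x i) + (∑ u, w u v)
    = k * ((((Finset.univ.filter fun u => w u v ≠ 0).card
        + (Finset.univ.filter fun i => a i = v).card : ℕ) : ℤ) - 2)

/-- Let `k` be a positive even integer, `n ≥ 3`, and
`x : Fin n → ℤ` with every entry a positive multiple of `k/2` (integrally:
`2 * x i = m i * k` with `m i ≥ 1`), summing to `k * (n - 2)`. If
`e : Fin n → ℕ` has `∑ e i ≤ n - 3` and for every subset `I` one has
`∑_{i ∈ I} e i < (∑_{i ∈ I} m i) - #I + 1`, then no genus-zero leaky cover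
datum for leaking `k`, degree `x`, and Psi-conditions `e` exists. -/
theorem vanishing_no_cover (k : ℤ) (hkpos : 0 < k) (hkeven : Even k)
    (n : ℕ) (hn : 3 ≤ n) (x : Fin n → ℤ) (m : Fin n → ℤ)
    (hm : ∀ i, 1 ≤ m i) (hxm : ∀ i, 2 * x i = m i * k)
    (hsum : ∑ i, x i = k * ((n : ℤ) - 2))
    (e : Fin n → ℕ) (he : (∑ i, (e i : ℤ)) ≤ (n : ℤ) - 3)
    (hvan : ∀ I : Finset (Fin n),
      (∑ i ∈ I, (e i : ℤ)) < (∑ i ∈ I, m i) - (I.card : ℤ) + 1) :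
    IsEmpty (LeakyCoverDatum k x e) := by
  classical
  constructor
  rintro ⟨N, Npos, a, w, skew, conn, tree, psi, balance⟩
  set G : SimpleGraph (Fin N) := SimpleGraph.fromRel (fun u v => w u v ≠ 0) with hGdef
  have hww : ∀ vv : Fin N, w vv vv = 0 := fun vv => by have := skew vv vv; omega
  have hadj : ∀ p q : Fin N, G.Adj p q ↔ w p q ≠ 0 := by
    intro p q
    rw [hGdef, SimpleGraph.fromRel_adj]
    constructor
    · rintro ⟨hne, h | h⟩
      · exact h
      · rw [skew p q]; omega
    · intro h
      refine ⟨?_, Or.inl h⟩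
      rintro rfl; exact h (hww p)
  have hecard : G.edgeFinset.card = N - 1 := by
    have h2 := SimpleGraph.two_mul_card_edgeFinset (G := G)
    have h3 : (Finset.univ.filter fun ((u, v) : Fin N × Fin N) => G.Adj u v)
        = (Finset.univ.filter fun p : Fin N × Fin N => w p.1 p.2 ≠ 0) := by
      apply Finset.filter_congr
      rintro ⟨p1, p2⟩ _
      simp [hadj]
    rw [h3, tree] at h2
    omega
  have hbridge : ∀ p q : Fin N, w p q ≠ 0 →
      ¬ (G.deleteEdges {s(p,q)}).Reachable p q := by
    intro p q h
    exact aux_bridge conn (by rw [Fintype.card_fin]; omega) ((hadj p q).2 h)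
  set S : Fin N → Fin N → Finset (Fin N) :=
    fun p q => Finset.univ.filter fun z => (G.deleteEdges {s(p,q)}).Reachable q z with hSdef
  have hSv : ∀ p q : Fin N, q ∈ S p q := by
    intro p q
    simp only [hSdef, Finset.mem_filter, Finset.mem_univ, true_and]
    exact SimpleGraph.Reachable.rfl
  have hSu : ∀ p q : Fin N, w p q ≠ 0 → p ∉ S p q := by
    intro p q h hmem
    simp only [hSdef, Finset.mem_filter, Finset.mem_univ, true_and] at hmem
    exact hbridge p q h hmem.symm
  have hcross : ∀ p q : Fin N, w p q ≠ 0 → ∀ z z' : Fin N, z ∈ S p q → z' ∉ S p q →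
      w z' z ≠ 0 → z' = p ∧ z = q := by
    intro p q hpq z z' hz hz' hw
    simp only [hSdef, Finset.mem_filter, Finset.mem_univ, true_and] at hz hz'
    by_cases hec : s(z', z) = s(p, q)
    · rw [Sym2.eq_iff] at hec
      rcases hec with ⟨h1, h2⟩ | ⟨h1, h2⟩
      · exact ⟨h1, h2⟩
      · exfalso; rw [h1] at hz'; exact hz' SimpleGraph.Reachable.rfl
    · exfalso
      apply hz'
      refine hz.trans (SimpleGraph.Adj.reachable ?_).symm
      rw [SimpleGraph.deleteEdges_adj]
      exact ⟨(hadj z' z).2 hw, by simpa using hec⟩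
  have hkey : ∀ p q : Fin N, w p q ≠ 0 →
      (∑ i ∈ Finset.univ.filter (fun i => a i ∈ S p q), x i) + w p q
        = k * ((∑ i ∈ Finset.univ.filter (fun i => a i ∈ S p q), (e i : ℤ))
            + (((S p q).card : ℕ) : ℤ)) := by
    intro p q hpq
    have e1 : ∑ v' ∈ S p q, ((∑ i ∈ Finset.univ.filter fun i => a i = v', x i) + ∑ u, w u v')
        = ∑ v' ∈ S p q, (k * ((((Finset.univ.filter fun u => w u v' ≠ 0).card
            + (Finset.univ.filter fun i => a i = v').card : ℕ) : ℤ) - 2)) :=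
      Finset.sum_congr rfl (fun v' _ => balance v')
    rw [Finset.sum_add_distrib] at e1
    have hT1 : ∑ v' ∈ S p q, ∑ i ∈ Finset.univ.filter (fun i => a i = v'), x i
        = ∑ i ∈ Finset.univ.filter (fun i => a i ∈ S p q), x i :=
      Finset.sum_fiberwise_eq_sum_filter Finset.univ (S p q) a x
    have hT2 : ∑ v' ∈ S p q, ∑ u, w u v' = w p q := by
      have hsplit : ∀ v' ∈ S p q, (∑ u, w u v')
          = (∑ u ∈ Finset.univ.filter (· ∈ S p q), w u v')
            + ∑ u ∈ Finset.univ.filter (¬ · ∈ S p q), w u v' :=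
        fun v' _ => (Finset.sum_filter_add_sum_filter_not Finset.univ _ _).symm
      rw [Finset.sum_congr rfl hsplit, Finset.sum_add_distrib]
      have hA : ∑ v' ∈ S p q, ∑ u ∈ Finset.univ.filter (· ∈ S p q), w u v' = 0 := by
        rw [Finset.filter_mem_eq_inter, Finset.univ_inter]
        have h2 : (∑ v' ∈ S p q, ∑ u ∈ S p q, w u v')
            = - ∑ v' ∈ S p q, ∑ u ∈ S p q, w u v' := by
          conv_lhs => rw [Finset.sum_comm]
          rw [show ∀ X : ℤ, -X = (-1) * X from fun X => by ring, Finset.mul_sum]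
          refine Finset.sum_congr rfl fun u _ => ?_
          rw [Finset.mul_sum]
          exact Finset.sum_congr rfl fun v' _ => by rw [skew]; ring
        linarith
      have hB : ∑ v' ∈ S p q, ∑ u ∈ Finset.univ.filter (¬ · ∈ S p q), w u v' = w p q := by
        rw [← Finset.sum_product']
        refine Finset.sum_eq_single_of_mem (q, p) ?_ ?_
        · rw [Finset.mem_product]
          exact ⟨hSv p q, by simp [hSu p q hpq]⟩
        · rintro ⟨z, z'⟩ hz hne
          rw [Finset.mem_product] at hz
          by_contra h0
          obtain ⟨h1, h2⟩ := hcross p q hpq z z' hz.1 (by simpa using hz.2) h0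
          exact hne (by rw [h1, h2])
      rw [hA, hB, zero_add]
    have hT3 : ∑ v' ∈ S p q, (k * ((((Finset.univ.filter fun u => w u v' ≠ 0).card
            + (Finset.univ.filter fun i => a i = v').card : ℕ) : ℤ) - 2))
        = k * ((∑ i ∈ Finset.univ.filter (fun i => a i ∈ S p q), (e i : ℤ))
            + (((S p q).card : ℕ) : ℤ)) := by
      have hterm : ∀ v' ∈ S p q, (k * ((((Finset.univ.filter fun u => w u v' ≠ 0).card
            + (Finset.univ.filter fun i => a i = v').card : ℕ) : ℤ) - 2))
          = k * ((∑ i ∈ Finset.univ.filter (fun i => a i = v'), (e i : ℤ)) + 1) := by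
        intro v' _
        congr 1
        rw [psi v']
        push_cast
        ring
      rw [Finset.sum_congr rfl hterm, ← Finset.mul_sum]
      congr 1
      rw [Finset.sum_add_distrib]
      have : ∑ v' ∈ S p q, ∑ i ∈ Finset.univ.filter (fun i => a i = v'), (e i : ℤ)
          = ∑ i ∈ Finset.univ.filter (fun i => a i ∈ S p q), (e i : ℤ) :=
        Finset.sum_fiberwise_eq_sum_filter Finset.univ (S p q) a (fun i => (e i : ℤ))
      rw [this]
      simp
    rw [hT1, hT2, hT3] at e1
    exact e1
  have hcut : ∀ p q : Fin N, w p q ≠ 0 → ∃ c : ℤ, 2 * w p q = k * c := by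
    intro p q h
    refine ⟨2 * (∑ i ∈ Finset.univ.filter (fun i => a i ∈ S p q), (e i : ℤ))
      + 2 * (((S p q).card : ℕ) : ℤ)
      - ∑ i ∈ Finset.univ.filter (fun i => a i ∈ S p q), m i, ?_⟩
    have h1 := hkey p q h
    have h2 : 2 * ∑ i ∈ Finset.univ.filter (fun i => a i ∈ S p q), x i
        = k * ∑ i ∈ Finset.univ.filter (fun i => a i ∈ S p q), m i := by
      rw [Finset.mul_sum, Finset.mul_sum]
      exact Finset.sum_congr rfl fun i _ => by rw [hxm i]; ring
    linear_combination 2 * h1 - h2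
  have hmono : ∀ p q z : Fin N, 0 < w p q → 0 < w q z → (S q z).card < (S p q).card := by
    intro p q z hpq hqz
    have hpq' : w p q ≠ 0 := ne_of_gt hpq
    have hqz' : w q z ≠ 0 := ne_of_gt hqz
    have hnpq : p ≠ q := by rintro rfl; rw [hww] at hpq'; exact hpq' rfl
    have hnqz : q ≠ z := by rintro rfl; rw [hww] at hqz'; exact hqz' rfl
    have hnzp : z ≠ p := by
      rintro rfl
      have := skew q z; omega
    have hsub : S q z ⊆ S p q := by
      have key : ∀ y₀ y : Fin N, (G.deleteEdges {s(q,z)}).Walk y₀ y →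
          ((G.deleteEdges {s(p,q)}).Reachable q y₀ ∧ (G.deleteEdges {s(q,z)}).Reachable z y₀
            ∧ y₀ ≠ p ∧ y₀ ≠ q) →
          ((G.deleteEdges {s(p,q)}).Reachable q y ∧ (G.deleteEdges {s(q,z)}).Reachable z y
            ∧ y ≠ p ∧ y ≠ q) := by
        intro y₀ y pwalk
        induction pwalk with
        | nil => exact id
        | @cons y₀ c y h' q' ih =>
          rintro ⟨r1, r2, hnp, hnq⟩
          apply ih
          rw [SimpleGraph.deleteEdges_adj] at h'
          obtain ⟨hadj', hedge⟩ := h'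
          have hr2c : (G.deleteEdges {s(q,z)}).Reachable z c := by
            refine r2.trans (SimpleGraph.Adj.reachable ?_)
            rw [SimpleGraph.deleteEdges_adj]
            exact ⟨hadj', hedge⟩
          have hcq : c ≠ q := by
            intro hceq
            rw [hceq] at hr2c
            exact hbridge q z hqz' hr2c.symm
          have hcp : c ≠ p := by
            intro hceq
            rw [hceq] at hr2c
            apply hbridge q z hqz'
            refine (hr2c.trans (SimpleGraph.Adj.reachable ?_)).symm
            rw [SimpleGraph.deleteEdges_adj]
            refine ⟨(hadj p q).2 hpq', ?_⟩
            simp only [Set.mem_singleton_iff, Sym2.eq_iff]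
            push_neg
            exact ⟨fun h => absurd h hnpq, fun h => absurd h hnzp.symm⟩
          have hr1c : (G.deleteEdges {s(p,q)}).Reachable q c := by
            refine r1.trans (SimpleGraph.Adj.reachable ?_)
            rw [SimpleGraph.deleteEdges_adj]
            refine ⟨hadj', ?_⟩
            simp only [Set.mem_singleton_iff, Sym2.eq_iff]
            push_neg
            exact ⟨fun h => absurd h hnp, fun h => absurd h hnq⟩
          exact ⟨hr1c, hr2c, hcp, hcq⟩
      intro y hy
      simp only [hSdef, Finset.mem_filter, Finset.mem_univ, true_and] at hy ⊢
      obtain ⟨pwalk⟩ := hy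
      have base : (G.deleteEdges {s(p,q)}).Reachable q z := by
        apply SimpleGraph.Adj.reachable
        rw [SimpleGraph.deleteEdges_adj]
        refine ⟨(hadj q z).2 hqz', ?_⟩
        simp only [Set.mem_singleton_iff, Sym2.eq_iff]
        push_neg
        exact ⟨fun h => absurd h hnpq.symm, fun _ => hnzp⟩
      exact (key z y pwalk ⟨base, SimpleGraph.Reachable.rfl, hnzp, hnqz.symm⟩).1
    refine Finset.card_lt_card ⟨hsub, fun hcon => ?_⟩
    have hq1 : q ∈ S p q := hSv p q
    have hq2 := hcon hq1
    simp only [hSdef, Finset.mem_filter, Finset.mem_univ, true_and] at hq2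
    exact hbridge q z hqz' hq2.symm
  -- a sink exists
  obtain ⟨v, hsink⟩ : ∃ v : Fin N, ∀ z : Fin N, w v z ≤ 0 := by
    by_contra hno
    push_neg at hno
    have hne : (Finset.univ.filter fun pr : Fin N × Fin N => 0 < w pr.1 pr.2).Nonempty := by
      obtain ⟨z, hz⟩ := hno ⟨0, Npos⟩
      exact ⟨(⟨0, Npos⟩, z), by simp [hz]⟩
    obtain ⟨pr, hprD, hprmin⟩ := Finset.exists_min_image _
      (fun pr : Fin N × Fin N => (S pr.1 pr.2).card) hne
    simp only [Finset.mem_filter, Finset.mem_univ, true_and] at hprD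
    obtain ⟨z, hz⟩ := hno pr.2
    have hmem : (pr.2, z) ∈ Finset.univ.filter fun pr : Fin N × Fin N => 0 < w pr.1 pr.2 := by
      simp [hz]
    have h5 := hprmin _ hmem
    dsimp only at h5
    have h6 := hmono pr.1 pr.2 z hprD hz
    omega
  -- final contradiction at the sink v
  have hb := balance v
  have hp := psi v
  rw [hp] at hb
  push_cast at hb
  have h2 : 2 * ∑ i ∈ Finset.univ.filter (fun i => a i = v), x i
      = k * ∑ i ∈ Finset.univ.filter (fun i => a i = v), m i := by
    rw [Finset.mul_sum, Finset.mul_sum]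
    exact Finset.sum_congr rfl fun i _ => by rw [hxm i]; ring
  have h3 : k * ((∑ i ∈ Finset.univ.filter (fun i => a i = v), (e i : ℤ))
      + (((Finset.univ.filter (fun i => a i = v)).card : ℕ) : ℤ))
      ≤ k * ∑ i ∈ Finset.univ.filter (fun i => a i = v), m i := by
    apply mul_le_mul_of_nonneg_left _ hkpos.le
    have hv := hvan (Finset.univ.filter (fun i => a i = v))
    have hv' := Int.lt_iff_add_one_le.mp hv
    linarith
  have h4 : k * (((Finset.univ.filter fun u => w u v ≠ 0).card : ℕ) : ℤ)
      ≤ 2 * ∑ u, w u v := by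
    have hres : ∑ u ∈ Finset.univ.filter (fun u => w u v ≠ 0), (2 * w u v)
        = ∑ u, 2 * w u v := by
      apply Finset.sum_filter_of_ne
      intro u _ hu h0
      rw [h0, mul_zero] at hu
      exact hu rfl
    have hbound : ∀ u ∈ Finset.univ.filter (fun u => w u v ≠ 0), k ≤ 2 * w u v := by
      intro u hu
      rw [Finset.mem_filter] at hu
      have hner := hu.2
      have hpos : 0 < w u v := by
        have h5 := skew u v
        have h6 := hsink u
        omega
      obtain ⟨c, hc⟩ := hcut u v hner
      have hc1 : 1 ≤ c := by
        by_contra hcle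
        push_neg at hcle
        have : c ≤ 0 := by omega
        nlinarith
      nlinarith [mul_le_mul_of_nonneg_left hc1 hkpos.le]
    have h7 := Finset.card_nsmul_le_sum _ _ _ hbound
    rw [hres, nsmul_eq_mul] at h7
    calc k * (((Finset.univ.filter fun u => w u v ≠ 0).card : ℕ) : ℤ)
        = (((Finset.univ.filter fun u => w u v ≠ 0).card : ℕ) : ℤ) * k := mul_comm _ _
      _ ≤ ∑ u, 2 * w u v := h7
      _ = 2 * ∑ u, w u v := (Finset.mul_sum _ _ _).symm
  have hpz : (((Finset.univ.filter fun u => w u v ≠ 0).card : ℕ) : ℤ)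
      + (((Finset.univ.filter (fun i => a i = v)).card : ℕ) : ℤ)
      = (∑ i ∈ Finset.univ.filter (fun i => a i = v), (e i : ℤ)) + 3 := by
    exact_mod_cast congrArg (Nat.cast (R := ℤ)) hp
  have hdegz : (((Finset.univ.filter fun u => w u v ≠ 0).card : ℕ) : ℤ)
      = (∑ i ∈ Finset.univ.filter (fun i => a i = v), (e i : ℤ)) + 3
        - (((Finset.univ.filter (fun i => a i = v)).card : ℕ) : ℤ) := by linarith
  rw [hdegz] at h4
  linarith
end

section
/- Let k > 0 be an integer, n ≥ 3, let x : Fin n → ℤ with Σ_i x_i = k·(n − 2), and let e : Fin n → ℕ with Σ_i e_i ≤ n − 3. Then NO genus-zero leaky cover datum for leaking k, degree x, and Psi-conditions e exists if and only if: k is even, for every i there is an integer m_i ≥ 1 with 2·x_i = m_i·k, and for every subset I ⊆ {1, …, n} one has Σ_{i ∈ I} e_i < (Σ_{i ∈ I} m_i) − #I + 1. -/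
namespace LeakyAux


open Finset

/-- sum of (m - e - 1) over a finset. -/
lemma sum_mel {ι : Type} (I : Finset ι) (m : ι → ℤ) (e : ι → ℕ) :
    ∑ i ∈ I, (m i - (e i : ℤ) - 1) = (∑ i ∈ I, m i) - (∑ i ∈ I, (e i : ℤ)) - I.card := by
  rw [Finset.sum_sub_distrib, Finset.sum_sub_distrib, Finset.sum_const, nsmul_eq_mul, mul_one]

/-- generalized datum existence, legs indexed by a finset of `ι`. -/
def HasD (k : ℤ) {ι : Type} [DecidableEq ι] (L : Finset ι) (x : ι → ℤ) (e : ι → ℕ) : Prop :=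
  ∃ (N : ℕ) (_ : 0 < N) (a : ι → Fin N) (w : Fin N → Fin N → ℤ),
    (∀ u v, w u v = - w v u) ∧
    (SimpleGraph.fromRel fun u v => w u v ≠ 0).Connected ∧
    (Finset.univ.filter fun p : Fin N × Fin N => w p.1 p.2 ≠ 0).card = 2 * (N - 1) ∧
    (∀ v, (Finset.univ.filter fun u => w u v ≠ 0).card + (L.filter fun i => a i = v).card
        = (∑ i ∈ L.filter fun i => a i = v, e i) + 3) ∧
    (∀ v, (∑ i ∈ L.filter fun i => a i = v, x i) + (∑ u, w u v)
        = k * ((((Finset.univ.filter fun u => w u v ≠ 0).card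
            + (L.filter fun i => a i = v).card : ℕ) : ℤ) - 2))

/-- generalized goodness predicate. -/
def GoodF (k : ℤ) {ι : Type} [DecidableEq ι] (L : Finset ι) (x : ι → ℤ) (e : ι → ℕ) : Prop :=
  Even k ∧ ∃ m : ι → ℤ, (∀ i ∈ L, 1 ≤ m i ∧ 2 * x i = m i * k) ∧
    ∀ I ⊆ L, (∑ i ∈ I, (e i : ℤ)) < (∑ i ∈ I, m i) - (I.card : ℤ) + 1

/-- single-vertex datum. -/
lemma single {ι : Type} [DecidableEq ι] (k : ℤ) (L : Finset ι) (x : ι → ℤ) (e : ι → ℕ)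
    (h3 : L.card = (∑ i ∈ L, e i) + 3)
    (hsum : ∑ i ∈ L, x i = k * ((L.card : ℤ) - 2)) : HasD k L x e := by
  refine ⟨1, one_pos, fun _ => 0, fun _ _ => 0, fun _ _ => by ring, ?_, ?_, ?_, ?_⟩
  · constructor
    intro u v
    rw [Subsingleton.elim u v]
  · simp
  · intro v
    have hv : v = 0 := Subsingleton.elim v 0
    subst hv
    have : (L.filter fun i => (0 : Fin 1) = (0 : Fin 1)) = L := by simp
    simpa [this] using h3
  · intro v
    have hv : v = 0 := Subsingleton.elim v 0
    subst hv
    have : (L.filter fun i => (0 : Fin 1) = (0 : Fin 1)) = L := by simp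
    simp only [this]
    simpa using hsum



/-- pair filter card as sum of in-degrees. -/
lemma pair_card {V : Type} [DecidableEq V] (S : Finset V) (w : V → V → ℤ) :
    ((S ×ˢ S).filter fun p => w p.1 p.2 ≠ 0).card
      = ∑ v ∈ S, (S.filter fun u => w u v ≠ 0).card := by
  rw [Finset.card_filter, Finset.sum_product]
  rw [Finset.sum_comm]
  refine Finset.sum_congr rfl fun v _ => ?_
  rw [Finset.card_filter]

theorem lemA {V ι : Type} [DecidableEq V] [DecidableEq ι] (t : ℤ) (ht : 0 < t) :
    ∀ (c : ℕ) (S : Finset V), S.card = c → S.Nonempty →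
    ∀ (L : Finset ι) (a : ι → V) (m : ι → ℤ) (e : ι → ℕ) (w : V → V → ℤ),
    (∀ u v, w u v = - w v u) →
    (((S ×ˢ S).filter fun p => w p.1 p.2 ≠ 0).card ≤ 2 * (S.card - 1)) →
    (∀ v ∈ S, (S.filter fun u => w u v ≠ 0).card + (L.filter fun i => a i = v).card
        = (∑ i ∈ L.filter fun i => a i = v, e i) + 3) →
    (∀ v ∈ S, t * (∑ i ∈ L.filter fun i => a i = v, m i) + (∑ u ∈ S, w u v)
        = 2 * t * ((∑ i ∈ L.filter fun i => a i = v, (e i : ℤ)) + 1)) →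
    ∃ I ⊆ L, (∑ i ∈ I, (m i - (e i : ℤ) - 1)) ≤ -1 := by
  intro c
  induction c using Nat.strong_induction_on with
  | _ c IH =>
  intro S hcard hne L a m e w hskew hedge hpsi hbal
  have hww : ∀ u v, w u v ≠ 0 ↔ w v u ≠ 0 := by
    intro u v; rw [hskew u v]; simp
  by_cases hiso : ∃ v ∈ S, ∀ u ∈ S, w u v = 0
  · obtain ⟨v, hv, hz⟩ := hiso
    refine ⟨L.filter fun i => a i = v, Finset.filter_subset _ _, ?_⟩
    have hb := hbal v hv
    have hp := hpsi v hv
    rw [Finset.sum_eq_zero hz, add_zero] at hb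
    have hdeg : (S.filter fun u => w u v ≠ 0).card = 0 := by
      rw [Finset.card_eq_zero, Finset.filter_eq_empty_iff]
      intro u hu; simpa using hz u hu
    rw [hdeg, zero_add] at hp
    -- hb : t * M = 2*t*(E+1), hp : card = Σe + 3
    have hM : (∑ i ∈ L.filter fun i => a i = v, m i)
        = 2 * ((∑ i ∈ L.filter fun i => a i = v, (e i : ℤ)) + 1) := by
      apply mul_left_cancel₀ (ne_of_gt ht)
      rw [hb]; ring
    rw [sum_mel]
    have hcardz : ((L.filter fun i => a i = v).card : ℤ)
        = (∑ i ∈ L.filter fun i => a i = v, (e i : ℤ)) + 3 := by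
      rw [hp]; push_cast [Nat.cast_sum]; ring
    rw [hM, hcardz]; ring_nf; omega
  · push_neg at hiso
    -- find a leaf u
    have hpos : 0 < S.card := Finset.card_pos.mpr hne
    have hleaf : ∃ u ∈ S, (S.filter fun y => w y u ≠ 0).card = 1 := by
      by_contra hno
      push_neg at hno
      have h2 : ∀ u ∈ S, 2 ≤ (S.filter fun y => w y u ≠ 0).card := by
        intro u hu
        obtain ⟨y, hy, hyne⟩ := hiso u hu
        have h1 : 0 < (S.filter fun y => w y u ≠ 0).card := by
          apply Finset.card_pos.mpr
          exact ⟨y, Finset.mem_filter.mpr ⟨hy, hyne⟩⟩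
        have := hno u hu
        omega
      have hsum2 : 2 * S.card ≤ ∑ v ∈ S, (S.filter fun u => w u v ≠ 0).card := by
        calc 2 * S.card = ∑ _v ∈ S, 2 := by rw [Finset.sum_const]; ring
        _ ≤ _ := Finset.sum_le_sum h2
      rw [← pair_card] at hsum2
      omega
    obtain ⟨u, huS, hdeg1⟩ := hleaf
    obtain ⟨v0, hv0⟩ := Finset.card_eq_one.mp hdeg1
    have hv0mem : v0 ∈ S.filter fun y => w y u ≠ 0 := by rw [hv0]; exact Finset.mem_singleton_self v0
    have hv0S : v0 ∈ S := (Finset.mem_filter.mp hv0mem).1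
    have hv0w : w v0 u ≠ 0 := (Finset.mem_filter.mp hv0mem).2
    have huv0 : u ≠ v0 := by
      intro h; apply hv0w; rw [← h]
      have := hskew u u; omega
    have huniq : ∀ y ∈ S, w y u ≠ 0 → y = v0 := by
      intro y hy hyw
      have : y ∈ S.filter fun z => w z u ≠ 0 := Finset.mem_filter.mpr ⟨hy, hyw⟩
      rw [hv0] at this; exact Finset.mem_singleton.mp this
    have hsumu : (∑ y ∈ S, w y u) = w v0 u := by
      apply Finset.sum_eq_single_of_mem v0 hv0S
      intro b hb hbne
      by_contra hbw
      exact hbne (huniq b hb hbw)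
    -- set up numbers at u
    set Mu : ℤ := ∑ i ∈ L.filter fun i => a i = u, m i with hMu
    set Eu : ℤ := ∑ i ∈ L.filter fun i => a i = u, (e i : ℤ) with hEu
    have hbu := hbal u huS
    rw [hsumu] at hbu
    have hwv0u : w v0 u = t * (2 * Eu + 2 - Mu) := by rw [← hMu, ← hEu] at hbu; linarith
    set c0 : ℤ := Mu - 2 * Eu - 2 with hc0
    have hc0ne : c0 ≠ 0 := by
      intro h
      apply hv0w
      rw [hwv0u, hc0] at *
      have : 2 * Eu + 2 - Mu = 0 := by omega
      rw [this, mul_zero]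
    have hwuv0 : w u v0 = t * c0 := by rw [hskew u v0, hwv0u, hc0]; ring
    have hpu := hpsi u huS
    rw [hdeg1] at hpu
    -- Lu card = Eu + 2
    have hLucard : ((L.filter fun i => a i = u).card : ℤ) = Eu + 2 := by
      have : ((∑ i ∈ L.filter fun i => a i = u, e i : ℕ) : ℤ) = Eu := by
        rw [hEu]; push_cast; rfl
      omega
    rcases lt_or_gt_of_ne hc0ne with hneg | hposc
    · -- leaf with outgoing deficit: legs at u are bad
      refine ⟨L.filter fun i => a i = u, Finset.filter_subset _ _, ?_⟩
      rw [sum_mel, ← hMu, ← hEu, hLucard]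
      have : Mu - Eu - (Eu + 2) = c0 := by rw [hc0]; ring
      rw [this]; omega
    · -- surgery
      have hLune : ∃ i0, i0 ∈ L.filter fun i => a i = u := by
        apply Finset.Nonempty.exists_mem
        apply Finset.card_pos.mp
        omega
      obtain ⟨i0, hi0mem⟩ := hLune
      have hi0L : i0 ∈ L := (Finset.mem_filter.mp hi0mem).1
      have hai0 : a i0 = u := (Finset.mem_filter.mp hi0mem).2
      set S' := S.erase u with hS'
      set L' := insert i0 (L.filter fun i => a i ≠ u) with hL'
      set a' := Function.update a i0 v0 with ha'
      set m' := Function.update m i0 c0 with hm'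
      set e' := Function.update e i0 0 with he'
      have hi0notf : i0 ∉ L.filter fun i => a i ≠ u := by
        intro h; exact (Finset.mem_filter.mp h).2 hai0
      have hcard' : S'.card + 1 = S.card := Finset.card_erase_add_one huS
      have hne' : S'.Nonempty := ⟨v0, Finset.mem_erase.mpr ⟨Ne.symm huv0, hv0S⟩⟩
      -- w u y = 0 for y ≠ v0 in S
      have hwu0 : ∀ y ∈ S, y ≠ v0 → w u y = 0 := by
        intro y hy hyne
        by_contra h
        exact hyne (huniq y hy ((hww u y).mp h))
      have hwy0 : ∀ y ∈ S, y ≠ v0 → w y u = 0 := by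
        intro y hy hyne
        by_contra h
        exact hyne (huniq y hy h)
      -- edge count for S'
      have hedge' : ((S' ×ˢ S').filter fun p => w p.1 p.2 ≠ 0).card ≤ 2 * (S'.card - 1) := by
        have hsub : ((S' ×ˢ S').filter fun p => w p.1 p.2 ≠ 0) ∪ {(u, v0), (v0, u)}
            ⊆ (S ×ˢ S).filter fun p => w p.1 p.2 ≠ 0 := by
          intro p hp
          rcases Finset.mem_union.mp hp with hp | hp
          · obtain ⟨hpm, hpw⟩ := Finset.mem_filter.mp hp
            refine Finset.mem_filter.mpr ⟨?_, hpw⟩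
            obtain ⟨h1, h2⟩ := Finset.mem_product.mp hpm
            exact Finset.mem_product.mpr ⟨Finset.mem_of_mem_erase h1, Finset.mem_of_mem_erase h2⟩
          · rcases Finset.mem_insert.mp hp with hp | hp
            · subst hp
              exact Finset.mem_filter.mpr ⟨Finset.mem_product.mpr ⟨huS, hv0S⟩, by
                simpa using fun h => hv0w (by rw [hskew v0 u, h, neg_zero])⟩
            · rw [Finset.mem_singleton.mp hp]
              exact Finset.mem_filter.mpr ⟨Finset.mem_product.mpr ⟨hv0S, huS⟩, hv0w⟩
        have hdisj : Disjoint ((S' ×ˢ S').filter fun p => w p.1 p.2 ≠ 0)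
            ({(u, v0), (v0, u)} : Finset (V × V)) := by
          rw [Finset.disjoint_right]
          intro p hp hpf
          obtain ⟨hpm, _⟩ := Finset.mem_filter.mp hpf
          obtain ⟨h1, h2⟩ := Finset.mem_product.mp hpm
          rcases Finset.mem_insert.mp hp with hp | hp
          · subst hp; exact (Finset.mem_erase.mp h1).1 rfl
          · rw [Finset.mem_singleton.mp hp] at h2; exact (Finset.mem_erase.mp h2).1 rfl
        have hc2 : ({(u, v0), (v0, u)} : Finset (V × V)).card = 2 := by
          apply Finset.card_pair
          intro h
          exact huv0 (congrArg Prod.fst h)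
        have := Finset.card_le_card hsub
        rw [Finset.card_union_of_disjoint hdisj, hc2] at this
        omega
      -- leg filter identities
      have hfilter_eq : ∀ v : V, v ≠ u → v ≠ v0 →
          (L'.filter fun i => a' i = v) = L.filter fun i => a i = v := by
        intro v hvu hvv0
        ext l
        simp only [hL', ha', Finset.mem_filter, Finset.mem_insert]
        by_cases hl : l = i0
        · subst hl
          rw [Function.update_self]
          constructor
          · rintro ⟨_, h⟩; exact absurd h.symm hvv0
          · rintro ⟨_, h⟩
            rw [hai0] at h
            exact absurd h.symm hvu
        · rw [Function.update_of_ne hl]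
          constructor
          · rintro ⟨hor, hal⟩
            rcases hor with h | h
            · exact absurd h hl
            · exact ⟨h.1, hal⟩
          · rintro ⟨hlL, hal⟩
            exact ⟨Or.inr ⟨hlL, by rw [hal]; exact hvu⟩, hal⟩
      have hfilter_v0 : (L'.filter fun i => a' i = v0)
          = insert i0 (L.filter fun i => a i = v0) := by
        ext l
        simp only [hL', ha', Finset.mem_filter, Finset.mem_insert]
        by_cases hl : l = i0
        · subst hl
          rw [Function.update_self]
          simp
        · rw [Function.update_of_ne hl]
          constructor
          · rintro ⟨hor, hal⟩
            rcases hor with h | h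
            · exact absurd h hl
            · exact Or.inr ⟨h.1, hal⟩
          · rintro (h | ⟨hlL, hal⟩)
            · exact absurd h hl
            · exact ⟨Or.inr ⟨hlL, by rw [hal]; exact Ne.symm huv0⟩, hal⟩
      have hi0not0 : i0 ∉ L.filter fun i => a i = v0 := by
        intro h
        have := (Finset.mem_filter.mp h).2
        rw [hai0] at this
        exact huv0 this
      have hupdate_e : ∀ (T : Finset ι), i0 ∉ T → (∑ i ∈ T, e' i) = ∑ i ∈ T, e i := by
        intro T hT
        apply Finset.sum_congr rfl
        intro l hl
        have : l ≠ i0 := by rintro rfl; exact hT hl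
        rw [he', Function.update_of_ne this]
      have hupdate_m : ∀ (T : Finset ι), i0 ∉ T → (∑ i ∈ T, m' i) = ∑ i ∈ T, m i := by
        intro T hT
        apply Finset.sum_congr rfl
        intro l hl
        have : l ≠ i0 := by rintro rfl; exact hT hl
        rw [hm', Function.update_of_ne this]
      have hupdate_ez : ∀ (T : Finset ι), i0 ∉ T →
          (∑ i ∈ T, (e' i : ℤ)) = ∑ i ∈ T, (e i : ℤ) := by
        intro T hT
        apply Finset.sum_congr rfl
        intro l hl
        have : l ≠ i0 := by rintro rfl; exact hT hl
        rw [he', Function.update_of_ne this]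
      have hnotmem_v : ∀ v : V, v ≠ u → i0 ∉ L.filter fun i => a i = v := by
        intro v hvu h
        have := (Finset.mem_filter.mp h).2
        rw [hai0] at this
        exact hvu this.symm
      -- degree identities
      have hdeg_v0 : (S'.filter fun y => w y v0 ≠ 0)
          = (S.filter fun y => w y v0 ≠ 0).erase u := by
        ext y
        rw [hS', Finset.mem_filter, Finset.mem_erase, Finset.mem_erase, Finset.mem_filter]
        tauto
      have humem : u ∈ S.filter fun y => w y v0 ≠ 0 := by
        refine Finset.mem_filter.mpr ⟨huS, ?_⟩
        rw [hwuv0]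
        exact mul_ne_zero (ne_of_gt ht) hc0ne
      have hdeg_other : ∀ v : V, v ∈ S → v ≠ v0 →
          (S'.filter fun y => w y v ≠ 0) = S.filter fun y => w y v ≠ 0 := by
        intro v hvS hvv0
        ext y
        rw [hS', Finset.mem_filter, Finset.mem_filter, Finset.mem_erase]
        constructor
        · rintro ⟨⟨_, hy⟩, hyw⟩; exact ⟨hy, hyw⟩
        · rintro ⟨hy, hyw⟩
          refine ⟨⟨?_, hy⟩, hyw⟩
          intro hyu
          rw [hyu] at hyw
          exact hvv0 (huniq v hvS ((hww u v).mp hyw))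
      -- psi for S'
      have hpsi' : ∀ v ∈ S', (S'.filter fun y => w y v ≠ 0).card
          + (L'.filter fun i => a' i = v).card
          = (∑ i ∈ L'.filter fun i => a' i = v, e' i) + 3 := by
        intro v hv
        have hvS : v ∈ S := Finset.mem_of_mem_erase hv
        have hvu : v ≠ u := (Finset.mem_erase.mp hv).1
        by_cases hvv0 : v = v0
        · subst hvv0
          have hdc : ((S.filter fun y => w y v ≠ 0).erase u).card + 1
              = (S.filter fun y => w y v ≠ 0).card := Finset.card_erase_add_one humem
          rw [hdeg_v0, hfilter_v0, Finset.card_insert_of_notMem hi0not0,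
            Finset.sum_insert hi0not0, hupdate_e _ hi0not0, he', Function.update_self]
          have := hpsi v hvS
          omega
        · rw [hdeg_other v hvS hvv0, hfilter_eq v hvu hvv0, hupdate_e _ (hnotmem_v v hvu)]
          exact hpsi v hvS
      -- balance for S'
      have hbal' : ∀ v ∈ S', t * (∑ i ∈ L'.filter fun i => a' i = v, m' i)
          + (∑ y ∈ S', w y v)
          = 2 * t * ((∑ i ∈ L'.filter fun i => a' i = v, (e' i : ℤ)) + 1) := by
        intro v hv
        have hvS : v ∈ S := Finset.mem_of_mem_erase hv
        have hvu : v ≠ u := (Finset.mem_erase.mp hv).1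
        have hsumS' : (∑ y ∈ S', w y v) = (∑ y ∈ S, w y v) - w u v := by
          rw [hS']
          exact Finset.sum_erase_eq_sub huS
        by_cases hvv0 : v = v0
        · subst hvv0
          rw [hfilter_v0, Finset.sum_insert hi0not0, Finset.sum_insert hi0not0,
            hupdate_m _ hi0not0, hupdate_ez _ hi0not0, hm', he', Function.update_self,
            Function.update_self, hsumS', hwuv0]
          have := hbal v hv0S
          push_cast
          linarith
        · have hwuv : w u v = 0 := hwu0 v hvS (hvv0)
          rw [hfilter_eq v hvu hvv0, hupdate_m _ (hnotmem_v v hvu),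
            hupdate_ez _ (hnotmem_v v hvu), hsumS', hwuv, sub_zero]
          exact hbal v hvS
      -- apply IH
      have hlt : S'.card < c := by omega
      obtain ⟨I', hI'sub, hI'bad⟩ := IH S'.card hlt S' rfl hne' L' a' m' e' w hskew
        hedge' hpsi' hbal'
      refine ⟨I'.erase i0, ?_, ?_⟩
      · intro l hl
        have hlI' : l ∈ I' := Finset.mem_of_mem_erase hl
        have hlne : l ≠ i0 := (Finset.mem_erase.mp hl).1
        have hlL' : l ∈ L' := hI'sub hlI'
        rw [hL', Finset.mem_insert] at hlL'
        rcases hlL' with h | h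
        · exact absurd h hlne
        · exact (Finset.mem_filter.mp h).1
      · have hsum_eq : (∑ i ∈ I'.erase i0, (m i - (e i : ℤ) - 1))
            = ∑ i ∈ I'.erase i0, (m' i - (e' i : ℤ) - 1) := by
          apply Finset.sum_congr rfl
          intro l hl
          have hlne : l ≠ i0 := (Finset.mem_erase.mp hl).1
          rw [hm', he', Function.update_of_ne hlne, Function.update_of_ne hlne]
        rw [hsum_eq]
        by_cases hi0I : i0 ∈ I'
        · have hsplit : (∑ i ∈ I'.erase i0, (m' i - (e' i : ℤ) - 1))
              = (∑ i ∈ I', (m' i - (e' i : ℤ) - 1)) - (m' i0 - (e' i0 : ℤ) - 1) :=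
            Finset.sum_erase_eq_sub hi0I
          have hterm : m' i0 - (e' i0 : ℤ) - 1 = c0 - 1 := by
            rw [hm', he', Function.update_self, Function.update_self]
            push_cast
            ring
          have hge : (0:ℤ) ≤ m' i0 - (e' i0 : ℤ) - 1 := by rw [hterm]; omega
          linarith [hI'bad, hsplit, hge]
        · rw [Finset.erase_eq_of_notMem hi0I]
          exact hI'bad


lemma card_val_eq (N : ℕ) (c : ℕ) :
    ((Finset.univ : Finset (Fin N)).filter fun u => u.1 = c).card = if c < N then 1 else 0 := by
  by_cases h : c < N
  · rw [if_pos h, Finset.card_eq_one]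
    refine ⟨⟨c, h⟩, ?_⟩
    ext u
    simp [Fin.ext_iff]
  · rw [if_neg h, Finset.card_eq_zero]
    rw [Finset.filter_eq_empty_iff]
    intro u _
    have := u.isLt
    omega

lemma sum_ite_val {N : ℕ} (P : ℕ → Prop) [DecidablePred P] :
    (∑ u : Fin N, if P u.1 then (1:ℕ) else 0) = ((Finset.range N).filter P).card := by
  rw [Finset.card_filter]
  exact Fin.sum_univ_eq_sum_range (fun j => if P j then (1:ℕ) else 0) N

theorem cat {ι : Type} [DecidableEq ι] (k : ℤ) (L : Finset ι) (x : ι → ℤ) (e : ι → ℕ)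
    (N : ℕ) (hN : 2 ≤ N)
    (hnEN : L.card = (∑ i ∈ L, e i) + N + 2)
    (hsum : ∑ i ∈ L, x i = k * ((L.card : ℤ) - 2))
    (a : ι → Fin N)
    (H1 : ∀ j : ℕ, j < N - 1 → (L.filter fun i => (a i).1 ≤ j).card
        = (∑ i ∈ L.filter fun i => (a i).1 ≤ j, e i) + (j + 2))
    (H2 : ∀ j : ℕ, j < N - 1 → (∑ i ∈ L.filter fun i => (a i).1 ≤ j, x i)
        ≠ k * (((L.filter fun i => (a i).1 ≤ j).card : ℤ) - 1)) :
    HasD k L x e := by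
  set f : ℕ → ℤ := fun j => (∑ i ∈ L.filter fun i => (a i).1 ≤ j, x i)
      - k * (((L.filter fun i => (a i).1 ≤ j).card : ℤ) - 1) with hf
  have hfne : ∀ j, j < N - 1 → f j ≠ 0 := by
    intro j hj
    rw [hf]
    exact sub_ne_zero_of_ne (H2 j hj)
  set w : Fin N → Fin N → ℤ := fun u v =>
    if u.1 + 1 = v.1 then f u.1 else if v.1 + 1 = u.1 then - f v.1 else 0 with hw
  have hwchar : ∀ u v : Fin N, w u v ≠ 0 ↔ (u.1 + 1 = v.1 ∨ v.1 + 1 = u.1) := by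
    intro u v
    simp only [hw]
    constructor
    · intro h
      by_contra hc
      push_neg at hc
      rw [if_neg hc.1, if_neg hc.2] at h
      exact h rfl
    · intro h
      rcases h with h | h
      · rw [if_pos h]
        exact hfne u.1 (by have := v.isLt; omega)
      · have h1 : ¬ (u.1 + 1 = v.1) := by omega
        rw [if_neg h1, if_pos h]
        exact neg_ne_zero.mpr (hfne v.1 (by have := u.isLt; omega))
  have hskew : ∀ u v : Fin N, w u v = - w v u := by
    intro u v
    simp only [hw]
    by_cases h1 : u.1 + 1 = v.1 <;> by_cases h2 : v.1 + 1 = u.1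
    · omega
    · rw [if_pos h1, if_pos h1, if_neg h2, neg_neg]
    · rw [if_neg h1, if_pos h2, if_pos h2]
    · rw [if_neg h1, if_neg h2, if_neg h2, if_neg h1, neg_zero]
  -- degree
  have hdegpt : ∀ v u : Fin N, (if w u v ≠ 0 then (1:ℕ) else 0)
      = (if u.1 + 1 = v.1 then 1 else 0) + (if v.1 + 1 = u.1 then 1 else 0) := by
    intro v u
    by_cases h1 : u.1 + 1 = v.1 <;> by_cases h2 : v.1 + 1 = u.1
    · omega
    · rw [if_pos ((hwchar u v).mpr (Or.inl h1)), if_pos h1, if_neg h2]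
    · rw [if_pos ((hwchar u v).mpr (Or.inr h2)), if_neg h1, if_pos h2]
    · rw [if_neg h1, if_neg h2, if_neg]
      intro hne
      rcases (hwchar u v).mp hne with h | h
      exacts [h1 h, h2 h]
  have hcount1 : ∀ c : ℕ, (∑ u : Fin N, if u.1 + 1 = c then (1:ℕ) else 0)
      = if 1 ≤ c ∧ c ≤ N then 1 else 0 := by
    intro c
    have : (∑ u : Fin N, if u.1 + 1 = c then (1:ℕ) else 0)
        = (∑ u : Fin N, if u.1 = c - 1 ∧ 1 ≤ c then (1:ℕ) else 0) := by
      apply Finset.sum_congr rfl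
      intro u _
      apply if_congr _ rfl rfl
      omega
    rw [this]
    by_cases hc : 1 ≤ c
    · have : (∑ u : Fin N, if u.1 = c - 1 ∧ 1 ≤ c then (1:ℕ) else 0)
          = (∑ u : Fin N, if u.1 = c - 1 then (1:ℕ) else 0) := by
        apply Finset.sum_congr rfl
        intro u _
        apply if_congr _ rfl rfl
        constructor
        · exact fun h => h.1
        · exact fun h => ⟨h, hc⟩
      rw [this, ← Finset.card_filter, card_val_eq]
      by_cases h2 : c - 1 < N
      · rw [if_pos h2, if_pos (by omega)]
      · rw [if_neg h2, if_neg (by omega)]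
    · rw [if_neg (by omega)]
      apply Finset.sum_eq_zero
      intro u _
      rw [if_neg (by omega)]
  have hcount2 : ∀ c : ℕ, (∑ u : Fin N, if c + 1 = u.1 then (1:ℕ) else 0)
      = if c + 1 < N then 1 else 0 := by
    intro c
    have : (∑ u : Fin N, if c + 1 = u.1 then (1:ℕ) else 0)
        = (∑ u : Fin N, if u.1 = c + 1 then (1:ℕ) else 0) := by
      apply Finset.sum_congr rfl
      intro u _
      apply if_congr _ rfl rfl
      omega
    rw [this, ← Finset.card_filter, card_val_eq]
  have hdeg : ∀ v : Fin N, (Finset.univ.filter fun u => w u v ≠ 0).card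
      = (if 1 ≤ v.1 then 1 else 0) + (if v.1 + 1 < N then 1 else 0) := by
    intro v
    rw [Finset.card_filter]
    rw [Finset.sum_congr rfl (fun u _ => hdegpt v u), Finset.sum_add_distrib]
    rw [hcount1 v.1, hcount2 v.1]
    have hv := v.isLt
    congr 1
    apply if_congr _ rfl rfl
    constructor
    · exact fun h => h.1
    · exact fun h => ⟨h, by omega⟩
  -- tree count
  have htree : (Finset.univ.filter fun p : Fin N × Fin N => w p.1 p.2 ≠ 0).card = 2 * (N - 1) := by
    rw [Finset.card_filter]
    rw [← Finset.univ_product_univ, Finset.sum_product]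
    have hrow : ∀ u : Fin N, (∑ v : Fin N, if w u v ≠ 0 then (1:ℕ) else 0)
        = (if u.1 + 1 < N then 1 else 0) + (if 1 ≤ u.1 then 1 else 0) := by
      intro u
      have hpt : ∀ v : Fin N, (if w u v ≠ 0 then (1:ℕ) else 0)
          = (if u.1 + 1 = v.1 then 1 else 0) + (if v.1 + 1 = u.1 then 1 else 0) := by
        intro v
        by_cases h1 : u.1 + 1 = v.1 <;> by_cases h2 : v.1 + 1 = u.1
        · omega
        · rw [if_pos ((hwchar u v).mpr (Or.inl h1)), if_pos h1, if_neg h2]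
        · rw [if_pos ((hwchar u v).mpr (Or.inr h2)), if_neg h1, if_pos h2]
        · rw [if_neg h1, if_neg h2, if_neg]
          intro hne
          rcases (hwchar u v).mp hne with h | h
          exacts [h1 h, h2 h]
      rw [Finset.sum_congr rfl (fun v _ => hpt v), Finset.sum_add_distrib]
      congr 1
      · -- ∑_v [u.1 + 1 = v.1] = if u.1+1 < N
        have : (∑ v : Fin N, if u.1 + 1 = v.1 then (1:ℕ) else 0)
            = (∑ v : Fin N, if v.1 = u.1 + 1 then (1:ℕ) else 0) := by
          apply Finset.sum_congr rfl
          intro v _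
          apply if_congr _ rfl rfl
          omega
        rw [this, ← Finset.card_filter, card_val_eq]
      · -- ∑_v [v.1 + 1 = u.1] = if 1 ≤ u.1
        rw [hcount1 u.1]
        have hu := u.isLt
        apply if_congr _ rfl rfl
        constructor
        · exact fun h => h.1
        · exact fun h => ⟨h, by omega⟩
    rw [Finset.sum_congr rfl (fun u _ => hrow u), Finset.sum_add_distrib]
    have e1 : (∑ u : Fin N, if u.1 + 1 < N then (1:ℕ) else 0) = N - 1 := by
      rw [sum_ite_val (fun j => j + 1 < N)]
      have : (Finset.range N).filter (fun j => j + 1 < N) = Finset.range (N - 1) := by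
        ext j
        simp only [Finset.mem_filter, Finset.mem_range]
        omega
      rw [this, Finset.card_range]
    have e2 : (∑ u : Fin N, if 1 ≤ u.1 then (1:ℕ) else 0) = N - 1 := by
      rw [sum_ite_val (fun j => 1 ≤ j)]
      have : (Finset.range N).filter (fun j => 1 ≤ j) = Finset.Ico 1 N := by
        ext j
        simp only [Finset.mem_filter, Finset.mem_range, Finset.mem_Ico]
        omega
      rw [this, Nat.card_Ico]
    rw [e1, e2]
    omega
  -- connectivity
  have hNpos : 0 < N := by omega
  have hconn : (SimpleGraph.fromRel fun u v => w u v ≠ 0).Connected := by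
    set G := SimpleGraph.fromRel fun u v => w u v ≠ 0 with hG
    have hadj : ∀ (r : ℕ) (h : r + 1 < N), G.Adj ⟨r, by omega⟩ ⟨r + 1, h⟩ := by
      intro r h
      rw [hG, SimpleGraph.fromRel_adj]
      constructor
      · intro hcon
        have h2 : r = r + 1 := congrArg Fin.val hcon
        omega
      · left
        apply (hwchar _ _).mpr
        left
        rfl
    have hreach : ∀ (r : ℕ) (h : r < N), G.Reachable ⟨0, hNpos⟩ ⟨r, h⟩ := by
      intro r
      induction r with
      | zero => intro h; rfl
      | succ r ih =>
        intro h
        exact (ih (by omega)).trans (hadj r h).reachable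
    rw [SimpleGraph.connected_iff]
    refine ⟨?_, ⟨⟨0, hNpos⟩⟩⟩
    intro u v
    have hu : u = ⟨u.1, u.isLt⟩ := by ext; rfl
    have hv : v = ⟨v.1, v.isLt⟩ := by ext; rfl
    rw [hu, hv]
    exact (hreach u.1 u.isLt).symm.trans (hreach v.1 v.isLt)
  -- prefix machinery
  have hmemv : ∀ (v : Fin N) (i : ι), (a i = v) ↔ (a i).1 = v.1 := by
    intro v i
    rw [Fin.ext_iff]
  have hsplit : ∀ (v : Fin N) (r : ℕ), v.1 = r + 1 →
      (L.filter fun i => (a i).1 ≤ r + 1)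
        = (L.filter fun i => (a i).1 ≤ r) ∪ (L.filter fun i => a i = v)
      ∧ Disjoint (L.filter fun i => (a i).1 ≤ r) (L.filter fun i => a i = v) := by
    intro v r hv
    constructor
    · ext i
      rw [Finset.mem_union, Finset.mem_filter, Finset.mem_filter, Finset.mem_filter, hmemv v i, hv]
      constructor
      · rintro ⟨hiL, hle⟩
        by_cases h : (a i).1 ≤ r
        · exact Or.inl ⟨hiL, h⟩
        · exact Or.inr ⟨hiL, by omega⟩
      · rintro (⟨hiL, h⟩ | ⟨hiL, h⟩)
        · exact ⟨hiL, by omega⟩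
        · exact ⟨hiL, by omega⟩
    · rw [Finset.disjoint_left]
      intro i hi hi2
      have h1 := (Finset.mem_filter.mp hi).2
      have h2 := (Finset.mem_filter.mp hi2).2
      rw [hmemv v i, hv] at h2
      omega
  have htop : (L.filter fun i => (a i).1 ≤ N - 1) = L := by
    apply Finset.filter_true_of_mem
    intro i _
    have := (a i).isLt
    omega
  have hzero : ∀ (v : Fin N), v.1 = 0 → (L.filter fun i => a i = v) = (L.filter fun i => (a i).1 ≤ 0) := by
    intro v hv
    apply Finset.filter_congr
    intro i _
    rw [hmemv v i, hv]
    constructor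
    · omega
    · omega
  -- sum of w into v
  have hsumw : ∀ v : Fin N, (∑ u, w u v)
      = (if 1 ≤ v.1 then f (v.1 - 1) else 0) + (if v.1 + 1 < N then - f v.1 else 0) := by
    intro v
    have hpt : ∀ u : Fin N, w u v
        = (if u.1 + 1 = v.1 then f (v.1 - 1) else 0) + (if v.1 + 1 = u.1 then - f v.1 else 0) := by
      intro u
      simp only [hw]
      split_ifs with h1 h2 h3 <;>
        first
          | (exfalso; omega)
          | (rw [add_zero]; congr 1; omega)
          | rw [zero_add]
          | simp
    rw [Finset.sum_congr rfl (fun u _ => hpt u), Finset.sum_add_distrib]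
    congr 1
    · by_cases hv : 1 ≤ v.1
      · rw [if_pos hv]
        have hlt : v.1 - 1 < N := by have := v.isLt; omega
        have hc : ∀ u : Fin N, (u.1 + 1 = v.1) ↔ (u = ⟨v.1 - 1, hlt⟩) := by
          intro u
          constructor
          · intro h
            apply Fin.ext
            show u.1 = v.1 - 1
            omega
          · intro h
            subst h
            show v.1 - 1 + 1 = v.1
            omega
        have : (∑ u : Fin N, if u.1 + 1 = v.1 then f (v.1 - 1) else 0)
            = (∑ u : Fin N, if u = ⟨v.1 - 1, hlt⟩ then f (v.1 - 1) else 0) := by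
          apply Finset.sum_congr rfl
          intro u _
          exact if_congr (hc u) rfl rfl
        rw [this, Finset.sum_ite_eq' Finset.univ _ (fun _ => f (v.1 - 1)), if_pos (Finset.mem_univ _)]
      · rw [if_neg hv]
        apply Finset.sum_eq_zero
        intro u _
        rw [if_neg (by omega)]
    · by_cases hv : v.1 + 1 < N
      · rw [if_pos hv]
        have hc : ∀ u : Fin N, (v.1 + 1 = u.1) ↔ (u = ⟨v.1 + 1, hv⟩) := by
          intro u
          constructor
          · intro h
            apply Fin.ext
            show u.1 = v.1 + 1
            omega
          · intro h
            subst h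
            rfl
        have : (∑ u : Fin N, if v.1 + 1 = u.1 then - f v.1 else 0)
            = (∑ u : Fin N, if u = ⟨v.1 + 1, hv⟩ then - f v.1 else 0) := by
          apply Finset.sum_congr rfl
          intro u _
          exact if_congr (hc u) rfl rfl
        rw [this, Finset.sum_ite_eq' Finset.univ _ (fun _ => - f v.1), if_pos (Finset.mem_univ _)]
      · rw [if_neg hv]
        apply Finset.sum_eq_zero
        intro u _
        rw [if_neg (by omega)]
  refine ⟨N, hNpos, a, w, hskew, hconn, htree, ?_, ?_⟩
  · -- psi
    intro v
    rcases Nat.eq_zero_or_pos v.1 with hv0 | hvpos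
    · rw [hdeg v, hzero v hv0, if_neg (by omega), if_pos (by omega)]
      have h1 := H1 0 (by omega)
      omega
    · set r := v.1 - 1 with hr
      have hv1 : v.1 = r + 1 := by omega
      obtain ⟨hun, hdisj⟩ := hsplit v r hv1
      have hcardsplit : (L.filter fun i => (a i).1 ≤ r + 1).card
          = (L.filter fun i => (a i).1 ≤ r).card + (L.filter fun i => a i = v).card := by
        rw [hun, Finset.card_union_of_disjoint hdisj]
      have hsumesplit : (∑ i ∈ L.filter fun i => (a i).1 ≤ r + 1, e i)
          = (∑ i ∈ L.filter fun i => (a i).1 ≤ r, e i)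
            + (∑ i ∈ L.filter fun i => a i = v, e i) := by
        rw [hun, Finset.sum_union hdisj]
      have hrlt : r < N - 1 := by have := v.isLt; omega
      have hHr := H1 r hrlt
      by_cases hvtop : v.1 + 1 < N
      · have hHr1 := H1 (r + 1) (by omega)
        rw [← hv1] at hHr1
        rw [hdeg v, if_pos (by omega), if_pos hvtop]
        rw [hv1] at hHr1
        omega
      · have hvN : v.1 = N - 1 := by have := v.isLt; omega
        have hPrtop : (L.filter fun i => (a i).1 ≤ r + 1) = L := by
          rw [show r + 1 = N - 1 by omega]
          exact htop
        rw [hPrtop] at hcardsplit hsumesplit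
        rw [hdeg v, if_pos (by omega), if_neg hvtop]
        omega
  · -- balance
    intro v
    rw [hsumw v, hdeg v]
    rcases Nat.eq_zero_or_pos v.1 with hv0 | hvpos
    · rw [hzero v hv0, hv0, if_neg (by omega), if_pos (by omega), if_neg (by omega),
        if_pos (by omega)]
      simp only [hf]
      push_cast
      ring
    · set r := v.1 - 1 with hr
      have hv1 : v.1 = r + 1 := by omega
      obtain ⟨hun, hdisj⟩ := hsplit v r hv1
      have hcardsplit : (L.filter fun i => (a i).1 ≤ r + 1).card
          = (L.filter fun i => (a i).1 ≤ r).card + (L.filter fun i => a i = v).card := by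
        rw [hun, Finset.card_union_of_disjoint hdisj]
      have hsumxsplit : (∑ i ∈ L.filter fun i => (a i).1 ≤ r + 1, x i)
          = (∑ i ∈ L.filter fun i => (a i).1 ≤ r, x i)
            + (∑ i ∈ L.filter fun i => a i = v, x i) := by
        rw [hun, Finset.sum_union hdisj]
      have hrlt : r < N - 1 := by have := v.isLt; omega
      have hpz : (((L.filter fun i => (a i).1 ≤ r + 1).card : ℕ) : ℤ)
          = ((L.filter fun i => (a i).1 ≤ r).card : ℤ)
            + ((L.filter fun i => a i = v).card : ℤ) := by
        exact_mod_cast hcardsplit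
      have hfval : (if 1 ≤ v.1 then f (v.1 - 1) else 0) = f r := by
        rw [if_pos (by omega), ← hr]
      by_cases hvtop : v.1 + 1 < N
      · rw [hfval, if_pos hvtop, if_pos (by omega), if_pos hvtop]
        simp only [hf]
        rw [hv1]
        push_cast
        push_cast at hpz
        linear_combination (-1 : ℤ) * hsumxsplit + k * hpz
      · have hvN : v.1 = N - 1 := by have := v.isLt; omega
        have hPrtop : (L.filter fun i => (a i).1 ≤ r + 1) = L := by
          rw [show r + 1 = N - 1 by omega]
          exact htop
        rw [hPrtop] at hsumxsplit hpz
        rw [hfval, if_neg hvtop, if_pos (by omega), if_neg hvtop]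
        simp only [hf]
        push_cast
        push_cast at hpz
        linear_combination (-1 : ℤ) * hsumxsplit + hsum + k * hpz



theorem stuckcat {ι : Type} [DecidableEq ι] (k t : ℤ)
    (L : Finset ι) (x : ι → ℤ) (e : ι → ℕ) (N : ℕ) (hN : 2 ≤ N)
    (hnEN : L.card = (∑ i ∈ L, e i) + N + 2)
    (hsum : ∑ i ∈ L, x i = k * ((L.card : ℤ) - 2))
    (C : Finset ι) (hCL : C ⊆ L) (q0 : ℕ) (hq : C.card + q0 = (∑ i ∈ C, e i) + 2)
    (hzero : ∀ i ∈ L, i ∉ C → e i = 0 → x i = t)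
    (hflow : ∀ j : ℕ, j < N - 1 →
      (∑ i ∈ C, x i) + ((q0 + j : ℕ) : ℤ) * t ≠ k * (((C.card : ℤ) + ((q0 + j : ℕ) : ℤ)) - 1)) :
    HasD k L x e := by
  classical
  -- the zero-legs available outside C
  set ZC := (L \ C).filter (fun i => e i = 0) with hZC
  have hcount : q0 + (N - 2) ≤ ZC.card := by
    have h1 : (L \ C).card + C.card = L.card := Finset.card_sdiff_add_card_eq_card hCL
    have h2 : ZC.card + ((L \ C).filter (fun i => ¬ e i = 0)).card = (L \ C).card := by
      rw [hZC]
      exact Finset.card_filter_add_card_filter_not _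
    have h3 : ((L \ C).filter (fun i => ¬ e i = 0)).card
        ≤ ∑ i ∈ (L \ C).filter (fun i => ¬ e i = 0), e i := by
      rw [Finset.card_eq_sum_ones]
      apply Finset.sum_le_sum
      intro i hi
      have := (Finset.mem_filter.mp hi).2
      omega
    have h4 : (∑ i ∈ (L \ C).filter (fun i => ¬ e i = 0), e i) ≤ ∑ i ∈ L \ C, e i :=
      Finset.sum_le_sum_of_subset (Finset.filter_subset _ _)
    have h5 : (∑ i ∈ L \ C, e i) + (∑ i ∈ C, e i) = ∑ i ∈ L, e i :=
      Finset.sum_sdiff hCL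
    omega
  obtain ⟨W, hWsub, hWcard⟩ := Finset.exists_subset_card_eq hcount
  have hWLC : ∀ i ∈ W, i ∈ L ∧ i ∉ C := by
    intro i hi
    have := hWsub hi
    rw [hZC, Finset.mem_filter, Finset.mem_sdiff] at this
    exact ⟨this.1.1, this.1.2⟩
  have hWe : ∀ i ∈ W, e i = 0 := by
    intro i hi
    have := hWsub hi
    rw [hZC, Finset.mem_filter] at this
    exact this.2
  have hWx : ∀ i ∈ W, x i = t := by
    intro i hi
    exact hzero i (hWLC i hi).1 (hWLC i hi).2 (hWe i hi)
  set rk : ι → ℕ := fun i => if h : i ∈ W then ((W.equivFin ⟨i, h⟩ : Fin W.card) : ℕ) else 0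
    with hrk
  have hrklt : ∀ i ∈ W, rk i < q0 + (N - 2) := by
    intro i hi
    rw [hrk]
    simp only [dif_pos hi]
    rw [← hWcard]
    exact (W.equivFin ⟨i, hi⟩).isLt
  have hWfil : ∀ s : ℕ, (W.filter fun i => rk i < s).card = min s W.card := by
    intro s
    rw [Finset.card_filter]
    rw [← Finset.sum_attach W (fun i => if rk i < s then (1:ℕ) else 0)]
    rw [← Finset.univ_eq_attach]
    rw [← Equiv.sum_comp W.equivFin.symm (fun z : {z // z ∈ W} => if rk z.1 < s then (1:ℕ) else 0)]
    have hpt : ∀ v : Fin W.card, (if rk (W.equivFin.symm v).1 < s then (1:ℕ) else 0)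
        = if v.1 < s then 1 else 0 := by
      intro v
      have hmem := (W.equivFin.symm v).2
      have : rk (W.equivFin.symm v).1 = v.1 := by
        rw [hrk]
        simp only [dif_pos hmem]
        congr 1
        have : (⟨(W.equivFin.symm v).1, hmem⟩ : {z // z ∈ W}) = W.equivFin.symm v :=
          Subtype.ext rfl
        rw [this, Equiv.apply_symm_apply]
      rw [this]
    rw [Finset.sum_congr rfl (fun v _ => hpt v)]
    rw [Fin.sum_univ_eq_sum_range (fun j => if j < s then (1:ℕ) else 0)]
    rw [← Finset.card_filter]
    have : (Finset.range W.card).filter (fun j => j < s) = Finset.range (min s W.card) := by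
      ext j
      simp only [Finset.mem_filter, Finset.mem_range, Nat.lt_min]
      omega
    rw [this, Finset.card_range]
  have hNpos : 0 < N := by omega
  -- the assignment
  set aval : ι → ℕ := fun i => if i ∈ C then 0
      else if i ∈ W then (if rk i < q0 then 0 else rk i - q0 + 1) else N - 1 with haval
  have havlt : ∀ i, aval i < N := by
    intro i
    simp only [haval]
    by_cases h1 : i ∈ C
    · rw [if_pos h1]; omega
    · rw [if_neg h1]
      by_cases h2 : i ∈ W
      · rw [if_pos h2]
        have := hrklt i h2
        by_cases h3 : rk i < q0
        · rw [if_pos h3]; omega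
        · rw [if_neg h3]; omega
      · rw [if_neg h2]; omega
  set a : ι → Fin N := fun i => ⟨aval i, havlt i⟩ with ha
  have hav : ∀ i, (a i).1 = aval i := fun _ => rfl
  -- prefix characterization
  have hdisjCW : ∀ s : ℕ, Disjoint C (W.filter fun i => rk i < s) := by
    intro s
    rw [Finset.disjoint_right]
    intro i hi
    exact (hWLC i (Finset.mem_filter.mp hi).1).2
  have hPre : ∀ j : ℕ, j < N - 1 →
      (L.filter fun i => (a i).1 ≤ j) = C ∪ (W.filter fun i => rk i < q0 + j) := by
    intro j hj
    ext i
    simp only [Finset.mem_filter, Finset.mem_union, hav, haval]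
    constructor
    · rintro ⟨hiL, hle⟩
      by_cases h1 : i ∈ C
      · exact Or.inl h1
      · rw [if_neg h1] at hle
        by_cases h2 : i ∈ W
        · rw [if_pos h2] at hle
          refine Or.inr ⟨h2, ?_⟩
          by_cases h3 : rk i < q0
          · omega
          · rw [if_neg h3] at hle; omega
        · rw [if_neg h2] at hle; omega
    · rintro (h1 | h2)
      · refine ⟨hCL h1, ?_⟩
        rw [if_pos h1]
        omega
      · obtain ⟨hiW, hrkij⟩ := h2
        have h1 : i ∉ C := (hWLC i hiW).2
        refine ⟨(hWLC i hiW).1, ?_⟩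
        rw [if_neg h1, if_pos hiW]
        by_cases h3 : rk i < q0
        · rw [if_pos h3]; omega
        · rw [if_neg h3]; omega
  -- cardinalities/sums on prefixes
  have hPcard : ∀ j : ℕ, j < N - 1 →
      (L.filter fun i => (a i).1 ≤ j).card = C.card + (q0 + j) := by
    intro j hj
    rw [hPre j hj, Finset.card_union_of_disjoint (hdisjCW _), hWfil]
    congr 1
    rw [hWcard]
    omega
  have hPe : ∀ j : ℕ, j < N - 1 →
      (∑ i ∈ L.filter fun i => (a i).1 ≤ j, e i) = ∑ i ∈ C, e i := by
    intro j hj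
    rw [hPre j hj, Finset.sum_union (hdisjCW _)]
    have : (∑ i ∈ W.filter (fun i => rk i < q0 + j), e i) = 0 := by
      apply Finset.sum_eq_zero
      intro i hi
      exact hWe i (Finset.mem_filter.mp hi).1
    rw [this, add_zero]
  have hPx : ∀ j : ℕ, j < N - 1 →
      (∑ i ∈ L.filter fun i => (a i).1 ≤ j, x i) = (∑ i ∈ C, x i) + ((q0 + j : ℕ) : ℤ) * t := by
    intro j hj
    rw [hPre j hj, Finset.sum_union (hdisjCW _)]
    congr 1
    have hconst : (∑ i ∈ W.filter (fun i => rk i < q0 + j), x i)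
        = ∑ _i ∈ W.filter (fun i => rk i < q0 + j), t := by
      apply Finset.sum_congr rfl
      intro i hi
      exact hWx i (Finset.mem_filter.mp hi).1
    rw [hconst, Finset.sum_const, hWfil, nsmul_eq_mul]
    congr 1
    rw [hWcard]
    push_cast
    omega
  -- apply cat
  apply cat k L x e N hN hnEN hsum a
  · intro j hj
    rw [hPcard j hj, hPe j hj]
    omega
  · intro j hj
    rw [hPcard j hj, hPx j hj]
    intro hcon
    apply hflow j hj
    push_cast at hcon ⊢
    linear_combination hcon

theorem mergeStep {ι : Type} [DecidableEq ι] (k : ℤ) (L : Finset ι) (x : ι → ℤ) (e : ι → ℕ)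
    (i j : ι) (hi : i ∈ L) (hj : j ∈ L) (hij : i ≠ j) (hei : e i = 0) (hej : e j = 0)
    (hflow : x i + x j ≠ k)
    (H : HasD k (L.erase j) (Function.update x i (x i + x j - k)) e) :
    HasD k L x e := by
  classical
  obtain ⟨N, hN, a', w', hskew', hconn', htree', hpsi', hbal'⟩ := H
  set x' := Function.update x i (x i + x j - k) with hx'
  set F : ℤ := x i + x j - k with hF
  have hFne : F ≠ 0 := sub_ne_zero_of_ne hflow
  set v0 : Fin N := a' i with hv0
  -- new flow
  set w : Fin (N + 1) → Fin (N + 1) → ℤ := fun A B =>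
    Fin.lastCases (Fin.lastCases 0 (fun v => if v = v0 then F else 0) B)
      (fun u => Fin.lastCases (if u = v0 then - F else 0) (fun v => w' u v) B) A with hwdef
  have hw_cc : ∀ u v : Fin N, w u.castSucc v.castSucc = w' u v := by
    intro u v
    rw [hwdef]
    simp only [Fin.lastCases_castSucc]
  have hw_cl : ∀ u : Fin N, w u.castSucc (Fin.last N) = if u = v0 then - F else 0 := by
    intro u
    rw [hwdef]
    simp only [Fin.lastCases_castSucc, Fin.lastCases_last]
  have hw_lc : ∀ v : Fin N, w (Fin.last N) v.castSucc = if v = v0 then F else 0 := by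
    intro v
    rw [hwdef]
    simp only [Fin.lastCases_castSucc, Fin.lastCases_last]
  have hw_ll : w (Fin.last N) (Fin.last N) = 0 := by
    rw [hwdef]
    simp only [Fin.lastCases_last]
  -- new assignment
  set a : ι → Fin (N + 1) := fun l => if l = i ∨ l = j then Fin.last N
      else (a' l).castSucc with hadef
  have hai : a i = Fin.last N := by rw [hadef]; simp
  have haj : a j = Fin.last N := by rw [hadef]; simp
  have hal : ∀ l, l ≠ i → l ≠ j → a l = (a' l).castSucc := by
    intro l h1 h2
    rw [hadef]
    simp only [h1, h2, or_self, if_false]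
  have hcsl : ∀ v : Fin N, v.castSucc ≠ Fin.last N := by
    intro v
    exact Fin.ne_of_lt (Fin.castSucc_lt_last v)
  -- skew
  have hskew : ∀ u v : Fin (N+1), w u v = - w v u := by
    intro u v
    induction u using Fin.lastCases with
    | last =>
      induction v using Fin.lastCases with
      | last => rw [hw_ll]; ring
      | cast v => rw [hw_lc, hw_cl]; split_ifs <;> ring
    | cast u =>
      induction v using Fin.lastCases with
      | last => rw [hw_cl, hw_lc]; split_ifs <;> ring
      | cast v => rw [hw_cc, hw_cc]; exact hskew' u v
  -- legs filters
  have hlegs_last : (L.filter fun l => a l = Fin.last N) = {i, j} := by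
    ext l
    rw [Finset.mem_filter, Finset.mem_insert, Finset.mem_singleton]
    constructor
    · rintro ⟨hlL, hla⟩
      by_cases h1 : l = i
      · exact Or.inl h1
      by_cases h2 : l = j
      · exact Or.inr h2
      rw [hal l h1 h2] at hla
      exact absurd hla (hcsl _)
    · rintro (h | h)
      · subst h; exact ⟨hi, hai⟩
      · subst h; exact ⟨hj, haj⟩
  have hlegs_cast : ∀ v : Fin N, (L.filter fun l => a l = v.castSucc)
      = ((L.erase j).filter fun l => a' l = v).erase i := by
    intro v
    ext l
    rw [Finset.mem_filter, Finset.mem_erase, Finset.mem_filter, Finset.mem_erase]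
    constructor
    · rintro ⟨hlL, hla⟩
      have h1 : l ≠ i := by
        rintro rfl
        rw [hai] at hla
        exact (hcsl v) hla.symm
      have h2 : l ≠ j := by
        rintro rfl
        rw [haj] at hla
        exact (hcsl v) hla.symm
      rw [hal l h1 h2] at hla
      exact ⟨h1, ⟨h2, hlL⟩, Fin.castSucc_injective N hla⟩
    · rintro ⟨h1, ⟨h2, hlL⟩, hla⟩
      refine ⟨hlL, ?_⟩
      rw [hal l h1 h2, hla]
  have hione : ∀ v : Fin N, i ∈ (L.erase j).filter (fun l => a' l = v) ↔ v = v0 := by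
    intro v
    rw [Finset.mem_filter, Finset.mem_erase]
    constructor
    · rintro ⟨_, hv⟩
      rw [← hv, hv0]
    · rintro rfl
      exact ⟨⟨hij, hi⟩, hv0.symm⟩
  -- degree identities
  have hdeg_cast : ∀ v : Fin N,
      (Finset.univ.filter fun u => w u v.castSucc ≠ 0).card
      = (Finset.univ.filter fun u => w' u v ≠ 0).card + (if v = v0 then 1 else 0) := by
    intro v
    rw [Finset.card_filter, Finset.card_filter, Fin.sum_univ_castSucc]
    congr 1
    · apply Finset.sum_congr rfl
      intro u _
      rw [hw_cc]
    · rw [hw_lc]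
      by_cases h : v = v0
      · rw [if_pos h, if_pos h, if_pos hFne]
      · rw [if_neg h, if_neg h, if_neg (by simp)]
  have hdeg_last : (Finset.univ.filter fun u => w u (Fin.last N) ≠ 0).card = 1 := by
    rw [Finset.card_filter, Fin.sum_univ_castSucc]
    have h1 : ∀ u : Fin N, (if w u.castSucc (Fin.last N) ≠ 0 then (1:ℕ) else 0)
        = if u = v0 then 1 else 0 := by
      intro u
      rw [hw_cl]
      by_cases h : u = v0
      · rw [if_pos h, if_pos h, if_pos (neg_ne_zero.mpr hFne)]
      · rw [if_neg h, if_neg h, if_neg (by simp)]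
    rw [Finset.sum_congr rfl (fun u _ => h1 u)]
    rw [Finset.sum_ite_eq' Finset.univ v0 (fun _ => (1:ℕ)), if_pos (Finset.mem_univ _)]
    rw [hw_ll]
    simp
  -- connectivity
  have hconn : (SimpleGraph.fromRel fun u v => w u v ≠ 0).Connected := by
    set G := SimpleGraph.fromRel fun u v => w u v ≠ 0 with hG
    have hmap : ∀ u v : Fin N, (SimpleGraph.fromRel fun a b => w' a b ≠ 0).Adj u v →
        G.Adj u.castSucc v.castSucc := by
      intro u v huv
      rw [SimpleGraph.fromRel_adj] at huv
      rw [hG, SimpleGraph.fromRel_adj]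
      obtain ⟨hne, hor⟩ := huv
      refine ⟨fun hc => hne (Fin.castSucc_injective N hc), ?_⟩
      rw [hw_cc, hw_cc]
      exact hor
    let φ : (SimpleGraph.fromRel fun a b => w' a b ≠ 0) →g G :=
      ⟨fun v => v.castSucc, fun {u v} h => hmap u v h⟩
    have hreach : ∀ u v : Fin N, G.Reachable u.castSucc v.castSucc := by
      intro u v
      exact SimpleGraph.Reachable.map φ (hconn'.preconnected u v)
    have hadjlast : G.Adj (Fin.last N) v0.castSucc := by
      rw [hG, SimpleGraph.fromRel_adj]
      constructor
      · intro hcon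
        exact (hcsl v0) hcon.symm
      · left
        rw [hw_lc, if_pos rfl]
        exact hFne
    rw [SimpleGraph.connected_iff]
    refine ⟨?_, ⟨Fin.last N⟩⟩
    intro A B
    induction A using Fin.lastCases with
    | last =>
      induction B using Fin.lastCases with
      | last => exact SimpleGraph.Reachable.refl _
      | cast v => exact hadjlast.reachable.trans (hreach v0 v)
    | cast u =>
      induction B using Fin.lastCases with
      | last => exact (hreach u v0).trans hadjlast.symm.reachable
      | cast v => exact hreach u v
  -- tree count
  have htree : (Finset.univ.filter fun p : Fin (N+1) × Fin (N+1) => w p.1 p.2 ≠ 0).card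
      = 2 * ((N + 1) - 1) := by
    rw [Finset.card_filter, ← Finset.univ_product_univ, Finset.sum_product]
    rw [Fin.sum_univ_castSucc (f := fun A => ∑ B, if w A B ≠ 0 then (1:ℕ) else 0)]
    have hrow_cast : ∀ u : Fin N, (∑ B, if w u.castSucc B ≠ 0 then (1:ℕ) else 0)
        = (∑ v : Fin N, if w' u v ≠ 0 then (1:ℕ) else 0) + (if u = v0 then 1 else 0) := by
      intro u
      rw [Fin.sum_univ_castSucc]
      congr 1
      · apply Finset.sum_congr rfl
        intro v _
        rw [hw_cc]
      · rw [hw_cl]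
        by_cases h : u = v0
        · rw [if_pos h, if_pos h, if_pos (neg_ne_zero.mpr hFne)]
        · rw [if_neg h, if_neg h, if_neg (by simp)]
    have hrow_last : (∑ B, if w (Fin.last N) B ≠ 0 then (1:ℕ) else 0) = 1 := by
      rw [Fin.sum_univ_castSucc]
      have h1 : ∀ v : Fin N, (if w (Fin.last N) v.castSucc ≠ 0 then (1:ℕ) else 0)
          = if v = v0 then 1 else 0 := by
        intro v
        rw [hw_lc]
        by_cases h : v = v0
        · rw [if_pos h, if_pos h, if_pos hFne]
        · rw [if_neg h, if_neg h, if_neg (by simp)]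
      rw [Finset.sum_congr rfl (fun v _ => h1 v)]
      rw [Finset.sum_ite_eq' Finset.univ v0 (fun _ => (1:ℕ)), if_pos (Finset.mem_univ _)]
      rw [hw_ll]
      simp
    rw [hrow_last, Finset.sum_congr rfl (fun u _ => hrow_cast u), Finset.sum_add_distrib]
    have h1 : (∑ u : Fin N, ∑ v : Fin N, if w' u v ≠ 0 then (1:ℕ) else 0) = 2 * (N - 1) := by
      rw [← htree', Finset.card_filter, ← Finset.univ_product_univ, Finset.sum_product]
    have h2 : (∑ u : Fin N, if u = v0 then (1:ℕ) else 0) = 1 := by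
      rw [Finset.sum_ite_eq' Finset.univ v0 (fun _ => (1:ℕ)), if_pos (Finset.mem_univ _)]
    rw [h1, h2]
    omega
  -- psi
  have hpsi : ∀ v : Fin (N+1),
      (Finset.univ.filter fun u => w u v ≠ 0).card + (L.filter fun l => a l = v).card
      = (∑ l ∈ L.filter fun l => a l = v, e l) + 3 := by
    intro v
    induction v using Fin.lastCases with
    | last =>
      rw [hdeg_last, hlegs_last, Finset.card_pair hij, Finset.sum_pair hij, hei, hej]
    | cast v =>
      have hpv := hpsi' v
      rw [hdeg_cast, hlegs_cast]
      by_cases h : v = v0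
      · have himem : i ∈ (L.erase j).filter fun l => a' l = v := (hione v).mpr h
        have hcard : (((L.erase j).filter fun l => a' l = v).erase i).card + 1
            = ((L.erase j).filter fun l => a' l = v).card := Finset.card_erase_add_one himem
        have hsume : e i + (∑ l ∈ ((L.erase j).filter fun l => a' l = v).erase i, e l)
            = ∑ l ∈ (L.erase j).filter fun l => a' l = v, e l :=
          Finset.add_sum_erase _ e himem
        rw [if_pos h]
        omega
      · have hnimem : i ∉ (L.erase j).filter fun l => a' l = v := fun hc => h ((hione v).mp hc)
        rw [if_neg h, Finset.erase_eq_of_notMem hnimem]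
        omega
  -- balance
  have hbal : ∀ v : Fin (N+1),
      (∑ l ∈ L.filter fun l => a l = v, x l) + (∑ u, w u v)
      = k * ((((Finset.univ.filter fun u => w u v ≠ 0).card
          + (L.filter fun l => a l = v).card : ℕ) : ℤ) - 2) := by
    intro v
    induction v using Fin.lastCases with
    | last =>
      rw [hdeg_last, hlegs_last, Finset.card_pair hij, Finset.sum_pair hij]
      have hsw : (∑ u, w u (Fin.last N)) = - F := by
        rw [Fin.sum_univ_castSucc]
        have h1 : ∀ u : Fin N, w u.castSucc (Fin.last N) = if u = v0 then - F else 0 := hw_cl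
        rw [Finset.sum_congr rfl (fun u _ => h1 u)]
        rw [Finset.sum_ite_eq' Finset.univ v0 (fun _ => - F), if_pos (Finset.mem_univ _), hw_ll]
        ring
      rw [hsw, hF]
      push_cast
      ring
    | cast v =>
      have hbv := hbal' v
      have hsw : (∑ u, w u v.castSucc) = (∑ u, w' u v) + (if v = v0 then F else 0) := by
        rw [Fin.sum_univ_castSucc]
        congr 1
        · apply Finset.sum_congr rfl
          intro u _
          rw [hw_cc]
        · rw [hw_lc]
      rw [hdeg_cast, hlegs_cast, hsw]
      by_cases h : v = v0
      · have himem : i ∈ (L.erase j).filter fun l => a' l = v := (hione v).mpr h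
        have hcard : (((L.erase j).filter fun l => a' l = v).erase i).card + 1
            = ((L.erase j).filter fun l => a' l = v).card := Finset.card_erase_add_one himem
        have hsumx : (∑ l ∈ ((L.erase j).filter fun l => a' l = v).erase i, x' l)
            = (∑ l ∈ (L.erase j).filter fun l => a' l = v, x' l) - x' i :=
          Finset.sum_erase_eq_sub himem
        have hxx : (∑ l ∈ ((L.erase j).filter fun l => a' l = v).erase i, x l)
            = ∑ l ∈ ((L.erase j).filter fun l => a' l = v).erase i, x' l := by
          apply Finset.sum_congr rfl
          intro l hl
          have : l ≠ i := (Finset.mem_erase.mp hl).1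
          rw [hx', Function.update_of_ne this]
        have hxi : x' i = F := by rw [hx', Function.update_self]
        simp only [if_pos h]
        rw [hxx, hsumx, hxi]
        have hrhs : ((((Finset.univ.filter fun u => w' u v ≠ 0).card + 1
            + (((L.erase j).filter fun l => a' l = v).erase i).card : ℕ)) : ℤ) - 2
            = ((((Finset.univ.filter fun u => w' u v ≠ 0).card
            + ((L.erase j).filter fun l => a' l = v).card : ℕ)) : ℤ) - 2 := by
          push_cast
          push_cast at hcard
          omega
        rw [hrhs]
        linarith [hbv]
      · have hnimem : i ∉ (L.erase j).filter fun l => a' l = v := fun hc => h ((hione v).mp hc)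
        have hxx : (∑ l ∈ (L.erase j).filter fun l => a' l = v, x l)
            = ∑ l ∈ (L.erase j).filter fun l => a' l = v, x' l := by
          apply Finset.sum_congr rfl
          intro l hl
          have : l ≠ i := fun hc => hnimem (hc ▸ hl)
          rw [hx', Function.update_of_ne this]
        simp only [if_neg h, add_zero]
        rw [Finset.erase_eq_of_notMem hnimem, hxx]
        exact hbv
  exact ⟨N + 1, Nat.succ_pos N, a, w, hskew, hconn, htree, hpsi, hbal⟩

lemma bad_iff {ι : Type} (I : Finset ι) (m : ι → ℤ) (e : ι → ℕ) :
    (∑ i ∈ I, (m i - (e i : ℤ) - 1)) ≤ -1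
      ↔ ¬ ((∑ i ∈ I, (e i : ℤ)) < (∑ i ∈ I, m i) - I.card + 1) := by
  rw [sum_mel, not_lt]
  omega

lemma all_pairs {ι : Type} [DecidableEq ι] (Z : Finset ι) (x : ι → ℤ) (k : ℤ)
    (h3 : 3 ≤ Z.card)
    (hall : ∀ i ∈ Z, ∀ j ∈ Z, i ≠ j → x i + x j = k) : ∀ i ∈ Z, x i + x i = k := by
  intro i hi
  have h1 : 1 < (Z.erase i).card := by
    have := Finset.card_erase_add_one hi
    omega
  obtain ⟨a2, ha2, b2, hb2, hab⟩ := Finset.one_lt_card.mp h1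
  have haZ : a2 ∈ Z := Finset.mem_of_mem_erase ha2
  have hbZ : b2 ∈ Z := Finset.mem_of_mem_erase hb2
  have hia : i ≠ a2 := fun hc => (Finset.mem_erase.mp ha2).1 hc.symm
  have hib : i ≠ b2 := fun hc => (Finset.mem_erase.mp hb2).1 hc.symm
  have e1 := hall i hi a2 haZ hia
  have e2 := hall i hi b2 hbZ hib
  have e3 := hall a2 haZ b2 hbZ hab
  linarith

theorem master {ι : Type} [DecidableEq ι] (k : ℤ) (hk : 0 < k) :
    ∀ (n : ℕ) (L : Finset ι) (x : ι → ℤ) (e : ι → ℕ), L.card = n → 3 ≤ n →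
    (∑ i ∈ L, x i) = k * ((n : ℤ) - 2) →
    ((∑ i ∈ L, e i : ℕ) : ℤ) ≤ (n : ℤ) - 3 →
    ¬ GoodF k L x e → HasD k L x e := by
  intro n
  induction n using Nat.strong_induction_on with
  | _ n IH =>
  intro L x e hcard hn3 hsum he hng
  set E := ∑ i ∈ L, e i with hE
  have heE : E + 3 ≤ n := by
    have h1 : (E : ℤ) + 3 ≤ (n : ℤ) := by linarith
    exact_mod_cast h1
  by_cases hbase : n = E + 3
  · apply single k L x e
    · rw [hcard, ← hE]; omega
    · rw [hcard]; exact hsum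
  · have hE4 : E + 4 ≤ n := by omega
    -- merge step helper
    have hstep : ∀ i j : ι, i ∈ L → j ∈ L → i ≠ j → e i = 0 → e j = 0 → x i + x j ≠ k →
        ¬ GoodF k (L.erase j) (Function.update x i (x i + x j - k)) e → HasD k L x e := by
      intro i j hi hj hij hei hej hflow hng'
      apply mergeStep k L x e i j hi hj hij hei hej hflow
      have hiej : i ∈ L.erase j := Finset.mem_erase.mpr ⟨hij, hi⟩
      have hcard' : (L.erase j).card = n - 1 := by
        rw [Finset.card_erase_of_mem hj, hcard]
      apply IH (n - 1) (by omega) (L.erase j) _ e hcard' (by omega) _ _ hng'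
      · -- sum of x'
        rw [Finset.sum_update_of_mem hiej]
        have hsd : (L.erase j) \ {i} = (L.erase j).erase i :=
          (Finset.erase_eq _ _).symm
        rw [hsd, Finset.sum_erase_eq_sub hiej, Finset.sum_erase_eq_sub hj]
        have hn1 : ((n - 1 : ℕ) : ℤ) = (n : ℤ) - 1 := by omega
        rw [hn1]
        linarith
      · -- sum of e
        have hadd : e j + (∑ l ∈ L.erase j, e l) = E := Finset.add_sum_erase L e hj
        have hsume : (∑ l ∈ L.erase j, e l) = E := by omega
        rw [hsume]
        have hn1 : ((n - 1 : ℕ) : ℤ) = (n : ℤ) - 1 := by omega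
        rw [hn1]
        have : (E : ℤ) + 4 ≤ (n : ℤ) := by exact_mod_cast hE4
        linarith
    -- zeros
    set Z := L.filter (fun i => e i = 0) with hZ
    have hZL : Z ⊆ L := Finset.filter_subset _ _
    have hZmem : ∀ i ∈ Z, i ∈ L ∧ e i = 0 := by
      intro i hi
      rw [hZ, Finset.mem_filter] at hi
      exact hi
    have hZcard : 4 ≤ Z.card := by
      have h2 : Z.card + (L.filter (fun i => ¬ e i = 0)).card = n := by
        rw [hZ, ← hcard]
        exact Finset.card_filter_add_card_filter_not _
      have h3 : (L.filter (fun i => ¬ e i = 0)).card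
          ≤ ∑ i ∈ L.filter (fun i => ¬ e i = 0), e i := by
        rw [Finset.card_eq_sum_ones]
        apply Finset.sum_le_sum
        intro i hi
        have := (Finset.mem_filter.mp hi).2
        omega
      have h4 : (∑ i ∈ L.filter (fun i => ¬ e i = 0), e i) ≤ E :=
        Finset.sum_le_sum_of_subset (Finset.filter_subset _ _)
      omega
    rcases Int.even_or_odd k with hkeven | hkodd
    · -- Even
      obtain ⟨t, ht2⟩ := hkeven
      have htpos : 0 < t := by linarith
      have htne : t ≠ 0 := ne_of_gt htpos
      by_cases hdiv : ∀ i ∈ L, t ∣ x i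
      · -- all divisible
        set m : ι → ℤ := fun i => x i / t with hm
        have hxm : ∀ i ∈ L, x i = t * m i := by
          intro i hi
          rw [hm]
          exact (Int.mul_ediv_cancel' (hdiv i hi)).symm
        -- uniqueness of divisibility witnesses
        have hmuniq : ∀ (l : ι), l ∈ L → ∀ c : ℤ, 2 * x l = c * k → c = m l := by
          intro l hl c hc
          apply mul_left_cancel₀ (a := 2 * t) (by positivity)
          rw [hxm l hl, ht2] at hc
          linarith
        -- a bad set exists
        have hbad : ∃ I ⊆ L, (∑ i ∈ I, (m i - (e i : ℤ) - 1)) ≤ -1 := by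
          by_contra hno
          push_neg at hno
          apply hng
          refine ⟨⟨t, ht2⟩, m, ?_, ?_⟩
          · intro i hi
            constructor
            · have h1 := hno {i} (by simpa using hi)
              rw [Finset.sum_singleton] at h1
              have h2 : (0:ℤ) ≤ (e i : ℤ) := Int.natCast_nonneg _
              linarith
            · rw [hxm i hi, ht2]; ring
          · intro I hIL
            have h1 := hno I hIL
            rw [sum_mel] at h1
            linarith
        obtain ⟨I0, hI0L, hI0bad⟩ := hbad
        -- strip neutral elements
        set Ibar := I0.filter (fun i => 1 ≤ e i ∨ m i ≤ 0) with hIbar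
        have hIbarL : Ibar ⊆ L := fun l hl => hI0L (Finset.mem_of_mem_filter l hl)
        have hIbarbad : (∑ i ∈ Ibar, (m i - (e i : ℤ) - 1)) ≤ -1 := by
          have hsplit := Finset.sum_filter_add_sum_filter_not I0
            (fun i => 1 ≤ e i ∨ m i ≤ 0) (fun i => m i - (e i : ℤ) - 1)
          have hnn : 0 ≤ ∑ i ∈ I0.filter (fun i => ¬ (1 ≤ e i ∨ m i ≤ 0)),
              (m i - (e i : ℤ) - 1) := by
            apply Finset.sum_nonneg
            intro i hi
            have h2 := (Finset.mem_filter.mp hi).2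
            push_neg at h2
            have h3 : (e i : ℤ) = 0 := by exact_mod_cast (by omega : e i = 0)
            have h4 : 1 ≤ m i := h2.2
            linarith
          rw [hIbar]
          linarith
        have hIprop : ∀ i ∈ Ibar, 1 ≤ e i ∨ m i ≤ 0 := by
          intro i hi
          exact (Finset.mem_filter.mp hi).2
        by_cases hb1 : ∃ i ∈ Z, ∃ j ∈ Z, i ∉ Ibar ∧ j ∉ Ibar ∧ i ≠ j ∧ x i + x j ≠ k
        · obtain ⟨i, hiZ, j, hjZ, hiI, hjI, hij, hfl⟩ := hb1
          apply hstep i j (hZmem i hiZ).1 (hZmem j hjZ).1 hij (hZmem i hiZ).2 (hZmem j hjZ).2 hfl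
          rintro ⟨_, m'', hdiv'', hgood''⟩
          have hIbsub : Ibar ⊆ L.erase j := by
            intro l hl
            exact Finset.mem_erase.mpr ⟨fun hc => hjI (hc ▸ hl), hIbarL hl⟩
          have hmeq : ∀ l ∈ Ibar, m'' l = m l := by
            intro l hl
            have hlL := hIbarL hl
            have hne : l ≠ i := fun hc => hiI (hc ▸ hl)
            have hd := (hdiv'' l (hIbsub hl)).2
            rw [Function.update_of_ne hne] at hd
            exact hmuniq l hlL (m'' l) hd
          have hg := hgood'' Ibar hIbsub
          rw [Finset.sum_congr rfl (fun l hl => hmeq l hl)] at hg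
          rw [sum_mel] at hIbarbad
          linarith
        · by_cases hb2 : ∃ i ∈ Z, ∃ j ∈ Z, i ∈ Ibar ∧ j ∈ Ibar ∧ i ≠ j
          · obtain ⟨i, hiZ, j, hjZ, hiI, hjI, hij⟩ := hb2
            have hmi : m i ≤ 0 := by
              rcases hIprop i hiI with h | h
              · have := (hZmem i hiZ).2; omega
              · exact h
            have hmj : m j ≤ 0 := by
              rcases hIprop j hjI with h | h
              · have := (hZmem j hjZ).2; omega
              · exact h
            have hfl : x i + x j ≠ k := by
              rw [hxm i (hZmem i hiZ).1, hxm j (hZmem j hjZ).1, ht2]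
              have h1 : t * m i ≤ t * 0 := mul_le_mul_of_nonneg_left hmi htpos.le
              have h2 : t * m j ≤ t * 0 := mul_le_mul_of_nonneg_left hmj htpos.le
              rw [mul_zero] at h1 h2
              intro hcon
              linarith
            apply hstep i j (hZmem i hiZ).1 (hZmem j hjZ).1 hij (hZmem i hiZ).2 (hZmem j hjZ).2 hfl
            rintro ⟨_, m'', hdiv'', hgood''⟩
            set J := Ibar.erase j with hJ
            have hJsub : J ⊆ L.erase j := by
              intro l hl
              exact Finset.mem_erase.mpr ⟨(Finset.mem_erase.mp hl).1,
                hIbarL (Finset.mem_of_mem_erase hl)⟩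
            have hiJ : i ∈ J := Finset.mem_erase.mpr ⟨hij, hiI⟩
            have hmeq : ∀ l ∈ J, l ≠ i → m'' l = m l := by
              intro l hl hne
              have hd := (hdiv'' l (hJsub hl)).2
              rw [Function.update_of_ne hne] at hd
              exact hmuniq l (hIbarL (Finset.mem_of_mem_erase hl)) _ hd
            have hmi'' : m'' i = m i + m j - 2 := by
              have hd := (hdiv'' i (hJsub hiJ)).2
              rw [Function.update_self] at hd
              apply mul_left_cancel₀ (a := 2 * t) (by positivity)
              rw [hxm i (hZmem i hiZ).1, hxm j (hZmem j hjZ).1, ht2] at hd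
              linarith
            have hsm : (∑ l ∈ J, m'' l) = (∑ l ∈ J, m l) + (m j - 2) := by
              rw [← Finset.add_sum_erase J m'' hiJ, ← Finset.add_sum_erase J m hiJ, hmi'']
              have heq2 : (∑ l ∈ J.erase i, m'' l) = ∑ l ∈ J.erase i, m l :=
                Finset.sum_congr rfl (fun l hl =>
                  hmeq l (Finset.mem_of_mem_erase hl) (Finset.mem_erase.mp hl).1)
              rw [heq2]
              ring
            have hg := hgood'' J hJsub
            rw [hsm] at hg
            have h1 : (∑ l ∈ J, m l) = (∑ l ∈ Ibar, m l) - m j := Finset.sum_erase_eq_sub hjI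
            have h2 : (∑ l ∈ J, (e l : ℤ)) = (∑ l ∈ Ibar, (e l : ℤ)) - (e j : ℤ) :=
              Finset.sum_erase_eq_sub hjI
            have h3 : (J.card : ℤ) = (Ibar.card : ℤ) - 1 := by
              have hh := Finset.card_erase_add_one hjI
              rw [hJ]
              omega
            have hej0 : ((e j : ℕ) : ℤ) = 0 := by
              have := (hZmem j hjZ).2
              exact_mod_cast this
            rw [sum_mel] at hIbarbad
            rw [h1, h2, h3, hej0] at hg
            linarith
          · -- b3
            have hpairs : ∀ i ∈ Z, ∀ j ∈ Z, i ∉ Ibar → j ∉ Ibar → i ≠ j → x i + x j = k := by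
              intro i hi j hj h1 h2 h3
              by_contra hc
              exact hb1 ⟨i, hi, j, hj, h1, h2, h3, hc⟩
            set Z' := Z \ Ibar with hZ'
            have hZ'Z : Z' ⊆ Z := Finset.sdiff_subset
            have hZ'card : 3 ≤ Z'.card := by
              have h1 := Finset.card_sdiff_add_card_inter Z Ibar
              have h2 : (Z ∩ Ibar).card ≤ 1 := by
                rw [Finset.card_le_one]
                intro a ha b hb
                by_contra hab
                exact hb2 ⟨a, (Finset.mem_inter.mp ha).1, b, (Finset.mem_inter.mp hb).1,
                  (Finset.mem_inter.mp ha).2, (Finset.mem_inter.mp hb).2, hab⟩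
              rw [hZ']
              omega
            have hall' : ∀ a ∈ Z', ∀ b ∈ Z', a ≠ b → x a + x b = k := by
              intro a ha b hb hab
              exact hpairs a (Finset.mem_sdiff.mp ha).1 b (Finset.mem_sdiff.mp hb).1
                (Finset.mem_sdiff.mp ha).2 (Finset.mem_sdiff.mp hb).2 hab
            have hZ'x : ∀ i ∈ Z', x i = t := by
              intro i hi
              have h1 := all_pairs Z' x k hZ'card hall' i hi
              have h2 : (2:ℤ) * x i = 2 * t := by rw [ht2] at h1; linarith
              exact mul_left_cancel₀ two_ne_zero h2
            have hZ'm : ∀ i ∈ Z', m i = 1 := by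
              intro i hi
              have h1 := hZ'x i hi
              have h2 := hxm i (hZL (hZ'Z hi))
              apply mul_left_cancel₀ htne
              rw [← h2, h1]
              ring
            by_cases hb3a : ∃ i0, i0 ∈ Z ∩ Ibar
            · obtain ⟨i0, hi0⟩ := hb3a
              have hi0Z : i0 ∈ Z := (Finset.mem_inter.mp hi0).1
              have hi0I : i0 ∈ Ibar := (Finset.mem_inter.mp hi0).2
              have hmi0 : m i0 ≤ 0 := by
                rcases hIprop i0 hi0I with h | h
                · have := (hZmem i0 hi0Z).2; omega
                · exact h
              obtain ⟨j0, hj0⟩ := Finset.card_pos.mp (show 0 < Z'.card by omega)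
              have hj0Z : j0 ∈ Z := (Finset.mem_sdiff.mp hj0).1
              have hj0I : j0 ∉ Ibar := (Finset.mem_sdiff.mp hj0).2
              have hne : i0 ≠ j0 := fun hc => hj0I (hc ▸ hi0I)
              have hmj0 : m j0 = 1 := hZ'm j0 hj0
              have hfl : x i0 + x j0 ≠ k := by
                rw [hxm i0 (hZmem i0 hi0Z).1, hxm j0 (hZmem j0 hj0Z).1, hmj0, ht2]
                intro hcon
                have h1 : m i0 = 1 := by
                  apply mul_left_cancel₀ htne
                  linarith
                omega
              apply hstep i0 j0 (hZmem i0 hi0Z).1 (hZmem j0 hj0Z).1 hne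
                (hZmem i0 hi0Z).2 (hZmem j0 hj0Z).2 hfl
              rintro ⟨_, m'', hdiv'', hgood''⟩
              have hIsub : Ibar ⊆ L.erase j0 := by
                intro l hl
                exact Finset.mem_erase.mpr ⟨fun hc => hj0I (hc ▸ hl), hIbarL hl⟩
              have hmeq : ∀ l ∈ Ibar, l ≠ i0 → m'' l = m l := by
                intro l hl hne2
                have hd := (hdiv'' l (hIsub hl)).2
                rw [Function.update_of_ne hne2] at hd
                exact hmuniq l (hIbarL hl) _ hd
              have hmi'' : m'' i0 = m i0 - 1 := by
                have hd := (hdiv'' i0 (hIsub hi0I)).2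
                rw [Function.update_self] at hd
                apply mul_left_cancel₀ (a := 2 * t) (by positivity)
                rw [hxm i0 (hZmem i0 hi0Z).1, hxm j0 (hZmem j0 hj0Z).1, hmj0, ht2] at hd
                linarith
              have hsm : (∑ l ∈ Ibar, m'' l) = (∑ l ∈ Ibar, m l) - 1 := by
                rw [← Finset.add_sum_erase Ibar m'' hi0I, ← Finset.add_sum_erase Ibar m hi0I,
                  hmi'']
                have heq2 : (∑ l ∈ Ibar.erase i0, m'' l) = ∑ l ∈ Ibar.erase i0, m l :=
                  Finset.sum_congr rfl (fun l hl =>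
                    hmeq l (Finset.mem_of_mem_erase hl) (Finset.mem_erase.mp hl).1)
                rw [heq2]
                ring
              have hg := hgood'' Ibar hIsub
              rw [hsm] at hg
              rw [sum_mel] at hIbarbad
              linarith
            · -- stuck-B
              have hZI : ∀ i ∈ Z, i ∉ Ibar := by
                intro i hi hc
                exact hb3a ⟨i, Finset.mem_inter.mpr ⟨hi, hc⟩⟩
              have hIe : ∀ i ∈ Ibar, 1 ≤ e i := by
                intro i hi
                rcases hIprop i hi with h | h
                · exact h
                · by_contra hc
                  have he0 : e i = 0 := by omega
                  exact hZI i (Finset.mem_filter.mpr ⟨hIbarL hi, he0⟩) hi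
              have hcle : Ibar.card ≤ ∑ i ∈ Ibar, e i := by
                rw [Finset.card_eq_sum_ones]
                exact Finset.sum_le_sum (fun i hi => hIe i hi)
              have hcs : ((∑ i ∈ Ibar, e i : ℕ) : ℤ) = ∑ i ∈ Ibar, (e i : ℤ) :=
                Nat.cast_sum _ _
              apply stuckcat k t L x e (n - 2 - E) (by omega) (by omega) (by rw [hcard]; exact hsum)
                Ibar hIbarL ((∑ i ∈ Ibar, e i) + 2 - Ibar.card) (by omega) ?_ ?_
              · intro i hiL hiC hie
                have hiZ : i ∈ Z := Finset.mem_filter.mpr ⟨hiL, hie⟩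
                exact hZ'x i (Finset.mem_sdiff.mpr ⟨hiZ, hZI i hiZ⟩)
              · intro j hj hcon
                rw [sum_mel] at hIbarbad
                have hxC : (∑ i ∈ Ibar, x i) = t * (∑ i ∈ Ibar, m i) := by
                  rw [Finset.mul_sum]
                  exact Finset.sum_congr rfl (fun i hi => hxm i (hIbarL hi))
                have hcast1 : (((∑ i ∈ Ibar, e i) + 2 - Ibar.card + j : ℕ) : ℤ)
                    = (∑ i ∈ Ibar, (e i : ℤ)) + 2 - (Ibar.card : ℤ) + (j : ℤ) := by
                  rw [← hcs]
                  omega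
                rw [hcast1, hxC, ht2] at hcon
                have h2 : t * ((∑ i ∈ Ibar, m i) + ((∑ i ∈ Ibar, (e i : ℤ)) + 2
                    - (Ibar.card : ℤ) + (j : ℤ)))
                    = t * (2 * ((∑ i ∈ Ibar, (e i : ℤ)) + (j : ℤ) + 1)) := by
                  linear_combination hcon
                have h3 := mul_left_cancel₀ htne h2
                have hj0 : (0:ℤ) ≤ (j:ℤ) := Int.natCast_nonneg _
                linarith
      · -- some non-divisible leg
        push_neg at hdiv
        obtain ⟨l0, hl0L, hl0nd⟩ := hdiv
        have htk : t ∣ k := ⟨2, by linarith⟩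
        by_cases ha1 : ∃ i ∈ Z, ∃ j ∈ Z, i ≠ j ∧ ¬ t ∣ (x i + x j)
        · obtain ⟨i, hiZ, j, hjZ, hij, hnd⟩ := ha1
          have hfl : x i + x j ≠ k := by
            intro hcon
            rw [hcon] at hnd
            exact hnd htk
          apply hstep i j (hZmem i hiZ).1 (hZmem j hjZ).1 hij (hZmem i hiZ).2 (hZmem j hjZ).2 hfl
          rintro ⟨_, m'', hdiv'', _⟩
          have hiej : i ∈ L.erase j := Finset.mem_erase.mpr ⟨hij, (hZmem i hiZ).1⟩
          have hd := (hdiv'' i hiej).2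
          rw [Function.update_self] at hd
          apply hnd
          refine ⟨m'' i + 2, ?_⟩
          apply mul_left_cancel₀ (a := (2:ℤ)) two_ne_zero
          rw [ht2] at hd
          linarith
        · push_neg at ha1
          by_cases hlZ : e l0 = 0
          · -- every zero is non-divisible
            have hl0Z : l0 ∈ Z := Finset.mem_filter.mpr ⟨hl0L, hlZ⟩
            have hznd : ∀ z ∈ Z, ¬ t ∣ x z := by
              intro z hz hdvd
              by_cases hzl : z = l0
              · subst hzl; exact hl0nd hdvd
              · have h1 := ha1 z hz l0 hl0Z hzl
                have h2 : t ∣ (x z + x l0) - x z := Dvd.dvd.sub h1 hdvd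
                simp at h2
                exact hl0nd h2
            by_cases hpair : ∃ i ∈ Z, ∃ j ∈ Z, i ≠ j ∧ x i + x j ≠ k
            · obtain ⟨i, hiZ, j, hjZ, hij, hfl⟩ := hpair
              apply hstep i j (hZmem i hiZ).1 (hZmem j hjZ).1 hij
                (hZmem i hiZ).2 (hZmem j hjZ).2 hfl
              rintro ⟨_, m'', hdiv'', _⟩
              -- pick a third zero
              have hzth : 0 < ((Z.erase i).erase j).card := by
                have c1 := Finset.card_erase_add_one hiZ
                have c2 : j ∈ Z.erase i := Finset.mem_erase.mpr ⟨fun hc => hij hc.symm, hjZ⟩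
                have c3 := Finset.card_erase_add_one c2
                omega
              obtain ⟨z, hzmem⟩ := Finset.card_pos.mp hzth
              have hzj : z ≠ j := (Finset.mem_erase.mp hzmem).1
              have hzi : z ≠ i := (Finset.mem_erase.mp (Finset.mem_of_mem_erase hzmem)).1
              have hzZ : z ∈ Z := Finset.mem_of_mem_erase (Finset.mem_of_mem_erase hzmem)
              have hzL' : z ∈ L.erase j := Finset.mem_erase.mpr ⟨hzj, (hZmem z hzZ).1⟩
              have hd := (hdiv'' z hzL').2
              rw [Function.update_of_ne hzi] at hd
              apply hznd z hzZ
              refine ⟨m'' z, ?_⟩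
              apply mul_left_cancel₀ (a := (2:ℤ)) two_ne_zero
              rw [ht2] at hd
              linarith
            · push_neg at hpair
              exfalso
              obtain ⟨z, hzZ⟩ := Finset.card_pos.mp (show 0 < Z.card by omega)
              have h1 := all_pairs Z x k (by omega) hpair z hzZ
              apply hznd z hzZ
              refine ⟨1, ?_⟩
              apply mul_left_cancel₀ (a := (2:ℤ)) two_ne_zero
              rw [ht2] at h1
              linarith
          · -- l0 has e ≥ 1
            by_cases hpair : ∃ i ∈ Z, ∃ j ∈ Z, i ≠ j ∧ x i + x j ≠ k
            · obtain ⟨i, hiZ, j, hjZ, hij, hfl⟩ := hpair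
              apply hstep i j (hZmem i hiZ).1 (hZmem j hjZ).1 hij
                (hZmem i hiZ).2 (hZmem j hjZ).2 hfl
              rintro ⟨_, m'', hdiv'', _⟩
              have hl0j : l0 ≠ j := by
                intro hc
                rw [hc] at hlZ
                exact hlZ (hZmem j hjZ).2
              have hl0i : l0 ≠ i := by
                intro hc
                rw [hc] at hlZ
                exact hlZ (hZmem i hiZ).2
              have hl0e : l0 ∈ L.erase j := Finset.mem_erase.mpr ⟨hl0j, hl0L⟩
              have hd := (hdiv'' l0 hl0e).2
              rw [Function.update_of_ne hl0i] at hd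
              apply hl0nd
              refine ⟨m'' l0, ?_⟩
              apply mul_left_cancel₀ (a := (2:ℤ)) two_ne_zero
              rw [ht2] at hd
              linarith
            · push_neg at hpair
              have hzx : ∀ z ∈ Z, x z = t := by
                intro z hzZ
                have h1 := all_pairs Z x k (by omega) hpair z hzZ
                apply mul_left_cancel₀ (a := (2:ℤ)) two_ne_zero
                rw [ht2] at h1
                linarith
              apply stuckcat k t L x e (n - 2 - E) (by omega) (by omega)
                (by rw [hcard]; exact hsum) {l0} (by simpa using hl0L) (e l0 + 1)
                (by rw [Finset.card_singleton, Finset.sum_singleton]; omega) ?_ ?_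
              · intro i hiL hiC hie
                exact hzx i (Finset.mem_filter.mpr ⟨hiL, hie⟩)
              · intro j hj hcon
                simp only [Finset.sum_singleton, Finset.card_singleton] at hcon
                rw [ht2] at hcon
                apply hl0nd
                refine ⟨(2 * (1 + ((e l0 + 1 + j : ℕ) : ℤ)- 1) - ((e l0 + 1 + j : ℕ) : ℤ)), ?_⟩
                linear_combination hcon
    · -- Odd k
      by_cases hpair : ∃ i ∈ Z, ∃ j ∈ Z, i ≠ j ∧ x i + x j ≠ k
      · obtain ⟨i, hiZ, j, hjZ, hij, hfl⟩ := hpair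
        have hiL := (Finset.mem_filter.mp (show i ∈ L.filter (fun i => e i = 0) from hiZ)).1
        apply hstep i j (Finset.mem_filter.mp hiZ).1 (Finset.mem_filter.mp hjZ).1 hij
          (Finset.mem_filter.mp hiZ).2 (Finset.mem_filter.mp hjZ).2 hfl
        rintro ⟨hev, _⟩
        rw [← Int.not_odd_iff_even] at hev
        exact hev hkodd
      · push_neg at hpair
        exfalso
        obtain ⟨z, hzZ⟩ := Finset.card_pos.mp (show 0 < Z.card by omega)
        have h1 := all_pairs Z x k (by omega) hpair z hzZ
        exact (Int.not_odd_iff_even.mpr ⟨x z, h1.symm⟩) hkodd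
end LeakyAux

/-- Let `k > 0`, `n ≥ 3`, `x : Fin n → ℤ` with
`∑ x i = k * (n - 2)`, and `e : Fin n → ℕ` with `∑ e i ≤ n - 3`. Then no
genus-zero leaky cover datum for leaking `k`, degree `x`, and Psi-conditions
`e` exists if and only if `k` is even, every `x i` is a positive multiple
of `k/2` (integrally: `2 * x i = m i * k` with `m i ≥ 1`), and for every
subset `I` one has `∑_{i ∈ I} e i < (∑_{i ∈ I} m i) - #I + 1`. -/



theorem leaky_descendant_vanishing_classification (k : ℤ) (hk : 0 < k)
    (n : ℕ) (hn : 3 ≤ n) (x : Fin n → ℤ)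
    (hsum : ∑ i, x i = k * ((n : ℤ) - 2))
    (e : Fin n → ℕ) (he : (∑ i, (e i : ℤ)) ≤ (n : ℤ) - 3) :
    IsEmpty (LeakyCoverDatum k x e) ↔
      (Even k ∧ ∃ m : Fin n → ℤ,
        (∀ i, 1 ≤ m i ∧ 2 * x i = m i * k) ∧
        ∀ I : Finset (Fin n),
          (∑ i ∈ I, (e i : ℤ)) < (∑ i ∈ I, m i) - (I.card : ℤ) + 1) := by
  classical
  constructor
  · intro hempty
    by_contra hng
    have hngF : ¬ LeakyAux.GoodF k (Finset.univ : Finset (Fin n)) x e := by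
      rintro ⟨hev, m, hm, hI⟩
      exact hng ⟨hev, m, fun i => hm i (Finset.mem_univ i), fun I => hI I (Finset.subset_univ I)⟩
    have hD := LeakyAux.master k hk n Finset.univ x e (by simp) hn (by simpa using hsum)
      (by simpa using he) hngF
    obtain ⟨N, hN, a, w, hskew, hconn, htree, hpsi, hbal⟩ := hD
    exact hempty.false ⟨N, hN, a, w, hskew, hconn, htree, hpsi, hbal⟩
  · rintro ⟨hev, m, hm, hI⟩
    constructor
    intro D
    obtain ⟨t, ht2⟩ := hev
    have htpos : 0 < t := by linarith
    have hne : (Finset.univ : Finset (Fin D.N)).Nonempty := ⟨⟨0, D.Npos⟩, Finset.mem_univ _⟩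
    have hedge : (((Finset.univ : Finset (Fin D.N)) ×ˢ Finset.univ).filter
        fun p => D.w p.1 p.2 ≠ 0).card ≤ 2 * ((Finset.univ : Finset (Fin D.N)).card - 1) := by
      have h0 : (((Finset.univ : Finset (Fin D.N)) ×ˢ Finset.univ).filter
          fun p => D.w p.1 p.2 ≠ 0).card
          = (Finset.univ.filter fun p : Fin D.N × Fin D.N => D.w p.1 p.2 ≠ 0).card :=
        congrArg (fun s : Finset (Fin D.N × Fin D.N) => (s.filter fun p => D.w p.1 p.2 ≠ 0).card)
          Finset.univ_product_univ
      rw [h0, D.tree, Finset.card_univ, Fintype.card_fin]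
    have hxm : ∀ i : Fin n, x i = t * m i := by
      intro i
      have h1 := (hm i).2
      apply mul_left_cancel₀ (a := (2:ℤ)) two_ne_zero
      rw [ht2] at h1
      linarith
    have hbl : ∀ v ∈ (Finset.univ : Finset (Fin D.N)),
        t * (∑ i ∈ Finset.univ.filter fun i => D.a i = v, m i)
          + (∑ u ∈ Finset.univ, D.w u v)
        = 2 * t * ((∑ i ∈ Finset.univ.filter fun i => D.a i = v, (e i : ℤ)) + 1) := by
      intro v _
      have hb := D.balance v
      have hp := D.psi v
      have hxs : (∑ i ∈ Finset.univ.filter fun i => D.a i = v, x i)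
          = t * (∑ i ∈ Finset.univ.filter fun i => D.a i = v, m i) := by
        rw [Finset.mul_sum]
        exact Finset.sum_congr rfl (fun i _ => hxm i)
      have hcast : ((((Finset.univ.filter fun u => D.w u v ≠ 0).card
          + (Finset.univ.filter fun i => D.a i = v).card : ℕ)) : ℤ)
          = (∑ i ∈ Finset.univ.filter fun i => D.a i = v, (e i : ℤ)) + 3 := by
        rw [hp]
        push_cast
        ring
      rw [hxs, hcast] at hb
      linear_combination hb + ((∑ i ∈ Finset.univ.filter fun i => D.a i = v, (e i : ℤ)) + 1) * ht2
    have hps : ∀ v ∈ (Finset.univ : Finset (Fin D.N)),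
        (Finset.univ.filter fun u => D.w u v ≠ 0).card
          + (Finset.univ.filter fun i => D.a i = v).card
        = (∑ i ∈ Finset.univ.filter fun i => D.a i = v, e i) + 3 := fun v _ => D.psi v
    obtain ⟨I, hIu, hIbad⟩ := LeakyAux.lemA t htpos (Finset.univ : Finset (Fin D.N)).card
      Finset.univ rfl hne Finset.univ D.a m e D.w D.skew hedge hps hbl
    rw [LeakyAux.bad_iff] at hIbad
    exact hIbad (hI I)
end

section
/- Let k ∈ ℤ, n ≥ 3, and x : Fin n → ℤ. If there exists a genus-zero leaky cover datum for leaking k, degree x, and Psi-conditions e = 0 (every vertex trivalent), then for every e : Fin n → ℕ with Σ_i e_i ≤ n − 3 there exists a genus-zero leaky cover datum for leaking k, degree x, and Psi-conditions e. -/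
open Finset in
lemma leaky_no_triangle {N : ℕ} (w : Fin N → Fin N → ℤ)
    (skew : ∀ u v, w u v = - w v u)
    (conn : (SimpleGraph.fromRel fun u v => w u v ≠ 0).Connected)
    (tree : (Finset.univ.filter fun p : Fin N × Fin N => w p.1 p.2 ≠ 0).card = 2 * (N - 1)) :
    ∀ u v y : Fin N, w u v ≠ 0 → w u y ≠ 0 → w v y ≠ 0 → False := by
  classical
  set G := SimpleGraph.fromRel fun u v => w u v ≠ 0 with hG
  have wzz : ∀ z, w z z = 0 := fun z => by have := skew z z; omega
  have adj_iff : ∀ z y, G.Adj z y ↔ w z y ≠ 0 := by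
    intro z y
    rw [hG, SimpleGraph.fromRel_adj]
    constructor
    · rintro ⟨hne, h | h⟩
      · exact h
      · rw [skew z y]; simpa using h
    · intro h
      refine ⟨?_, Or.inl h⟩
      rintro rfl; exact h (wzz z)
  intro u v y huv huy hvy
  -- distances to root u
  set root := u with hroot
  set d : Fin N → ℕ := fun z => G.dist z root with hd
  have hnext : ∀ z : Fin N, ∃ t, z ≠ root → G.Adj z t ∧ d t < d z := by
    intro z
    by_cases hz : z = root
    · exact ⟨z, fun h => absurd hz h⟩
    · obtain ⟨p, hp⟩ := (conn z root).exists_walk_length_eq_dist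
      cases p with
      | nil => exact absurd rfl hz
      | @cons _ t _ hadj q =>
        refine ⟨t, fun _ => ⟨hadj, ?_⟩⟩
        have h1 : G.dist t root ≤ q.length := SimpleGraph.dist_le q
        simp only [SimpleGraph.Walk.length_cons] at hp
        simp only [hd]
        omega
  choose next hnextp using hnext
  -- counting
  set P : Finset (Fin N × Fin N) := Finset.univ.filter fun p : Fin N × Fin N => w p.1 p.2 ≠ 0 with hP
  set s : Finset (Fin N) := Finset.univ.erase root with hs
  set A : Finset (Fin N × Fin N) := s.image (fun z => (z, next z)) ∪ s.image (fun z => (next z, z)) with hA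
  have hsub : A ⊆ P := by
    intro p hp
    simp only [hA, Finset.mem_union, Finset.mem_image, hs, Finset.mem_erase] at hp
    simp only [hP, Finset.mem_filter, Finset.mem_univ, true_and]
    rcases hp with ⟨z, ⟨hz, _⟩, rfl⟩ | ⟨z, ⟨hz, _⟩, rfl⟩
    · exact (adj_iff _ _).1 (hnextp z hz).1
    · rw [skew]; simpa using (adj_iff _ _).1 (hnextp z hz).1
  have hdisj : Disjoint (s.image (fun z => (z, next z))) (s.image (fun z => (next z, z))) := by
    rw [Finset.disjoint_left]
    rintro p hp hq
    simp only [Finset.mem_image, hs, Finset.mem_erase] at hp hq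
    obtain ⟨z, ⟨hz, _⟩, rfl⟩ := hp
    obtain ⟨z', ⟨hz', _⟩, he⟩ := hq
    have h1 : next z' = z := congrArg Prod.fst he
    have h2 : z' = next z := congrArg Prod.snd he
    have l1 := (hnextp z hz).2
    have l2 := (hnextp z' hz').2
    rw [h1] at l2; rw [← h2] at l1
    omega
  have hinj1 : Set.InjOn (fun z => (z, next z)) s := fun a _ b _ h => congrArg Prod.fst h
  have hinj2 : Set.InjOn (fun z => (next z, z)) s := fun a _ b _ h => congrArg Prod.snd h
  have hNpos : 0 < N := Fin.pos u
  have hscard : s.card = N - 1 := by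
    simp [hs, Finset.card_erase_of_mem]
  have hAcard : A.card = 2 * (N - 1) := by
    rw [hA, Finset.card_union_of_disjoint hdisj, Finset.card_image_of_injOn hinj1,
      Finset.card_image_of_injOn hinj2, hscard]
    omega
  have hAP : A = P := Finset.eq_of_subset_of_card_le hsub (by rw [hAcard, tree])
  have orient : ∀ z t : Fin N, w z t ≠ 0 →
      (z ≠ root ∧ t = next z) ∨ (t ≠ root ∧ z = next t) := by
    intro z t hzt
    have hmem : (z, t) ∈ A := by
      rw [hAP]; simp only [hP, Finset.mem_filter, Finset.mem_univ, true_and]; exact hzt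
    simp only [hA, Finset.mem_union, Finset.mem_image, hs, Finset.mem_erase] at hmem
    rcases hmem with ⟨z', ⟨hz', _⟩, he⟩ | ⟨z', ⟨hz', _⟩, he⟩
    · obtain ⟨h1, h2⟩ := Prod.ext_iff.mp he
      dsimp at h1 h2; subst h1
      exact Or.inl ⟨hz', h2.symm⟩
    · obtain ⟨h1, h2⟩ := Prod.ext_iff.mp he
      dsimp at h1 h2; subst h2
      exact Or.inr ⟨hz', h1.symm⟩
  -- now the triangle contradiction
  rcases orient u v huv with ⟨h, _⟩ | ⟨_, e1⟩
  · exact h rfl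
  rcases orient u y huy with ⟨h, _⟩ | ⟨_, e2⟩
  · exact h rfl
  rcases orient v y hvy with ⟨_, e3⟩ | ⟨_, e3⟩
  · have : u = y := e1.trans e3.symm
    subst this; exact huy (wzz u)
  · have : u = v := e2.trans e3.symm
    subst this; exact huv (wzz u)

open Finset in
lemma leaky_contract {k : ℤ} {n m : ℕ} {x : Fin n → ℤ} (e' : Fin n → ℕ) (j : Fin n)
    (a : Fin n → Fin (m+1)) (w : Fin (m+1) → Fin (m+1) → ℤ)
    (skew : ∀ u v, w u v = - w v u)
    (conn : (SimpleGraph.fromRel fun u v => w u v ≠ 0).Connected)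
    (tree : (Finset.univ.filter fun p : Fin (m+1) × Fin (m+1) => w p.1 p.2 ≠ 0).card = 2 * (m + 1 - 1))
    (psi : ∀ v : Fin (m+1),
      (Finset.univ.filter fun u => w u v ≠ 0).card + (Finset.univ.filter fun i => a i = v).card
      = (∑ i ∈ Finset.univ.filter fun i => a i = v, e' i) + 3)
    (balance : ∀ v : Fin (m+1),
      (∑ i ∈ Finset.univ.filter fun i => a i = v, x i) + (∑ u, w u v)
      = k * ((((Finset.univ.filter fun u => w u v ≠ 0).card
          + (Finset.univ.filter fun i => a i = v).card : ℕ) : ℤ) - 2))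
    (u v : Fin (m+1)) (huv : w u v ≠ 0) (hj : a j = v) :
    Nonempty (LeakyCoverDatum k x (Function.update e' j (e' j + 1))) := by
  classical
  have wzz : ∀ z, w z z = 0 := fun z => by have := skew z z; omega
  have hune : u ≠ v := by rintro rfl; exact huv (wzz u)
  have no3 := leaky_no_triangle w skew conn tree
  have hm : 0 < m := by
    rcases Nat.eq_zero_or_pos m with h | h
    · subst h; exact absurd (Subsingleton.elim (α := Fin 1) u v) hune
    · exact h
  set σ := finSuccEquiv' u with hσ
  have hσu : σ u = none := finSuccEquiv'_at u
  obtain ⟨vb, hσv⟩ : ∃ t, σ v = some t := by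
    cases h : σ v with
    | none => exact absurd (σ.injective (h.trans hσu.symm)) (Ne.symm hune)
    | some t => exact ⟨t, rfl⟩
  set π : Fin (m+1) → Fin m := fun z => (σ z).getD vb with hπ
  set ι : Fin m → Fin (m+1) := fun p => σ.symm (some p) with hι
  have F1 : π u = vb := by simp [hπ, hσu]
  have F2 : π v = vb := by simp [hπ, hσv]
  have F3 : ∀ p, π (ι p) = p := by intro p; simp [hπ, hι]
  have F4 : ∀ z, z ≠ u → ι (π z) = z := by
    intro z hz
    cases h : σ z with
    | none => exact absurd (σ.injective (h.trans hσu.symm)) hz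
    | some t =>
      have hπz : π z = t := by simp [hπ, h]
      rw [hπz, hι]
      simp only [← h]
      exact σ.symm_apply_apply z
  have F5 : ∀ p, ι p ≠ u := by
    intro p h
    have := congrArg σ h
    rw [hσu] at this
    simp [hι] at this
  have F6 : ι vb = v := by
    rw [hι]; simp only [← hσv]; exact σ.symm_apply_apply v
  have F7 : ∀ z, π z = vb ↔ z = u ∨ z = v := by
    intro z
    constructor
    · intro h
      by_cases hz : z = u
      · exact Or.inl hz
      · right; rw [← F4 z hz, h, F6]
    · rintro (rfl | rfl)
      exacts [F1, F2]
  have F8 : ∀ p z, p ≠ vb → (π z = p ↔ z = ι p) := by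
    intro p z hp
    constructor
    · intro h
      have hz : z ≠ u := by rintro rfl; rw [F1] at h; exact hp h.symm
      rw [← F4 z hz, h]
    · rintro rfl; exact F3 p
  have hιvb : ∀ p, p ≠ vb → ι p ≠ v := by
    intro p hp h
    exact hp (by rw [← F3 p, h, F2])
  set Ffib : Fin m → Finset (Fin (m+1)) := fun p => Finset.univ.filter fun z => π z = p with hFfib
  have hfib1 : ∀ p, p ≠ vb → Ffib p = {ι p} := by
    intro p hp
    ext z
    simp [hFfib, F8 p z hp]
  have hfib2 : Ffib vb = {u, v} := by
    ext z
    simp [hFfib, F7 z]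
  set w₂ : Fin m → Fin m → ℤ := fun p q => ∑ z ∈ Ffib p, ∑ y ∈ Ffib q, w z y with hw₂
  have skew₂ : ∀ p q, w₂ p q = - w₂ q p := by
    intro p q
    rw [hw₂]
    simp only
    rw [Finset.sum_comm, ← Finset.sum_neg_distrib]
    refine Finset.sum_congr rfl fun z _ => ?_
    rw [← Finset.sum_neg_distrib]
    exact Finset.sum_congr rfl fun y _ => skew y z
  have W1 : ∀ p q, p ≠ vb → q ≠ vb → w₂ p q = w (ι p) (ι q) := by
    intro p q hp hq
    rw [hw₂]; simp [hfib1 p hp, hfib1 q hq]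
  have W2 : ∀ p, p ≠ vb → w₂ vb p = w u (ι p) + w v (ι p) := by
    intro p hp
    rw [hw₂]; simp [hfib2, hfib1 p hp, Finset.sum_pair hune]
  have W3 : ∀ p, p ≠ vb → w₂ p vb = w (ι p) u + w (ι p) v := by
    intro p hp
    rw [hw₂]; simp [hfib2, hfib1 p hp, Finset.sum_pair hune]
  have W4 : w₂ vb vb = 0 := by
    rw [hw₂]; simp [hfib2, Finset.sum_pair hune]
    rw [wzz, wzz, skew u v]; ring
  have W5 : ∀ p, w₂ p p = 0 := by
    intro p
    by_cases hp : p = vb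
    · subst hp; exact W4
    · rw [W1 p p hp hp, wzz]
  have no3' : ∀ y, w u y ≠ 0 → w v y ≠ 0 → False := fun y h1 h2 => no3 u v y huv h1 h2
  have no3'' : ∀ y, w y u ≠ 0 → w y v ≠ 0 → False := by
    intro y h1 h2
    exact no3' y (by rw [skew u y]; simpa using h1) (by rw [skew v y]; simpa using h2)
  have F7pair : ∀ z z', π z = π z' → z = z' ∨ (z = u ∧ z' = v) ∨ (z = v ∧ z' = u) := by
    intro z z' h
    by_cases hz : z = u
    · subst hz
      rcases (F7 z').1 (h.symm.trans F1) with rfl | rfl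
      · exact Or.inl rfl
      · exact Or.inr (Or.inl ⟨rfl, rfl⟩)
    · by_cases hz' : z' = u
      · subst hz'
        rcases (F7 z).1 (h.trans F1) with rfl | rfl
        · exact Or.inl rfl
        · exact Or.inr (Or.inr ⟨rfl, rfl⟩)
      · left; rw [← F4 z hz, ← F4 z' hz', h]
  -- key: edges map to edges unless it is the contracted edge
  have key : ∀ z y, w z y ≠ 0 → ¬(z = u ∧ y = v) → ¬(z = v ∧ y = u) → w₂ (π z) (π y) ≠ 0 := by
    intro z y hzy h1 h2
    have hne : π z ≠ π y := by
      intro h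
      rcases F7pair z y h with rfl | ⟨rfl, rfl⟩ | ⟨rfl, rfl⟩
      · exact hzy (wzz z)
      · exact h1 ⟨rfl, rfl⟩
      · exact h2 ⟨rfl, rfl⟩
    by_cases hz : π z = vb
    · have hy : π y ≠ vb := fun h => hne (hz.trans h.symm)
      have hyu : y ≠ u := by rintro rfl; exact hy F1
      have hιy : ι (π y) = y := F4 y hyu
      rw [hz, W2 _ hy, hιy]
      rcases (F7 z).1 hz with rfl | rfl
      · intro hsum
        have hvy : w v y ≠ 0 := fun h => hzy (by omega)
        exact no3' y hzy hvy
      · intro hsum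
        have huy : w u y ≠ 0 := fun h => hzy (by omega)
        exact no3' y huy hzy
    · by_cases hy : π y = vb
      · have hzu : z ≠ u := by rintro rfl; exact hz F1
        have hιz : ι (π z) = z := F4 z hzu
        rw [hy, W3 _ hz, hιz]
        rcases (F7 y).1 hy with rfl | rfl
        · intro hsum
          have hzv : w z v ≠ 0 := fun h => hzy (by omega)
          exact no3'' z hzy hzv
        · intro hsum
          have hzu' : w z u ≠ 0 := fun h => hzy (by omega)
          exact no3'' z hzu' hzy
      · have hzu : z ≠ u := by rintro rfl; exact hz F1
        have hyu : y ≠ u := by rintro rfl; exact hy F1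
        rw [W1 _ _ hz hy, F4 z hzu, F4 y hyu]
        exact hzy
  have hex : ∀ p q, w₂ p q ≠ 0 → ∃ z y, π z = p ∧ π y = q ∧ w z y ≠ 0 := by
    intro p q h
    rw [hw₂] at h
    obtain ⟨z, hz, h⟩ := Finset.exists_ne_zero_of_sum_ne_zero h
    obtain ⟨y, hy, h⟩ := Finset.exists_ne_zero_of_sum_ne_zero h
    simp only [hFfib, Finset.mem_filter] at hz hy
    exact ⟨z, y, hz.2, hy.2, h⟩
  -- connectivity
  have adj_old : ∀ z y, (SimpleGraph.fromRel fun a b => w a b ≠ 0).Adj z y ↔ w z y ≠ 0 := by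
    intro z y
    rw [SimpleGraph.fromRel_adj]
    constructor
    · rintro ⟨hne, h | h⟩
      · exact h
      · rw [skew z y]; simpa using h
    · intro h
      exact ⟨by rintro rfl; exact h (wzz z), Or.inl h⟩
  have adj_new : ∀ p q, (SimpleGraph.fromRel fun a b => w₂ a b ≠ 0).Adj p q ↔ w₂ p q ≠ 0 := by
    intro p q
    rw [SimpleGraph.fromRel_adj]
    constructor
    · rintro ⟨hne, h | h⟩
      · exact h
      · rw [skew₂ p q]; simpa using h
    · intro h
      exact ⟨by rintro rfl; exact h (W5 p), Or.inl h⟩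
  have push : ∀ z y : Fin (m+1), (SimpleGraph.fromRel fun a b => w a b ≠ 0).Walk z y →
      (SimpleGraph.fromRel fun p q => w₂ p q ≠ 0).Reachable (π z) (π y) := by
    intro z y wk
    induction wk with
    | nil => exact SimpleGraph.Reachable.refl _
    | @cons z z' y h q ih =>
      by_cases hzz : π z = π z'
      · rw [hzz]; exact ih
      · refine SimpleGraph.Reachable.trans (SimpleGraph.Adj.reachable ?_) ih
        rw [adj_new]
        refine key z z' ((adj_old z z').1 h) ?_ ?_
        · rintro ⟨rfl, rfl⟩; exact hzz (F1.trans F2.symm)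
        · rintro ⟨rfl, rfl⟩; exact hzz (F2.trans F1.symm)
  have conn₂ : (SimpleGraph.fromRel fun p q => w₂ p q ≠ 0).Connected := by
    rw [SimpleGraph.connected_iff]
    refine ⟨fun p q => ?_, ⟨⟨0, hm⟩⟩⟩
    obtain ⟨wk⟩ := conn.preconnected (ι p) (ι q)
    have := push _ _ wk
    rwa [F3, F3] at this
  -- edge count
  have tree₂ : (Finset.univ.filter fun p : Fin m × Fin m => w₂ p.1 p.2 ≠ 0).card = 2 * (m - 1) := by
    set P : Finset (Fin (m+1) × Fin (m+1)) :=
      Finset.univ.filter (fun p : Fin (m+1) × Fin (m+1) => w p.1 p.2 ≠ 0) with hPdef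
    have hbij : ((P.erase (u, v)).erase (v, u)).card
        = (Finset.univ.filter fun p : Fin m × Fin m => w₂ p.1 p.2 ≠ 0).card := by
      refine Finset.card_bij (fun zy _ => (π zy.1, π zy.2)) ?_ ?_ ?_
      · rintro ⟨z, y⟩ hzy
        rw [Finset.mem_erase, Finset.mem_erase, hPdef, Finset.mem_filter] at hzy
        obtain ⟨hne1, hne2, -, hP⟩ := hzy
        simp only [Finset.mem_filter, Finset.mem_univ, true_and]
        refine key z y hP ?_ ?_
        · rintro ⟨rfl, rfl⟩; exact hne2 rfl
        · rintro ⟨rfl, rfl⟩; exact hne1 rfl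
      · rintro ⟨z, y⟩ hzy ⟨z', y'⟩ hzy' he
        rw [Finset.mem_erase, Finset.mem_erase, hPdef, Finset.mem_filter] at hzy hzy'
        obtain ⟨hne1, hne2, -, hP⟩ := hzy
        obtain ⟨hne1', hne2', -, hP'⟩ := hzy'
        obtain ⟨e1, e2⟩ := Prod.ext_iff.mp he
        dsimp at e1 e2 hP hP'
        rcases F7pair z z' e1 with rfl | ⟨hz, hz'⟩ | ⟨hz, hz'⟩
        · rcases F7pair y y' e2 with rfl | ⟨hy, hy'⟩ | ⟨hy, hy'⟩
          · rfl
          · rw [hy] at hP; rw [hy'] at hP'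
            exact (no3'' z hP hP').elim
          · rw [hy] at hP; rw [hy'] at hP'
            exact (no3'' z hP' hP).elim
        · rcases F7pair y y' e2 with rfl | ⟨hy, hy'⟩ | ⟨hy, hy'⟩
          · rw [hz] at hP; rw [hz'] at hP'
            exact (no3' y hP hP').elim
          · rw [hz, hy] at hP
            exact (hP (wzz u)).elim
          · exact (hne2 (by rw [hz, hy])).elim
        · rcases F7pair y y' e2 with rfl | ⟨hy, hy'⟩ | ⟨hy, hy'⟩
          · rw [hz] at hP; rw [hz'] at hP'
            exact (no3' y hP' hP).elim
          · exact (hne1 (by rw [hz, hy])).elim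
          · rw [hz, hy] at hP
            exact (hP (wzz v)).elim
      · rintro ⟨p, q⟩ hpq
        simp only [Finset.mem_filter, Finset.mem_univ, true_and] at hpq
        have hpq' : p ≠ q := by rintro rfl; exact hpq (W5 p)
        obtain ⟨z, y, rfl, rfl, hzy⟩ := hex p q hpq
        refine ⟨(z, y), ?_, rfl⟩
        rw [Finset.mem_erase, Finset.mem_erase, hPdef, Finset.mem_filter]
        refine ⟨?_, ?_, Finset.mem_univ _, hzy⟩
        · rintro h
          obtain ⟨rfl, rfl⟩ := Prod.ext_iff.mp h
          exact hpq' (F2.trans F1.symm)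
        · rintro h
          obtain ⟨rfl, rfl⟩ := Prod.ext_iff.mp h
          exact hpq' (F1.trans F2.symm)
    have c1 : (u, v) ∈ P := by rw [hPdef, Finset.mem_filter]; exact ⟨Finset.mem_univ _, huv⟩
    have c2 : (v, u) ∈ P.erase (u, v) := by
      rw [Finset.mem_erase, hPdef, Finset.mem_filter]
      refine ⟨?_, Finset.mem_univ _, ?_⟩
      · intro h
        obtain ⟨h1, h2⟩ := Prod.ext_iff.mp h
        dsimp at h1
        exact hune h1.symm
      · rw [skew v u]; simpa using huv
    have hc : ((P.erase (u, v)).erase (v, u)).card = P.card - 2 := by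
      rw [Finset.card_erase_of_mem c2, Finset.card_erase_of_mem c1]; omega
    have hPcard : P.card = 2 * (m + 1 - 1) := tree
    omega
  -- degrees
  have D1 : ∀ p, p ≠ vb → (Finset.univ.filter fun q => w₂ q p ≠ 0).card
      = (Finset.univ.filter fun t => w t (ι p) ≠ 0).card := by
    intro p hp
    refine (Finset.card_bij (fun z _ => π z) ?_ ?_ ?_).symm
    · intro z hz
      rw [Finset.mem_filter] at hz
      rw [Finset.mem_filter]
      refine ⟨Finset.mem_univ _, ?_⟩
      have h1 : ¬(z = u ∧ ι p = v) := by rintro ⟨rfl, h2⟩; exact hιvb p hp h2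
      have h2 : ¬(z = v ∧ ι p = u) := by rintro ⟨rfl, h2⟩; exact F5 p h2
      have := key z (ι p) hz.2 h1 h2
      rwa [F3] at this
    · intro z hz z' hz' he
      rw [Finset.mem_filter] at hz hz'
      rcases F7pair z z' he with rfl | ⟨hzu, hz'v⟩ | ⟨hzv, hz'u⟩
      · rfl
      · rw [hzu] at hz; rw [hz'v] at hz'
        exact (no3' (ι p) hz.2 hz'.2).elim
      · rw [hzv] at hz; rw [hz'u] at hz'
        exact (no3' (ι p) hz'.2 hz.2).elim
    · intro q hq
      rw [Finset.mem_filter] at hq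
      obtain ⟨z, y, hπz, hπy, hzy⟩ := hex q p hq.2
      have hyu : y ≠ u := by rintro rfl; rw [F1] at hπy; exact hp hπy.symm
      have hy : y = ι p := by rw [← F4 y hyu, hπy]
      rw [hy] at hzy
      exact ⟨z, Finset.mem_filter.2 ⟨Finset.mem_univ _, hzy⟩, hπz⟩
  have D2 : (Finset.univ.filter fun q => w₂ q vb ≠ 0).card + 2
      = (Finset.univ.filter fun t => w t u ≠ 0).card
        + (Finset.univ.filter fun t => w t v ≠ 0).card := by
    set A : Finset (Fin (m+1)) := Finset.univ.filter (fun z => w z u ≠ 0) with hA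
    set B : Finset (Fin (m+1)) := Finset.univ.filter (fun z => w z v ≠ 0) with hB
    set S : Finset (Fin (m+1)) := (A ∪ B) \ {u, v} with hS
    have hSmem : ∀ z, z ∈ S ↔ (w z u ≠ 0 ∨ w z v ≠ 0) ∧ z ≠ u ∧ z ≠ v := by
      intro z
      simp [hS, hA, hB, Finset.mem_sdiff, Finset.mem_union, Finset.mem_filter,
        Finset.mem_insert, Finset.mem_singleton, not_or, and_assoc]
    have hSd : (Finset.univ.filter fun q => w₂ q vb ≠ 0).card = S.card := by
      refine (Finset.card_bij (fun z _ => π z) ?_ ?_ ?_).symm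
      · intro z hz
        rw [hSmem] at hz
        obtain ⟨hAB, hzu, hzv⟩ := hz
        rw [Finset.mem_filter]
        refine ⟨Finset.mem_univ _, ?_⟩
        have hπz : π z ≠ vb := by
          intro h; rcases (F7 z).1 h with rfl | rfl
          exacts [hzu rfl, hzv rfl]
        rw [W3 _ hπz, F4 z hzu]
        intro hsum
        rcases hAB with h | h
        · have h' : w z v ≠ 0 := fun h0 => h (by omega)
          exact no3'' z h h'
        · have h' : w z u ≠ 0 := fun h0 => h (by omega)
          exact no3'' z h' h
      · intro z hz z' hz' he
        rw [hSmem] at hz hz'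
        rcases F7pair z z' he with rfl | ⟨hzu, _⟩ | ⟨_, hz'u⟩
        · rfl
        · exact (hz.2.1 hzu).elim
        · exact (hz'.2.1 hz'u).elim
      · intro q hq
        rw [Finset.mem_filter] at hq
        have hqvb : q ≠ vb := by rintro rfl; exact hq.2 W4
        refine ⟨ι q, ?_, F3 q⟩
        rw [hSmem]
        have := hq.2
        rw [W3 _ hqvb] at this
        refine ⟨?_, F5 q, hιvb q hqvb⟩
        by_contra hcon
        push_neg at hcon
        rw [hcon.1, hcon.2] at this
        exact this (by ring)
      
    have hdisjAB : Disjoint A B := by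
      rw [Finset.disjoint_left]
      intro z hz hz'
      rw [hA, Finset.mem_filter] at hz
      rw [hB, Finset.mem_filter] at hz'
      exact no3'' z hz.2 hz'.2
    have hsubuv : ({u, v} : Finset (Fin (m+1))) ⊆ A ∪ B := by
      intro z hz
      rw [Finset.mem_insert, Finset.mem_singleton] at hz
      rw [Finset.mem_union, hA, hB, Finset.mem_filter, Finset.mem_filter]
      rcases hz with rfl | rfl
      · exact Or.inr ⟨Finset.mem_univ _, huv⟩
      · exact Or.inl ⟨Finset.mem_univ _, by rw [skew z u]; simpa using huv⟩
    have hScard : S.card = (A ∪ B).card - 2 := by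
      rw [hS, Finset.card_sdiff_of_subset hsubuv, Finset.card_pair hune]
    have hABcard : (A ∪ B).card = A.card + B.card := Finset.card_union_of_disjoint hdisjAB
    have h2le : 2 ≤ (A ∪ B).card := by
      calc 2 = ({u, v} : Finset (Fin (m+1))).card := (Finset.card_pair hune).symm
      _ ≤ _ := Finset.card_le_card hsubuv
    rw [hSd, hScard, hABcard]
    rw [hABcard] at h2le
    omega
  -- legs
  have L1 : ∀ p, p ≠ vb → (Finset.univ.filter fun i => π (a i) = p)
      = (Finset.univ.filter fun i => a i = ι p) := by
    intro p hp
    ext i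
    simp only [Finset.mem_filter, Finset.mem_univ, true_and]
    exact F8 p (a i) hp
  have L2 : (Finset.univ.filter fun i => π (a i) = vb)
      = (Finset.univ.filter fun i => a i = u) ∪ (Finset.univ.filter fun i => a i = v) := by
    ext i
    simp only [Finset.mem_filter, Finset.mem_univ, true_and, Finset.mem_union]
    exact F7 (a i)
  have Ldisj : Disjoint (Finset.univ.filter fun i => a i = u)
      (Finset.univ.filter fun i => a i = v) := by
    rw [Finset.disjoint_left]
    intro i hi hi'
    rw [Finset.mem_filter] at hi hi'
    exact hune (hi.2.symm.trans hi'.2)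
  set e₂ : Fin n → ℕ := Function.update e' j (e' j + 1) with he₂
  have hsum1 : ∀ p, p ≠ vb → ∑ i ∈ Finset.univ.filter (fun i => a i = ι p), e₂ i
      = ∑ i ∈ Finset.univ.filter (fun i => a i = ι p), e' i := by
    intro p hp
    refine Finset.sum_congr rfl fun i hi => ?_
    rw [Finset.mem_filter] at hi
    have : i ≠ j := by rintro rfl; exact hιvb p hp (hi.2.symm.trans hj)
    rw [he₂, Function.update_of_ne this]
  have hsumu : ∑ i ∈ Finset.univ.filter (fun i => a i = u), e₂ i
      = ∑ i ∈ Finset.univ.filter (fun i => a i = u), e' i := by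
    refine Finset.sum_congr rfl fun i hi => ?_
    rw [Finset.mem_filter] at hi
    have : i ≠ j := by rintro rfl; exact hune (hi.2.symm.trans hj)
    rw [he₂, Function.update_of_ne this]
  have hjmem : j ∈ Finset.univ.filter (fun i => a i = v) :=
    Finset.mem_filter.2 ⟨Finset.mem_univ _, hj⟩
  have hsumv : ∑ i ∈ Finset.univ.filter (fun i => a i = v), e₂ i
      = (∑ i ∈ Finset.univ.filter (fun i => a i = v), e' i) + 1 := by
    rw [he₂, Finset.sum_update_of_mem hjmem, Finset.sdiff_singleton_eq_erase]
    have := Finset.add_sum_erase (Finset.univ.filter (fun i => a i = v)) e' hjmem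
    omega
  -- sum of flows
  have Wsum : ∀ p, (∑ q, w₂ q p) = ∑ z, (∑ y ∈ Ffib p, w z y) := by
    intro p
    rw [hw₂]
    exact Finset.sum_fiberwise Finset.univ π (fun z => ∑ y ∈ Ffib p, w z y)
  have Wsum1 : ∀ p, p ≠ vb → (∑ q, w₂ q p) = ∑ z, w z (ι p) := by
    intro p hp
    rw [Wsum p, hfib1 p hp]
    simp
  have Wsum2 : (∑ q, w₂ q vb) = (∑ z, w z u) + (∑ z, w z v) := by
    rw [Wsum vb, hfib2, ← Finset.sum_add_distrib]
    refine Finset.sum_congr rfl fun z _ => Finset.sum_pair hune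
  -- assemble
  refine ⟨⟨m, hm, fun i => π (a i), w₂, skew₂, conn₂, tree₂, ?_, ?_⟩⟩
  · intro p
    by_cases hp : p = vb
    · rw [hp]
      rw [L2, Finset.card_union_of_disjoint Ldisj, Finset.sum_union Ldisj,
        hsumu, hsumv]
      have h1 := psi u
      have h2 := psi v
      omega
    · rw [L1 p hp, D1 p hp, hsum1 p hp]
      exact psi (ι p)
  · intro p
    by_cases hp : p = vb
    · rw [hp]
      rw [L2, Finset.card_union_of_disjoint Ldisj, Finset.sum_union Ldisj, Wsum2]
      have b1 := balance u
      have b2 := balance v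
      have D2' : ((Finset.univ.filter fun q => w₂ q vb ≠ 0).card : ℤ) + 2
          = ((Finset.univ.filter fun t => w t u ≠ 0).card : ℤ)
            + ((Finset.univ.filter fun t => w t v ≠ 0).card : ℤ) := by exact_mod_cast D2
      push_cast at b1 b2 ⊢
      linear_combination b1 + b2 - k * D2'
    · rw [L1 p hp, D1 p hp, Wsum1 p hp]
      exact balance (ι p)

/-- Let `k ∈ ℤ`, `n ≥ 3`, `x : Fin n → ℤ`. If a
genus-zero leaky cover datum for leaking `k`, degree `x`, and Psi-conditions
`e = 0` (every vertex trivalent) exists, then for every `e : Fin n → ℕ` with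
`∑ e i ≤ n - 3` a genus-zero leaky cover datum for leaking `k`, degree
`x`, and Psi-conditions `e` exists. -/
theorem descendant_cover_from_trivalent (k : ℤ) (n : ℕ) (hn : 3 ≤ n)
    (x : Fin n → ℤ)
    (h0 : Nonempty (LeakyCoverDatum k x (fun _ => 0))) :
    ∀ e : Fin n → ℕ, (∑ i, (e i : ℤ)) ≤ (n : ℤ) - 3 →
      Nonempty (LeakyCoverDatum k x e) := by
  suffices H : ∀ s : ℕ, ∀ e : Fin n → ℕ, (∑ i, e i) = s →
      (∑ i, (e i : ℤ)) ≤ (n : ℤ) - 3 → Nonempty (LeakyCoverDatum k x e) by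
    intro e he
    exact H (∑ i, e i) e rfl he
  intro s
  induction s with
  | zero =>
    intro e hs _
    have he : e = fun _ => 0 :=
      funext fun i => Finset.sum_eq_zero_iff.mp hs i (Finset.mem_univ i)
    rw [he]
    exact h0
  | succ s ih =>
    intro e hs hle
    obtain ⟨j, hj⟩ : ∃ j, e j ≠ 0 := by
      by_contra h
      push_neg at h
      have : ∑ i, e i = 0 := Finset.sum_eq_zero fun i _ => h i
      omega
    set e' := Function.update e j (e j - 1) with he'
    have hupdate : Function.update e' j (e' j + 1) = e := by
      funext i
      by_cases hi : i = j
      · subst hi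
        simp only [he', Function.update_self]
        omega
      · simp only [Function.update_of_ne hi, he']
    have hs' : ∑ i, e' i = s := by
      rw [he', Finset.sum_update_of_mem (Finset.mem_univ j), Finset.sdiff_singleton_eq_erase]
      have h2 := Finset.add_sum_erase Finset.univ e (Finset.mem_univ j)
      omega
    have c1 : (∑ i, (e i : ℤ)) = ((s + 1 : ℕ) : ℤ) := by rw [← Nat.cast_sum, hs]
    have c2 : (∑ i, (e' i : ℤ)) = (s : ℤ) := by rw [← Nat.cast_sum, hs']
    have hle1 : ((s + 1 : ℕ) : ℤ) ≤ (n : ℤ) - 3 := c1 ▸ hle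
    obtain ⟨D⟩ := ih e' hs' (by rw [c2]; push_cast at hle1 ⊢; omega)
    obtain ⟨N, Npos, a, w, skew, conn, tree, psi, balance⟩ := D
    cases N with
    | zero => exact absurd Npos (lt_irrefl 0)
    | succ M =>
      cases M with
      | zero =>
        -- one vertex: every leg attached, valence n, so ∑ e' = n - 3, contradiction
        exfalso
        have hpsi := psi 0
        have hw00 : ∀ t : Fin (0+1), w t 0 = 0 := by
          intro t
          have ht : t = 0 := Subsingleton.elim (α := Fin 1) t 0
          subst ht
          have := skew (0 : Fin (0+1)) 0
          omega
        have hfe : (Finset.univ.filter fun t : Fin (0+1) => w t 0 ≠ 0) = ∅ := by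
          ext t
          simp [hw00 t]
        have hfa : (Finset.univ.filter fun i => a i = 0) = Finset.univ := by
          ext i
          simp [Subsingleton.elim (α := Fin 1) (a i) 0]
        rw [hfe, hfa] at hpsi
        simp only [Finset.card_empty, Finset.card_univ, Fintype.card_fin] at hpsi
        rw [hs'] at hpsi
        push_cast at hle1
        omega
      | succ m =>
        have hnb : ∃ u, w u (a j) ≠ 0 := by
          by_contra h
          push_neg at h
          obtain ⟨v', hv'⟩ := exists_ne (a j)
          obtain ⟨wk⟩ := conn.preconnected (a j) v'
          cases wk with
          | nil => exact hv' rfl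
          | cons hadj q =>
            rw [SimpleGraph.fromRel_adj] at hadj
            obtain ⟨hne, hor⟩ := hadj
            rcases hor with h1 | h1
            · exact h1 (by rw [skew]; rw [h _]; ring)
            · exact h1 (h _)
        obtain ⟨u, hu⟩ := hnb
        have := leaky_contract e' j a w skew conn tree psi balance u (a j) hu rfl
        rwa [hupdate] at this
end

section
/- Let n ≥ 3, let x : Fin n → ℤ with Σ_i x_i = 0, and let e : Fin n → ℕ with Σ_i e_i ≤ n − 3. Then a genus-zero leaky cover datum for leaking k = 0, degree x, and Psi-conditions e exists if and only if it is NOT the case that (x_i = 0 for all i and Σ_i e_i < n − 3). -/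
/-- prefix sums of a monotone sequence with total 0 and some nonzero entry are negative -/
lemma prefix_neg (n : ℕ) (y : ℕ → ℤ)
    (mono : ∀ s t, s ≤ t → t < n → y s ≤ y t)
    (h0 : ∑ t ∈ Finset.range n, y t = 0)
    (hne : ∃ t, t < n ∧ y t ≠ 0) :
    ∀ t, 1 ≤ t → t < n → ∑ s ∈ Finset.range t, y s < 0 := by
  intro t ht1 htn
  by_contra hge
  push_neg at hge
  have hsplit : (∑ s ∈ Finset.range t, y s) + (∑ s ∈ Finset.Ico t n, y s) = 0 := by
    rw [Finset.sum_range_add_sum_Ico _ (le_of_lt htn)]; exact h0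
  have hex0 : ∃ s, s < t ∧ 0 ≤ y s := by
    by_contra hall
    push_neg at hall
    have : ∑ s ∈ Finset.range t, y s < ∑ s ∈ Finset.range t, (0:ℤ) := by
      refine Finset.sum_lt_sum_of_nonempty ?_ ?_
      · exact ⟨0, Finset.mem_range.mpr ht1⟩
      · intro s hs; exact hall s (Finset.mem_range.mp hs)
    simp at this; omega
  obtain ⟨s0, hs0t, hs0⟩ := hex0
  have hBnn : ∀ u ∈ Finset.Ico t n, 0 ≤ y u := by
    intro u hu
    rw [Finset.mem_Ico] at hu
    exact le_trans hs0 (mono s0 u (by omega) hu.2)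
  have hBge : 0 ≤ ∑ s ∈ Finset.Ico t n, y s := Finset.sum_nonneg hBnn
  have hA0 : ∑ s ∈ Finset.range t, y s = 0 := by omega
  have hB0 : ∑ s ∈ Finset.Ico t n, y s = 0 := by omega
  have hBz : ∀ u ∈ Finset.Ico t n, y u = 0 :=
    (Finset.sum_eq_zero_iff_of_nonneg hBnn).mp hB0
  have hyt : y t = 0 := hBz t (Finset.mem_Ico.mpr ⟨le_refl t, htn⟩)
  have hAnp : ∀ s ∈ Finset.range t, y s ≤ 0 := by
    intro s hs
    rw [Finset.mem_range] at hs
    have := mono s t (le_of_lt hs) htn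
    omega
  have hAz : ∀ s ∈ Finset.range t, y s = 0 := by
    intro s hs
    exact (Finset.sum_eq_zero_iff_of_nonpos hAnp).mp hA0 s hs
  obtain ⟨u, hun, hu⟩ := hne
  rcases lt_or_ge u t with h | h
  · exact hu (hAz u (Finset.mem_range.mpr h))
  · exact hu (hBz u (Finset.mem_Ico.mpr ⟨h, hun⟩))

/-- cut points exist for a function increasing in steps of at most one -/
lemma cut_exists (G : ℕ → ℤ) (n N : ℕ) (hG0 : G 0 = 0) (hGn : G n = (N:ℤ) + 2)
    (hstep : ∀ t, G (t+1) ≤ G t + 1) (hN : 2 ≤ N) :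
    ∃ c : ℕ → ℕ, c 0 = 0 ∧ c N = n ∧
      (∀ v, 1 ≤ v → v < N → G (c v) = (v:ℤ) + 1) ∧
      (∀ v, v < N → c v < c (v+1)) ∧
      (∀ v, v ≤ N → c v ≤ n) := by
  classical
  have hexP : ∀ v : ℕ, ∃ t, ((v:ℤ)+1) ≤ G t ∨ n ≤ t := fun v => ⟨n, Or.inr le_rfl⟩
  set c : ℕ → ℕ := fun v =>
    if v = 0 then 0 else if N ≤ v then n else Nat.find (hexP v) with hc
  have hfind : ∀ v, v < N → ((v:ℤ)+1) ≤ G (Nat.find (hexP v)) ∧ Nat.find (hexP v) ≤ n := by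
    intro v hv
    have hGnv : ((v:ℤ)+1) ≤ G n := by rw [hGn]; push_cast; omega
    have hle : Nat.find (hexP v) ≤ n := Nat.find_le (Or.inl hGnv)
    rcases Nat.find_spec (hexP v) with h | h
    · exact ⟨h, hle⟩
    · have heq : Nat.find (hexP v) = n := le_antisymm hle h
      rw [heq]; exact ⟨hGnv, le_rfl⟩
  have hcv : ∀ v, 1 ≤ v → v < N → c v = Nat.find (hexP v) := by
    intro v h1 h2
    simp only [hc]
    rw [if_neg (by omega), if_neg (by omega)]
  have hval : ∀ v, 1 ≤ v → v < N → G (c v) = (v:ℤ) + 1 := by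
    intro v h1 h2
    rw [hcv v h1 h2]
    set t := Nat.find (hexP v) with hts
    have hspec : ((v:ℤ)+1) ≤ G t := (hfind v h2).1
    have htpos : 1 ≤ t := by
      rcases Nat.eq_zero_or_pos t with h | h
      · exfalso; rw [h, hG0] at hspec; omega
      · exact h
    have hmin : ¬ (((v:ℤ)+1) ≤ G (t-1) ∨ n ≤ t - 1) := Nat.find_min (hexP v) (by omega)
    push_neg at hmin
    have hmin' := hmin.1
    have hstep' := hstep (t-1)
    rw [Nat.sub_add_cancel htpos] at hstep'
    omega
  have hle : ∀ v, v ≤ N → c v ≤ n := by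
    intro v hv
    rcases Nat.eq_zero_or_pos v with h | h
    · simp [hc, h]
    rcases Nat.lt_or_ge v N with h2 | h2
    · rw [hcv v h h2]; exact (hfind v h2).2
    · simp only [hc]; rw [if_neg (by omega), if_pos h2]
  have hc0 : c 0 = 0 := by simp [hc]
  have hcN : c N = n := by simp only [hc]; rw [if_neg (by omega), if_pos le_rfl]
  refine ⟨c, hc0, hcN, hval, ?_, hle⟩
  intro v hv
  rcases Nat.eq_zero_or_pos v with h0 | h0
  · subst h0
    have h1 : G (c 1) = 2 := by have := hval 1 le_rfl (by omega); simpa using this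
    have : c 1 ≠ 0 := by
      intro hcon
      rw [hcon, hG0] at h1; omega
    simpa [hc0] using Nat.pos_of_ne_zero this
  rcases Nat.lt_or_ge (v+1) N with h2 | h2
  · have hv1 : G (c (v+1)) = (v:ℤ) + 2 := by
      have := hval (v+1) (by omega) h2; push_cast at this ⊢; linarith
    have hpos : 1 ≤ c (v+1) := by
      rcases Nat.eq_zero_or_pos (c (v+1)) with h | h
      · exfalso; rw [h, hG0] at hv1; omega
      · exact h
    have hprev : ((v:ℤ)+1) ≤ G (c (v+1) - 1) := by
      have hstep' := hstep (c (v+1) - 1)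
      rw [Nat.sub_add_cancel hpos] at hstep'
      omega
    have : c v ≤ c (v+1) - 1 := by
      rw [hcv v h0 (by omega)]
      exact Nat.find_le (Or.inl hprev)
    omega
  · have hvN : v = N - 1 := by omega
    have hGv : G (c v) = (v:ℤ) + 1 := hval v h0 hv
    have hne' : c v ≠ n := by
      intro hcon
      rw [hcon, hGn] at hGv
      have h1 : (v:ℤ) = (N:ℤ) + 1 := by omega
      have h2 : v = N + 1 := by exact_mod_cast h1
      omega
    have h3 : c v ≤ n := hle v (by omega)
    have hcv1 : c (v+1) = n := by
      have hvv : v + 1 = N := by omega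
      rw [hvv, hcN]
    omega

section helpers
variable {M : Type*} [AddCommMonoid M]

/-- transfer a sum over Fin-filter to a sum over an Ico of naturals -/
lemma sum_fin_val_Ico (n : ℕ) (F : ℕ → M) (lo hi : ℕ) (hhi : hi ≤ n) :
    ∑ j ∈ Finset.univ.filter (fun j : Fin n => lo ≤ j.val ∧ j.val < hi), F j.val
      = ∑ t ∈ Finset.Ico lo hi, F t := by
  refine Finset.sum_bij (fun (j : Fin n) _ => (j.val : ℕ)) ?_ ?_ ?_ ?_
  · intro j hj
    simp only [Finset.mem_filter] at hj
    exact Finset.mem_Ico.mpr hj.2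
  · intro j1 h1 j2 h2 h
    exact Fin.ext h
  · intro t ht
    rw [Finset.mem_Ico] at ht
    exact ⟨⟨t, lt_of_lt_of_le ht.2 hhi⟩, Finset.mem_filter.mpr ⟨Finset.mem_univ _, ht.1, ht.2⟩, rfl⟩
  · intro j hj; rfl

/-- reindex a fiber sum along an equivalence -/
lemma sum_fiber_equiv {n N : ℕ} (σ : Equiv.Perm (Fin n)) (blk : Fin n → Fin N) (v : Fin N)
    (f : Fin n → M) :
    ∑ i ∈ Finset.univ.filter (fun i => blk (σ.symm i) = v), f i
      = ∑ j ∈ Finset.univ.filter (fun j => blk j = v), f (σ j) := by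
  refine (Finset.sum_bij (fun (j : Fin n) _ => σ j) ?_ ?_ ?_ ?_).symm
  · intro j hj
    simp only [Finset.mem_filter, Equiv.symm_apply_apply] at hj ⊢
    exact ⟨Finset.mem_univ _, hj.2⟩
  · intro j1 h1 j2 h2 h
    exact σ.injective h
  · intro i hi
    simp only [Finset.mem_filter] at hi
    exact ⟨σ.symm i, Finset.mem_filter.mpr ⟨Finset.mem_univ _, hi.2⟩, by simp⟩
  · intro j hj; rfl

/-- decompose the ordered-pair edge count vertexwise -/
lemma pairs_card {N : ℕ} (w : Fin N → Fin N → ℤ) :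
    (Finset.univ.filter fun p : Fin N × Fin N => w p.1 p.2 ≠ 0).card
      = ∑ v, (Finset.univ.filter fun u => w u v ≠ 0).card := by
  classical
  rw [Finset.card_eq_sum_card_fiberwise (f := fun p : Fin N × Fin N => p.2)
    (t := Finset.univ) (fun _ _ => Finset.mem_univ _)]
  refine Finset.sum_congr rfl fun v _ => ?_
  refine Finset.card_bij (fun p _ => p.1) ?_ ?_ ?_
  · intro p hp
    simp only [Finset.mem_filter, Finset.mem_univ, true_and] at hp ⊢
    rw [← hp.2]; exact hp.1
  · intro p hp q hq hpq
    simp only [Finset.mem_filter, Finset.mem_univ, true_and] at hp hq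
    exact Prod.ext hpq (hp.2.trans hq.2.symm)
  · intro u hu
    simp only [Finset.mem_filter, Finset.mem_univ, true_and] at hu ⊢
    exact ⟨(u, v), ⟨hu, rfl⟩, rfl⟩

end helpers
/-- single-vertex datum when `n = ∑ e + 3` -/
lemma lemA (n : ℕ) (x : Fin n → ℤ) (e : Fin n → ℕ) (hsum : ∑ i, x i = 0)
    (hne : n = (∑ i, e i) + 3) : Nonempty (LeakyCoverDatum 0 x e) := by
  refine ⟨⟨1, one_pos, fun _ => 0, fun _ _ => 0, fun _ _ => by ring, ?_, ?_, ?_, ?_⟩⟩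
  · constructor
    intro u v
    have : u = v := Subsingleton.elim u v
    exact this ▸ SimpleGraph.Reachable.refl u
  · simp
  · intro v
    have h1 : (Finset.univ.filter fun u : Fin 1 => (0:ℤ) ≠ 0) = ∅ := by simp
    have h2 : (Finset.univ.filter fun i : Fin n => (0 : Fin 1) = v) = Finset.univ := by
      simp [Subsingleton.elim (0 : Fin 1) v]
    simp [h1, h2, ← hne]
  · intro v
    have h2 : (Finset.univ.filter fun i : Fin n => (0 : Fin 1) = v) = Finset.univ := by
      simp [Subsingleton.elim (0 : Fin 1) v]
    simp [h2, hsum]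

lemma lemCount {k : ℤ} {n : ℕ} {x : Fin n → ℤ} {e : Fin n → ℕ}
    (D : LeakyCoverDatum k x e) : 2 * (D.N - 1) + n = (∑ i, e i) + 3 * D.N := by
  have hsum := fun v => D.psi v
  have h := Finset.sum_congr rfl (fun v (_ : v ∈ (Finset.univ : Finset (Fin D.N))) => hsum v)
  -- LHS pieces
  have hdeg : ∑ v, (Finset.univ.filter fun u => D.w u v ≠ 0).card = 2 * (D.N - 1) := by
    rw [← D.tree]
    rw [Finset.card_eq_sum_card_fiberwise (f := fun p : Fin D.N × Fin D.N => p.2)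
      (t := Finset.univ) (fun _ _ => Finset.mem_univ _)]
    refine (Finset.sum_congr rfl fun v _ => ?_).symm
    refine Finset.card_bij (fun p _ => p.1) ?_ ?_ ?_
    · intro p hp
      simp only [Finset.mem_filter, Finset.mem_univ, true_and] at hp ⊢
      rw [← hp.2]; exact hp.1
    · intro p hp q hq hpq
      simp only [Finset.mem_filter, Finset.mem_univ, true_and] at hp hq
      exact Prod.ext hpq (hp.2.trans hq.2.symm)
    · intro u hu
      simp only [Finset.mem_filter, Finset.mem_univ, true_and] at hu ⊢
      exact ⟨(u, v), ⟨hu, rfl⟩, rfl⟩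
  have hlegs : ∑ v, (Finset.univ.filter fun i => D.a i = v).card = n := by
    simp only [Finset.card_eq_sum_ones]
    rw [Finset.sum_fiberwise Finset.univ D.a (fun _ => 1)]
    simp
  have hE : ∑ v, ∑ i ∈ Finset.univ.filter fun i => D.a i = v, e i = ∑ i, e i :=
    Finset.sum_fiberwise Finset.univ D.a e
  rw [Finset.sum_add_distrib, hdeg, hlegs, Finset.sum_add_distrib, hE] at h
  simpa [Finset.sum_const, mul_comm] using h

lemma lemB {n : ℕ} {x : Fin n → ℤ} {e : Fin n → ℕ}
    (D : LeakyCoverDatum 0 x e) (hx : ∀ i, x i = 0)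
    (hlt : (∑ i, e i) + 3 < n) : False := by
  have hc := lemCount D
  have hN2 : 2 ≤ D.N := by
    have := D.Npos; omega
  -- every vertex has a neighbour
  have hdeg1 : ∀ v : Fin D.N, 1 ≤ (Finset.univ.filter fun u => D.w u v ≠ 0).card := by
    intro v
    have hu : ∃ u : Fin D.N, u ≠ v := by
      have : 1 < (Finset.univ : Finset (Fin D.N)).card := by simpa using (show 1 < D.N by omega)
      rcases Finset.exists_mem_ne this v with ⟨u, _, hu⟩
      exact ⟨u, hu⟩
    obtain ⟨u, huv⟩ := hu
    have hre : (SimpleGraph.fromRel fun a b => D.w a b ≠ 0).Reachable v u :=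
      D.conn.preconnected v u
    obtain ⟨p⟩ := hre
    cases p with
    | nil => exact absurd rfl huv.symm
    | cons h q =>
        rename_i u'
        clear q
        rw [SimpleGraph.fromRel_adj] at h
        have hw : D.w u' v ≠ 0 := by
          rcases h.2 with h1 | h1
          · rw [D.skew] at h1; simpa using (neg_ne_zero.mp h1)
          · exact h1
        refine Finset.card_pos.mpr ⟨u', ?_⟩
        simp [hw]
  -- some vertex has degree exactly 1
  have hleaf : ∃ v : Fin D.N, (Finset.univ.filter fun u => D.w u v ≠ 0).card = 1 := by
    by_contra hno
    push_neg at hno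
    have hall : ∀ v : Fin D.N, 2 ≤ (Finset.univ.filter fun u => D.w u v ≠ 0).card := by
      intro v
      have := hdeg1 v
      have := hno v
      omega
    have hsum2 : 2 * D.N ≤ ∑ v, (Finset.univ.filter fun u => D.w u v ≠ 0).card := by
      calc 2 * D.N = ∑ _v : Fin D.N, 2 := by simp [mul_comm]
      _ ≤ _ := Finset.sum_le_sum fun v _ => hall v
    -- but the sum is 2 * (N - 1)
    have hdegsum : ∑ v, (Finset.univ.filter fun u => D.w u v ≠ 0).card = 2 * (D.N - 1) := by
      have hc' := lemCount D
      -- recompute: reuse proof? simpler: same computation as in lemCount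
      rw [← D.tree]
      rw [Finset.card_eq_sum_card_fiberwise (f := fun p : Fin D.N × Fin D.N => p.2)
        (t := Finset.univ) (fun _ _ => Finset.mem_univ _)]
      refine (Finset.sum_congr rfl fun v _ => ?_).symm
      refine Finset.card_bij (fun p _ => p.1) ?_ ?_ ?_
      · intro p hp
        simp only [Finset.mem_filter, Finset.mem_univ, true_and] at hp ⊢
        rw [← hp.2]; exact hp.1
      · intro p hp q hq hpq
        simp only [Finset.mem_filter, Finset.mem_univ, true_and] at hp hq
        exact Prod.ext hpq (hp.2.trans hq.2.symm)
      · intro u hu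
        simp only [Finset.mem_filter, Finset.mem_univ, true_and] at hu ⊢
        exact ⟨(u, v), ⟨hu, rfl⟩, rfl⟩
    omega
  obtain ⟨v, hv⟩ := hleaf
  obtain ⟨u0, hu0⟩ := Finset.card_eq_one.mp hv
  have hu0mem : u0 ∈ Finset.univ.filter fun u => D.w u v ≠ 0 := by rw [hu0]; simp
  have hwne : D.w u0 v ≠ 0 := (Finset.mem_filter.mp hu0mem).2
  have hb := D.balance v
  have hx0 : (∑ i ∈ Finset.univ.filter fun i => D.a i = v, x i) = 0 :=
    Finset.sum_eq_zero fun i _ => hx i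
  have hflow : (∑ u, D.w u v) = D.w u0 v := by
    rw [← Finset.sum_filter_ne_zero Finset.univ (f := fun u => D.w u v), hu0,
      Finset.sum_singleton]
  rw [hx0, hflow, zero_mul, zero_add] at hb
  exact hwne hb

lemma card_pred_filter {N : ℕ} (v1 : ℕ) :
    (Finset.univ.filter fun u : Fin N => u.val + 1 = v1).card
      = if 1 ≤ v1 ∧ v1 ≤ N then 1 else 0 := by
  by_cases h : 1 ≤ v1 ∧ v1 ≤ N
  · rw [if_pos h]
    refine Finset.card_eq_one.mpr ⟨⟨v1 - 1, by omega⟩, ?_⟩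
    ext u
    simp only [Finset.mem_filter, Finset.mem_univ, true_and, Finset.mem_singleton, Fin.ext_iff]
    omega
  · rw [if_neg h, Finset.card_eq_zero, Finset.filter_eq_empty_iff]
    intro u _
    have := u.isLt
    omega

lemma card_succ_filter {N : ℕ} (v1 : ℕ) :
    (Finset.univ.filter fun u : Fin N => v1 + 1 = u.val).card
      = if v1 + 2 ≤ N then 1 else 0 := by
  by_cases h : v1 + 2 ≤ N
  · rw [if_pos h]
    refine Finset.card_eq_one.mpr ⟨⟨v1 + 1, by omega⟩, ?_⟩
    ext u
    simp only [Finset.mem_filter, Finset.mem_univ, true_and, Finset.mem_singleton, Fin.ext_iff]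
    omega
  · rw [if_neg h, Finset.card_eq_zero, Finset.filter_eq_empty_iff]
    intro u _
    have := u.isLt
    omega

lemma sum_range_ite_one (N : ℕ) : ∑ t ∈ Finset.range N, (if 1 ≤ t then 1 else 0) = N - 1 := by
  induction N with
  | zero => simp
  | succ N ih =>
      rw [Finset.sum_range_succ, ih]
      rcases Nat.eq_zero_or_pos N with h | h
      · subst h; simp
      · rw [if_pos (by omega)]; omega

lemma sum_range_ite_two (N : ℕ) : ∑ t ∈ Finset.range N, (if t + 2 ≤ N then 1 else 0) = N - 1 := by
  have h1 : ∀ t ∈ Finset.range N, (if t + 2 ≤ N then (1:ℕ) else 0) = if t < N - 1 then 1 else 0 := by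
    intro t ht
    rw [Finset.mem_range] at ht
    by_cases h : t + 2 ≤ N
    · rw [if_pos h, if_pos (by omega)]
    · rw [if_neg h, if_neg (by omega)]
  rw [Finset.sum_congr rfl h1, ← Finset.card_filter]
  have h2 : (Finset.range N).filter (fun t => t < N - 1) = Finset.range (N-1) := by
    ext t
    simp only [Finset.mem_filter, Finset.mem_range]
    omega
  rw [h2, Finset.card_range]

lemma lemC (n : ℕ) (x : Fin n → ℤ) (e : Fin n → ℕ)
    (hsum : ∑ i, x i = 0) (hne : ∃ i, x i ≠ 0)
    (hm : (∑ i, e i) + 3 < n) : Nonempty (LeakyCoverDatum 0 x e) := by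
  classical
  set m := ∑ i, e i with hmdef
  set N := n - m - 2 with hNdef
  have hN2 : 2 ≤ N := by omega
  have hnm : n = m + N + 2 := by omega
  set σ := Tuple.sort x with hσ
  set Y : ℕ → ℤ := fun t => if h : t < n then x (σ ⟨t, h⟩) else 0 with hY
  set E' : ℕ → ℕ := fun t => if h : t < n then e (σ ⟨t, h⟩) else 0 with hE'
  set S : ℕ → ℤ := fun t => ∑ s ∈ Finset.range t, Y s with hS
  set H : ℕ → ℕ := fun t => ∑ s ∈ Finset.range t, E' s with hH
  set G : ℕ → ℤ := fun t => (t : ℤ) - (H t : ℤ) with hG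
  have hYj : ∀ j : Fin n, Y j.val = x (σ j) := by
    intro j; simp only [hY]; rw [dif_pos j.isLt]
  have hEj : ∀ j : Fin n, E' j.val = e (σ j) := by
    intro j; simp only [hE']; rw [dif_pos j.isLt]
  have hYmono : ∀ s t, s ≤ t → t < n → Y s ≤ Y t := by
    intro s t hst htn
    have h := Tuple.monotone_sort x (a := (⟨s, by omega⟩ : Fin n)) (b := ⟨t, htn⟩) hst
    simpa only [Function.comp, hY, dif_pos (show s < n by omega), dif_pos htn] using h
  have hSn : S n = 0 := by
    have h1 : ∑ t ∈ Finset.range n, Y t = ∑ j : Fin n, Y j.val :=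
      (Fin.sum_univ_eq_sum_range (fun t => Y t) n).symm
    have h2 : ∑ j : Fin n, Y j.val = ∑ j : Fin n, x (σ j) :=
      Finset.sum_congr rfl fun j _ => hYj j
    have h3 : ∑ j : Fin n, x (σ j) = ∑ i, x i := Equiv.sum_comp σ x
    simp only [hS]; rw [h1, h2, h3, hsum]
  have hHn : H n = m := by
    have h1 : ∑ t ∈ Finset.range n, E' t = ∑ j : Fin n, E' j.val :=
      (Fin.sum_univ_eq_sum_range (fun t => E' t) n).symm
    have h2 : ∑ j : Fin n, E' j.val = ∑ j : Fin n, e (σ j) :=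
      Finset.sum_congr rfl fun j _ => hEj j
    have h3 : ∑ j : Fin n, e (σ j) = ∑ i, e i := Equiv.sum_comp σ e
    simp only [hH]; rw [h1, h2, h3, hmdef]
  have hG0 : G 0 = 0 := by simp [hG, hH]
  have hGn : G n = (N : ℤ) + 2 := by
    simp only [hG]; rw [hHn]; push_cast; omega
  have hGstep : ∀ t, G (t+1) ≤ G t + 1 := by
    intro t
    simp only [hG, hH]
    rw [Finset.sum_range_succ]
    push_cast
    omega
  obtain ⟨c, hc0, hcN, hcval, hcstrict, hcle⟩ := cut_exists G n N hG0 hGn hGstep hN2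
  have hcmono : ∀ w, w ≤ N → ∀ v, v ≤ w → c v ≤ c w := by
    intro w
    induction w with
    | zero =>
        intro _ v hv
        have hv0 : v = 0 := by omega
        rw [hv0]
    | succ w ih =>
        intro hw v hv
        rcases Nat.lt_or_ge v (w+1) with h | h
        · exact le_trans (ih (by omega) v (by omega)) (le_of_lt (hcstrict w (by omega)))
        · have hv' : v = w + 1 := by omega
          rw [hv']
  have hcpos : ∀ v, 1 ≤ v → v ≤ N → 1 ≤ c v := by
    intro v h1 h2
    have h3 : c 0 < c 1 := hcstrict 0 (by omega)
    have h4 : c 1 ≤ c v := hcmono v h2 1 h1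
    omega
  have hclt : ∀ v, v < N → c v < n := by
    intro v hv
    have h1 : c v ≤ c (N-1) := by
      rcases Nat.lt_or_ge v (N-1) with h | h
      · exact hcmono (N-1) (by omega) v (by omega)
      · have hv' : v = N - 1 := by omega
        rw [hv']
    have h2 : c (N-1) < c N := by
      have h := hcstrict (N-1) (by omega)
      have hNN : N - 1 + 1 = N := by omega
      rwa [hNN] at h
    omega
  have hSneg : ∀ v, 1 ≤ v → v < N → S (c v) < 0 := by
    intro v h1 h2
    have hex : ∃ t, t < n ∧ Y t ≠ 0 := by
      obtain ⟨i, hi⟩ := hne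
      refine ⟨(σ.symm i).val, (σ.symm i).isLt, ?_⟩
      rw [hYj (σ.symm i)]
      simpa using hi
    exact prefix_neg n Y hYmono (by simpa [hS] using hSn) hex (c v)
      (hcpos v h1 (by omega)) (hclt v h2)
  have hScN : S (c N) = 0 := by rw [hcN]; exact hSn
  have hSc0 : S (c 0) = 0 := by rw [hc0]; simp [hS]
  set b : ℕ → ℕ := fun t => ((Finset.range (N-1)).filter (fun u => c (u+1) ≤ t)).card with hb
  have hblt : ∀ t, b t < N := by
    intro t
    have h1 : b t ≤ N - 1 := by
      simp only [hb]
      exact le_trans (Finset.card_filter_le _ _) (le_of_eq (Finset.card_range _))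
    omega
  have hbv : ∀ v, v < N → ∀ t, c v ≤ t → t < c (v+1) → b t = v := by
    intro v hv t h1 h2
    have hfe : (Finset.range (N-1)).filter (fun u => c (u+1) ≤ t) = Finset.range v := by
      ext u
      simp only [Finset.mem_filter, Finset.mem_range]
      constructor
      · rintro ⟨hu, hcu⟩
        by_contra hcon
        push_neg at hcon
        have := hcmono (u+1) (by omega) (v+1) (by omega)
        omega
      · intro hu
        have h3 : c (u+1) ≤ c v := hcmono v (by omega) (u+1) (by omega)
        exact ⟨by omega, by omega⟩
    simp only [hb]; rw [hfe, Finset.card_range]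
  have hexv : ∀ t, t < n → ∃ v, v < N ∧ c v ≤ t ∧ t < c (v+1) := by
    intro t ht
    have hP : ∃ v, ¬ c v ≤ t := ⟨N, by rw [hcN]; omega⟩
    have hVspec : ¬ c (Nat.find hP) ≤ t := Nat.find_spec hP
    have hV1 : 1 ≤ Nat.find hP := by
      rcases Nat.eq_zero_or_pos (Nat.find hP) with h | h
      · exfalso; apply hVspec; rw [h, hc0]; omega
      · exact h
    have hVle : Nat.find hP ≤ N := Nat.find_le (by rw [hcN]; omega)
    have hVmin : c (Nat.find hP - 1) ≤ t := by
      by_contra h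
      exact absurd (Nat.find_min hP (by omega) : (¬ ¬ c (Nat.find hP - 1) ≤ t)) (by simpa using h)
    refine ⟨Nat.find hP - 1, by omega, hVmin, ?_⟩
    have hq : Nat.find hP - 1 + 1 = Nat.find hP := by omega
    rw [hq]; omega
  have hbiff : ∀ t, t < n → ∀ v, v < N → (b t = v ↔ c v ≤ t ∧ t < c (v+1)) := by
    intro t ht v hv
    constructor
    · intro hbt
      obtain ⟨v0, hv0, h1, h2⟩ := hexv t ht
      have hb0 : b t = v0 := hbv v0 hv0 t h1 h2
      rw [hbt] at hb0
      rw [hb0]; exact ⟨h1, h2⟩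
    · intro ⟨h1, h2⟩; exact hbv v hv t h1 h2
  set blk : Fin n → Fin N := fun j => ⟨b j.val, hblt _⟩ with hblk
  set a : Fin n → Fin N := fun i => blk (σ.symm i) with ha
  set w : Fin N → Fin N → ℤ := fun u v =>
    if u.val + 1 = v.val then S (c v.val)
    else if v.val + 1 = u.val then - S (c u.val) else 0 with hw
  have hSne : ∀ v1, 1 ≤ v1 → v1 < N → S (c v1) ≠ 0 := fun v1 h1 h2 => ne_of_lt (hSneg v1 h1 h2)
  have hwiff : ∀ u v : Fin N, w u v ≠ 0 ↔ (u.val + 1 = v.val ∨ v.val + 1 = u.val) := by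
    intro u v
    simp only [hw]
    constructor
    · intro h
      by_contra hcon
      push_neg at hcon
      rw [if_neg hcon.1, if_neg hcon.2] at h
      exact h rfl
    · intro h
      rcases h with h | h
      · rw [if_pos h]
        exact hSne v.val (by omega) v.isLt
      · rw [if_neg (by omega), if_pos h]
        simp only [neg_ne_zero]
        exact hSne u.val (by omega) u.isLt
  have hwfilter : ∀ v : Fin N, (Finset.univ.filter fun u => w u v ≠ 0)
      = Finset.univ.filter (fun u : Fin N => u.val + 1 = v.val ∨ v.val + 1 = u.val) := by
    intro v
    ext u
    simp only [Finset.mem_filter, Finset.mem_univ, true_and]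
    exact hwiff u v
  have hdegcard : ∀ v : Fin N, (Finset.univ.filter fun u => w u v ≠ 0).card
      = (if 1 ≤ v.val then 1 else 0) + (if v.val + 2 ≤ N then 1 else 0) := by
    intro v
    rw [hwfilter v, Finset.filter_or, Finset.card_union_of_disjoint]
    · rw [card_pred_filter, card_succ_filter]
      congr 1
      by_cases h : 1 ≤ v.val
      · rw [if_pos h, if_pos ⟨h, le_of_lt v.isLt⟩]
      · rw [if_neg h, if_neg (by tauto)]
    · rw [Finset.disjoint_filter]
      intro u _ h1 h2
      omega
  -- flow sums
  have hwsum : ∀ v : Fin N, ∑ u, w u v = S (c v.val) - S (c (v.val + 1)) := by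
    intro v
    have hsplit : ∀ u : Fin N, w u v
        = (if u.val + 1 = v.val then S (c v.val) else 0)
          + (if v.val + 1 = u.val then - S (c (v.val+1)) else 0) := by
      intro u
      simp only [hw]
      by_cases h1 : u.val + 1 = v.val
      · rw [if_pos h1, if_pos h1, if_neg (by omega)]
        ring
      · rw [if_neg h1, if_neg h1]
        by_cases h2 : v.val + 1 = u.val
        · rw [if_pos h2, if_pos h2, ← h2]
          ring
        · rw [if_neg h2, if_neg h2]
          ring
    rw [Finset.sum_congr rfl (fun u _ => hsplit u), Finset.sum_add_distrib]
    have e1 : ∑ u : Fin N, (if u.val + 1 = v.val then S (c v.val) else 0) = S (c v.val) := by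
      rw [← Finset.sum_filter, Finset.sum_const, card_pred_filter]
      by_cases h : 1 ≤ v.val
      · rw [if_pos ⟨h, le_of_lt v.isLt⟩, one_smul]
      · rw [if_neg (by tauto)]
        have hv0 : v.val = 0 := by omega
        rw [zero_smul, hv0, hSc0]
    have e2 : ∑ u : Fin N, (if v.val + 1 = u.val then - S (c (v.val+1)) else 0)
        = - S (c (v.val+1)) := by
      rw [← Finset.sum_filter, Finset.sum_const, card_succ_filter]
      by_cases h : v.val + 2 ≤ N
      · rw [if_pos h, one_smul]
      · rw [if_neg h, zero_smul]
        have hvN : v.val + 1 = N := by have := v.isLt; omega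
        rw [hvN, hScN, neg_zero]
    rw [e1, e2]
    ring
  -- leg sums, generic
  have hablk : ∀ v : Fin N, (Finset.univ.filter fun j : Fin n => blk j = v)
      = Finset.univ.filter (fun j : Fin n => c v.val ≤ j.val ∧ j.val < c (v.val + 1)) := by
    intro v
    ext j
    simp only [Finset.mem_filter, Finset.mem_univ, true_and, hblk, Fin.ext_iff]
    exact hbiff j.val j.isLt v.val v.isLt
  
  have hsumIco : ∀ (v : Fin N) (f : Fin n → ℤ) (F : ℕ → ℤ), (∀ j : Fin n, F j.val = f (σ j)) →
      ∑ i ∈ Finset.univ.filter (fun i => a i = v), f i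
        = ∑ t ∈ Finset.Ico (c v.val) (c (v.val + 1)), F t := by
    intro v f F hF
    simp only [ha]
    rw [sum_fiber_equiv σ blk v f, hablk v]
    rw [Finset.sum_congr rfl (fun j _ => (hF j).symm)]
    exact sum_fin_val_Ico n F _ _ (hcle (v.val+1) (by omega))
  have hsumIcoN : ∀ (v : Fin N) (f : Fin n → ℕ) (F : ℕ → ℕ), (∀ j : Fin n, F j.val = f (σ j)) →
      ∑ i ∈ Finset.univ.filter (fun i => a i = v), f i
        = ∑ t ∈ Finset.Ico (c v.val) (c (v.val + 1)), F t := by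
    intro v f F hF
    simp only [ha]
    rw [sum_fiber_equiv σ blk v f, hablk v]
    rw [Finset.sum_congr rfl (fun j _ => (hF j).symm)]
    exact sum_fin_val_Ico n F _ _ (hcle (v.val+1) (by omega))
  have hcards : ∀ v : Fin N, (Finset.univ.filter fun i => a i = v).card
      = c (v.val+1) - c v.val := by
    intro v
    rw [Finset.card_eq_sum_ones]
    rw [hsumIcoN v (fun _ => 1) (fun _ => 1) (fun _ => rfl)]
    simp
  have hesums : ∀ v : Fin N,
      (∑ i ∈ Finset.univ.filter fun i => a i = v, e i) + H (c v.val) = H (c (v.val+1)) := by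
    intro v
    rw [hsumIcoN v e E' hEj]
    have h := Finset.sum_range_add_sum_Ico E' (le_of_lt (hcstrict v.val v.isLt))
    simp only [hH]
    omega
  have hxsums : ∀ v : Fin N,
      (∑ i ∈ Finset.univ.filter fun i => a i = v, x i)
        = S (c (v.val+1)) - S (c v.val) := by
    intro v
    rw [hsumIco v x Y hYj]
    have h := Finset.sum_range_add_sum_Ico Y (le_of_lt (hcstrict v.val v.isLt))
    simp only [hS]
    linarith
  have hGc : ∀ u, u ≤ N → ((c u : ℤ) - (H (c u) : ℤ))
      = (if u = 0 then 0 else if u = N then (N:ℤ)+2 else (u:ℤ)+1) := by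
    intro u hu
    by_cases h0 : u = 0
    · subst h0
      rw [if_pos rfl, hc0]
      simp [hH]
    by_cases hN' : u = N
    · subst hN'
      rw [if_neg h0, if_pos rfl, hcN]
      have h := hGn
      simp only [hG] at h
      exact h
    · rw [if_neg h0, if_neg hN']
      have h := hcval u (by omega) (by omega)
      simp only [hG] at h
      exact h
  refine ⟨⟨N, by omega, a, w, ?_, ?_, ?_, ?_, ?_⟩⟩
  · -- skew
    intro u v
    simp only [hw]
    split_ifs <;> first | omega | ring
  · -- conn
    rw [SimpleGraph.connected_iff]
    constructor
    · intro u v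
      have hreach : ∀ t (h : t < N),
          (SimpleGraph.fromRel fun u v => w u v ≠ 0).Reachable ⟨0, by omega⟩ ⟨t, h⟩ := by
        intro t
        induction t with
        | zero => intro h; exact SimpleGraph.Reachable.refl _
        | succ t ih =>
            intro h
            refine (ih (by omega)).trans (SimpleGraph.Adj.reachable ?_)
            rw [SimpleGraph.fromRel_adj]
            refine ⟨by simp [Fin.ext_iff], Or.inl ?_⟩
            rw [hwiff]
            left
            simp
      exact (hreach u.val u.isLt).symm.trans (hreach v.val v.isLt)
    · exact ⟨⟨0, by omega⟩⟩
  · -- tree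
    rw [pairs_card w]
    rw [Finset.sum_congr rfl (fun v _ => hdegcard v), Finset.sum_add_distrib]
    rw [Fin.sum_univ_eq_sum_range (fun t => if 1 ≤ t then 1 else 0) N]
    rw [Fin.sum_univ_eq_sum_range (fun t => if t + 2 ≤ N then 1 else 0) N]
    rw [sum_range_ite_one, sum_range_ite_two]
    omega
  · -- psi
    intro v
    have hcc : c v.val < c (v.val + 1) := hcstrict v.val v.isLt
    have h1 := hGc v.val (by omega)
    have h2 := hGc (v.val+1) (by omega)
    have hHmono : H (c v.val) ≤ H (c (v.val+1)) := by
      simp only [hH]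
      exact Finset.sum_le_sum_of_subset (Finset.range_subset_range.mpr (by omega))
    have he1 := hesums v
    have hvlt := v.isLt
    rw [hdegcard v, hcards v]
    rcases Nat.eq_zero_or_pos v.val with hv0 | hv0
    · rw [if_pos hv0] at h1
      rw [if_neg (by omega), if_neg (by omega)] at h2
      rw [if_neg (by omega), if_pos (by omega)]
      omega
    · rcases Nat.lt_or_ge (v.val+1) N with hvN | hvN
      · rw [if_neg (by omega), if_neg (by omega)] at h1
        rw [if_neg (by omega), if_neg (by omega)] at h2
        rw [if_pos (by omega), if_pos (by omega)]
        omega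
      · rw [if_neg (by omega), if_neg (by omega)] at h1
        rw [if_neg (by omega), if_pos (by omega)] at h2
        rw [if_pos (by omega), if_neg (by omega)]
        omega
  · -- balance
    intro v
    rw [zero_mul, hxsums v, hwsum v]
    ring

/-- Let `n ≥ 3`, `x : Fin n → ℤ` with `∑ x i = 0`, and
`e : Fin n → ℕ` with `∑ e i ≤ n - 3`. Then a genus-zero leaky cover datum
for leaking `k = 0`, degree `x`, and Psi-conditions `e` exists if and only
if it is not the case that `x = 0` and `∑ e i < n - 3`. -/
theorem nonleaky_cover_existence (n : ℕ) (hn : 3 ≤ n)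
    (x : Fin n → ℤ) (hsum : ∑ i, x i = 0)
    (e : Fin n → ℕ) (he : (∑ i, (e i : ℤ)) ≤ (n : ℤ) - 3) :
    Nonempty (LeakyCoverDatum 0 x e) ↔
      ¬ ((∀ i, x i = 0) ∧ (∑ i, (e i : ℤ)) < (n : ℤ) - 3) := by
  have hcast : (∑ i, (e i : ℤ)) = ((∑ i, e i : ℕ) : ℤ) := by push_cast; rfl
  rcases eq_or_lt_of_le he with heq | hlt
  · constructor
    · intro _
      rintro ⟨_, hlt'⟩
      rw [heq] at hlt'
      exact lt_irrefl _ hlt'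
    · intro _
      refine lemA n x e hsum ?_
      rw [hcast] at heq
      omega
  · have hmn : (∑ i, e i) + 3 < n := by
      rw [hcast] at hlt
      omega
    constructor
    · rintro ⟨D⟩ ⟨hx0, _⟩
      exact lemB D hx0 hmn
    · intro hnot
      have hne : ∃ i, x i ≠ 0 := by
        by_contra hall
        push_neg at hall
        exact hnot ⟨hall, hlt⟩
      exact lemC n x e hsum hne hmn
end
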